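/- arXiv:1603.06405 — 5 statements merged into one kernel-verified Lean document; each statement's English description precedes it below -/
import Mathlib

section
/- Let k ≥ 1 and m ≥ 2k+2, and let W1 ≠ W2 be k-dimensional subspaces of ℝ^m. Then the following are equivalent: (i) for every k-dimensional subspace W of ℝ^m with W ∉ {W1, W2} there exists a Grassmannian symmetry g at W such that {g(W1), g(W2)} = {W1, W2}; (ii) dim(W1 ∩ W2) = k − 1. -/
open Submodule Module

section Helpers

variable {V : Type*} [AddCommGroup V] [Module ℝ V]

theorem smul_coeff_zero {p : Submodule ℝ V} {t : ℝ} {v : V}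
    (h : t • v ∈ p) (hv : v ∉ p) : t = 0 := by
  by_contra ht
  exact hv ((p.smul_mem_iff ht).mp h)

theorem inner_compl (p q : Submodule ℝ V) (hpq : p ≤ q) :
    ∃ r : Submodule ℝ V, r ≤ q ∧ p ⊓ r = ⊥ ∧ p ⊔ r = q := by
  obtain ⟨r', hr'⟩ := Submodule.exists_isCompl (Submodule.comap q.subtype p)
  have hinj : Function.Injective q.subtype := Subtype.coe_injective
  have hmap : Submodule.map q.subtype (Submodule.comap q.subtype p) = p := by
    rw [Submodule.map_comap_subtype, inf_eq_right.mpr hpq]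
  refine ⟨r'.map q.subtype, Submodule.map_subtype_le q r', ?_, ?_⟩
  · rw [← hmap, ← Submodule.map_inf _ hinj, hr'.inf_eq_bot, Submodule.map_bot]
  · rw [← hmap, ← Submodule.map_sup, hr'.sup_eq_top, Submodule.map_subtype_top]

noncomputable def reflFun (W C : Submodule ℝ V) (h : IsCompl W C) : V →ₗ[ℝ] V :=
  (2 : ℝ) • (W.subtype ∘ₗ W.projectionOnto C h) - LinearMap.id

theorem refl_fun_invol (W C : Submodule ℝ V) (h : IsCompl W C) :
    Function.Involutive ⇑(reflFun W C h) := by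
  intro x
  set P := W.projectionOnto C h with hP
  simp only [reflFun, LinearMap.sub_apply, LinearMap.smul_apply, LinearMap.comp_apply,
    Submodule.coe_subtype, LinearMap.id_apply, map_sub, map_smul]
  rw [Submodule.projectionOnto_apply_left h (P x)]
  push_cast
  module

noncomputable def reflMap (W C : Submodule ℝ V) (h : IsCompl W C) : V ≃ₗ[ℝ] V :=
  LinearEquiv.ofInvolutive (reflFun W C h) (refl_fun_invol W C h)

theorem reflMap_apply (W C : Submodule ℝ V) (h : IsCompl W C) (x : V) :
    reflMap W C h x = (2 : ℝ) • (W.projectionOnto C h x : V) - x := by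
  simp only [reflMap, LinearEquiv.coe_ofInvolutive, reflFun, LinearMap.sub_apply,
    LinearMap.smul_apply, LinearMap.comp_apply, Submodule.coe_subtype, LinearMap.id_apply]

theorem reflMap_invol {W C : Submodule ℝ V} (h : IsCompl W C) (x : V) :
    reflMap W C h (reflMap W C h x) = x := by
  simp only [reflMap, LinearEquiv.coe_ofInvolutive]
  exact refl_fun_invol W C h x

theorem reflMap_mem_left {W C : Submodule ℝ V} (h : IsCompl W C) {x : V} (hx : x ∈ W) :
    reflMap W C h x = x := by
  rw [reflMap_apply]
  have : W.projectionOnto C h x = ⟨x, hx⟩ :=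
    Submodule.projectionOnto_apply_left h ⟨x, hx⟩
  rw [this]
  module

theorem reflMap_mem_right {W C : Submodule ℝ V} (h : IsCompl W C) {x : V} (hx : x ∈ C) :
    reflMap W C h x = -x := by
  rw [reflMap_apply, Submodule.projectionOnto_apply_of_mem_right h hx]
  simp

theorem reflMap_add_mem {W C : Submodule ℝ V} (h : IsCompl W C) (x : V) :
    reflMap W C h x + x ∈ W := by
  rw [reflMap_apply, sub_add_cancel]
  exact W.smul_mem _ (W.projectionOnto C h x).2

theorem exists_isCompl_ge (W D : Submodule ℝ V) (hDW : D ⊓ W = ⊥) :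
    ∃ C : Submodule ℝ V, D ≤ C ∧ IsCompl W C := by
  obtain ⟨F, hF⟩ := Submodule.exists_isCompl (W ⊔ D)
  refine ⟨D ⊔ F, le_sup_left, ?_, ?_⟩
  · rw [disjoint_iff, eq_bot_iff]
    intro x hx
    obtain ⟨hxW, hxDF⟩ := Submodule.mem_inf.mp hx
    obtain ⟨d, hd, f, hf, rfl⟩ := Submodule.mem_sup.mp hxDF
    have hfWD : f ∈ (W ⊔ D) ⊓ F := by
      refine Submodule.mem_inf.mpr ⟨?_, hf⟩
      have : f = (d + f) - d := by abel
      rw [this]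
      exact Submodule.sub_mem _ (Submodule.mem_sup_left hxW) (Submodule.mem_sup_right hd)
    rw [hF.inf_eq_bot] at hfWD
    rw [hfWD] at hxW ⊢
    rw [add_zero] at hxW
    have : d ∈ D ⊓ W := Submodule.mem_inf.mpr ⟨hd, hxW⟩
    rw [hDW] at this
    simpa using this
  · rw [codisjoint_iff, ← sup_assoc, hF.sup_eq_top]

theorem map_inv_pair (g : V ≃ₗ[ℝ] V) (hg : ∀ x, g (g x) = x)
    {p q : Submodule ℝ V} (h1 : ∀ x ∈ p, g x ∈ q) (h2 : ∀ x ∈ q, g x ∈ p) :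
    p.map g.toLinearMap = q := by
  apply le_antisymm
  · rintro _ ⟨x, hx, rfl⟩
    exact h1 x hx
  · intro x hx
    exact ⟨g x, h2 x hx, hg x⟩

end Helpers

/-- A *Grassmannian symmetry* at a `k`-dimensional subspace `W ⊆ ℝ^m`:
an invertible linear map `g` such that for some `λ ≠ 0`, `g w = λ • w` for all `w ∈ W`
and `g x + λ • x ∈ W` for all `x`. -/
def GrSym (m : ℕ) (W : Submodule ℝ (Fin m → ℝ))
    (g : (Fin m → ℝ) ≃ₗ[ℝ] (Fin m → ℝ)) : Prop :=
  ∃ l : ℝ, l ≠ 0 ∧ (∀ w ∈ W, g w = l • w) ∧ ∀ x : Fin m → ℝ, g x + l • x ∈ W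

section Machinery

variable {m : ℕ}

theorem reflMap_grsym (W C : Submodule ℝ (Fin m → ℝ)) (h : IsCompl W C) :
    GrSym m W (reflMap W C h) :=
  ⟨1, one_ne_zero, fun w hw => by rw [reflMap_mem_left h hw, one_smul],
    fun x => by rw [one_smul]; exact reflMap_add_mem h x⟩

theorem exists_fix (W W1 W2 D : Submodule ℝ (Fin m → ℝ)) (hDW : D ⊓ W = ⊥)
    (h1 : W1 ≤ (W1 ⊓ W) ⊔ D) (h2 : W2 ≤ (W2 ⊓ W) ⊔ D) :
    ∃ g : (Fin m → ℝ) ≃ₗ[ℝ] (Fin m → ℝ), GrSym m W g ∧ W1.map g.toLinearMap = W1 ∧ W2.map g.toLinearMap = W2 := by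
  obtain ⟨C, hDC, hC⟩ := exists_isCompl_ge W D hDW
  have main : ∀ (Wi : Submodule ℝ (Fin m → ℝ)), Wi ≤ (Wi ⊓ W) ⊔ D →
      ∀ x ∈ Wi, reflMap W C hC x ∈ Wi := by
    intro Wi hle x hx
    obtain ⟨a, ha, d, hd, rfl⟩ := Submodule.mem_sup.mp (hle hx)
    rw [map_add, reflMap_mem_left hC ha.2, reflMap_mem_right hC (hDC hd)]
    have hd1 : d ∈ Wi := by
      have h' : d = (a + d) - a := by abel
      rw [h']
      exact Submodule.sub_mem _ hx ha.1
    rw [← sub_eq_add_neg]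
    exact Submodule.sub_mem _ ha.1 hd1
  exact ⟨reflMap W C hC, reflMap_grsym W C hC,
    map_inv_pair _ (reflMap_invol hC) (main W1 h1) (main W1 h1),
    map_inv_pair _ (reflMap_invol hC) (main W2 h2) (main W2 h2)⟩

end Machinery

set_option maxHeartbeats 2000000 in
theorem stmt0 (k m : ℕ) (hk : 1 ≤ k) (hm : 2 * k + 2 ≤ m)
    (W1 W2 : Submodule ℝ (Fin m → ℝ))
    (hW1 : Module.finrank ℝ W1 = k) (hW2 : Module.finrank ℝ W2 = k)
    (hne : W1 ≠ W2) :
    (∀ W : Submodule ℝ (Fin m → ℝ), Module.finrank ℝ W = k → W ≠ W1 → W ≠ W2 →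
        ∃ g : (Fin m → ℝ) ≃ₗ[ℝ] (Fin m → ℝ), GrSym m W g ∧
          ((W1.map g.toLinearMap = W1 ∧ W2.map g.toLinearMap = W2) ∨ (W1.map g.toLinearMap = W2 ∧ W2.map g.toLinearMap = W1)))
      ↔ Module.finrank ℝ ↥(W1 ⊓ W2) = k - 1 := by
  constructor
  · -- forward direction
    intro hyp
    by_contra hd
    set U := W1 ⊓ W2 with hUdef
    have hUlt : U < W1 := by
      refine lt_of_le_of_ne inf_le_left (fun h => hne ?_)
      have hle : W1 ≤ W2 := by rw [← h]; exact inf_le_right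
      exact Submodule.eq_of_le_of_finrank_le hle (by rw [hW1, hW2])
    have hdlt : finrank ℝ U < k := hW1 ▸ Submodule.finrank_lt_finrank_of_lt hUlt
    obtain ⟨X, hXle, hXinf, hXsup⟩ := inner_compl U W1 inf_le_left
    obtain ⟨Y, hYle, hYinf, hYsup⟩ := inner_compl U W2 inf_le_right
    have hXrank : finrank ℝ U + finrank ℝ X = k := by
      have := Submodule.finrank_sup_add_finrank_inf_eq U X
      rw [hXsup, hXinf, hW1, finrank_bot] at this
      omega
    have hYrank : finrank ℝ U + finrank ℝ Y = k := by
      have := Submodule.finrank_sup_add_finrank_inf_eq U Y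
      rw [hYsup, hYinf, hW2, finrank_bot] at this
      omega
    have hXbig : 2 ≤ finrank ℝ X := by omega
    have hYbig : 2 ≤ finrank ℝ Y := by omega
    obtain ⟨x0, hx0X, hx0ne⟩ := Submodule.exists_mem_ne_zero_of_ne_bot
      (fun h => by rw [h, finrank_bot] at hXbig; omega : X ≠ ⊥)
    obtain ⟨y0, hy0Y, hy0ne⟩ := Submodule.exists_mem_ne_zero_of_ne_bot
      (fun h => by rw [h, finrank_bot] at hYbig; omega : Y ≠ ⊥)
    obtain ⟨X', hX'le, hX'inf, hX'sup⟩ := inner_compl (ℝ ∙ x0) X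
      ((Submodule.span_singleton_le_iff_mem x0 X).mpr hx0X)
    have hX'rank : 1 + finrank ℝ X' = finrank ℝ X := by
      have := Submodule.finrank_sup_add_finrank_inf_eq (ℝ ∙ x0) X'
      rw [hX'sup, hX'inf, finrank_bot, finrank_span_singleton hx0ne] at this
      omega
    obtain ⟨x1, hx1X', hx1ne⟩ := Submodule.exists_mem_ne_zero_of_ne_bot
      (fun h => by rw [h, finrank_bot] at hX'rank; omega : X' ≠ ⊥)
    set P := U ⊔ X' with hPdef
    set W := P ⊔ (ℝ ∙ (x0 + y0)) with hWdef
    have hx0X' : x0 ∉ X' := by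
      intro h
      have hmem : x0 ∈ (ℝ ∙ x0) ⊓ X' := ⟨Submodule.mem_span_singleton_self x0, h⟩
      rw [hX'inf] at hmem
      exact hx0ne hmem
    have hy0W1 : y0 ∉ W1 := by
      intro h
      have hU : y0 ∈ U := Submodule.mem_inf.mpr ⟨h, hYle hy0Y⟩
      have hmem : y0 ∈ U ⊓ Y := ⟨hU, hy0Y⟩
      rw [hYinf] at hmem
      exact hy0ne hmem
    have hPle1 : P ≤ W1 := sup_le inf_le_left (le_trans hX'le hXle)
    have hxyW1 : x0 + y0 ∉ W1 := by
      intro h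
      exact hy0W1 (by simpa using Submodule.sub_mem _ h (hXle hx0X))
    have hxyP : x0 + y0 ∉ P := fun h => hxyW1 (hPle1 h)
    have hPrank : finrank ℝ P + 1 = k := by
      have hinf : U ⊓ X' = ⊥ := by
        rw [eq_bot_iff, ← hXinf]
        exact inf_le_inf_left U hX'le
      have := Submodule.finrank_sup_add_finrank_inf_eq U X'
      rw [hinf, finrank_bot, ← hPdef] at this
      omega
    have hWrank : finrank ℝ W = k := by
      have hinf : P ⊓ (ℝ ∙ (x0 + y0)) = ⊥ := by
        rw [eq_bot_iff]
        intro x hx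
        obtain ⟨t, rfl⟩ := Submodule.mem_span_singleton.mp hx.2
        have ht : t = 0 := smul_coeff_zero hx.1 hxyP
        simp [ht]
      have hxyne : x0 + y0 ≠ 0 := fun h => hxyP (h ▸ Submodule.zero_mem P)
      have := Submodule.finrank_sup_add_finrank_inf_eq P (ℝ ∙ (x0 + y0))
      rw [hinf, finrank_bot, finrank_span_singleton hxyne, ← hWdef] at this
      omega
    have hxyW : x0 + y0 ∈ W := Submodule.mem_sup_right (Submodule.mem_span_singleton_self _)
    have hWne1 : W ≠ W1 := fun h => hxyW1 (h ▸ hxyW)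
    have hx1W : x1 ∈ W := Submodule.mem_sup_left (Submodule.mem_sup_right hx1X')
    have hx1W1 : x1 ∈ W1 := hXle (hX'le hx1X')
    have hx1W2 : x1 ∉ W2 := by
      intro h
      have hmem : x1 ∈ U ⊓ X := ⟨Submodule.mem_inf.mpr ⟨hx1W1, h⟩, hX'le hx1X'⟩
      rw [hXinf] at hmem
      exact hx1ne hmem
    have hWne2 : W ≠ W2 := fun h => hx1W2 (h ▸ hx1W)
    obtain ⟨g, ⟨l, hl0, hgW, hgadd⟩, hcase⟩ := hyp W hWrank hWne1 hWne2
    have hmem1 : ∀ x ∈ W1, x ∈ W → x ∈ P := by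
      intro x hx1' hxW
      obtain ⟨a, ha, r, hr, rfl⟩ := Submodule.mem_sup.mp hxW
      obtain ⟨t, rfl⟩ := Submodule.mem_span_singleton.mp hr
      have hty0 : t • y0 ∈ W1 := by
        have h1 : t • (x0 + y0) ∈ W1 := by
          have h' : t • (x0 + y0) = (a + t • (x0 + y0)) - a := by abel
          rw [h']
          exact Submodule.sub_mem _ hx1' (hPle1 ha)
        have h' : t • y0 = t • (x0 + y0) - t • x0 := by
          rw [smul_add]; abel
        rw [h']
        exact Submodule.sub_mem _ h1 (Submodule.smul_mem _ _ (hXle hx0X))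
      have ht : t = 0 := smul_coeff_zero hty0 hy0W1
      rw [ht, zero_smul, add_zero]
      exact ha
    have hmem2 : ∀ x ∈ W2, x ∈ W → x ∈ P := by
      intro x hx2' hxW
      obtain ⟨a, ha, r, hr, rfl⟩ := Submodule.mem_sup.mp hxW
      obtain ⟨t, rfl⟩ := Submodule.mem_span_singleton.mp hr
      obtain ⟨u, hu, x', hx', hau⟩ := Submodule.mem_sup.mp ha
      have hkey : x' + t • x0 ∈ X ⊓ W2 := by
        constructor
        · exact Submodule.add_mem _ (hX'le hx') (Submodule.smul_mem _ _ hx0X)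
        · have h' : x' + t • x0 = ((u + x') + t • (x0 + y0)) - u - t • y0 := by
            rw [smul_add]; abel
          rw [h', hau]
          exact Submodule.sub_mem _ (Submodule.sub_mem _ hx2' ((Submodule.mem_inf.mp hu).2))
            (Submodule.smul_mem _ _ (hYle hy0Y))
      have hXW2bot : X ⊓ W2 = ⊥ := by
        rw [eq_bot_iff, ← hXinf]
        intro z hz
        exact ⟨Submodule.mem_inf.mpr ⟨hXle hz.1, hz.2⟩, hz.1⟩
      rw [hXW2bot] at hkey
      have hx'eq : t • x0 = -x' :=
        eq_neg_of_add_eq_zero_right (by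
          have h0 := (Submodule.mem_bot ℝ).mp hkey
          linear_combination (norm := abel) h0)
      have ht : t = 0 :=
        smul_coeff_zero (p := X') (by rw [hx'eq]; exact X'.neg_mem hx') hx0X'
      rw [ht, zero_smul, add_zero]
      exact ha
    rcases hcase with ⟨hg1, hg2⟩ | ⟨hg12, hg21⟩
    · have hgx0 : g x0 ∈ W1 := hg1 ▸ Submodule.mem_map_of_mem (hXle hx0X)
      have hgy0 : g y0 ∈ W2 := hg2 ▸ Submodule.mem_map_of_mem (hYle hy0Y)
      have hh1 : g x0 + l • x0 ∈ P :=
        hmem1 _ (Submodule.add_mem _ hgx0 (Submodule.smul_mem _ _ (hXle hx0X))) (hgadd x0)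
      have hh2 : g y0 + l • y0 ∈ P :=
        hmem2 _ (Submodule.add_mem _ hgy0 (Submodule.smul_mem _ _ (hYle hy0Y))) (hgadd y0)
      have hsum : g x0 + g y0 = l • x0 + l • y0 := by
        rw [← map_add, hgW _ hxyW, smul_add]
      have heq : (g x0 + l • x0) + (g y0 + l • y0) = (2 * l) • (x0 + y0) := by
        calc (g x0 + l • x0) + (g y0 + l • y0)
            = (g x0 + g y0) + (l • x0 + l • y0) := by abel
          _ = (l • x0 + l • y0) + (l • x0 + l • y0) := by rw [hsum]
          _ = (2 * l) • (x0 + y0) := by module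
      have hfinal : (2 * l) • (x0 + y0) ∈ P := heq ▸ Submodule.add_mem _ hh1 hh2
      have h2l : (2 : ℝ) * l ≠ 0 := by simp [hl0]
      exact hxyP ((P.smul_mem_iff h2l).mp hfinal)
    · have hswap : g x1 ∈ W2 := hg12 ▸ Submodule.mem_map_of_mem hx1W1
      rw [hgW _ hx1W] at hswap
      exact hx1W2 ((W2.smul_mem_iff hl0).mp hswap)
  · -- backward direction
    intro hd W hWrank hne1 hne2
    set U := W1 ⊓ W2 with hUdef
    have hU1 : U ≤ W1 := inf_le_left
    have hU2 : U ≤ W2 := inf_le_right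
    have key : ∀ (Wi : Submodule ℝ (Fin m → ℝ)), finrank ℝ Wi = k → U ≤ Wi →
        ∀ v ∈ Wi, v ∉ U → U ⊔ (ℝ ∙ v) = Wi := by
      intro Wi hr hUi v hv hvU
      have hle : U ⊔ (ℝ ∙ v) ≤ Wi :=
        sup_le hUi ((Submodule.span_singleton_le_iff_mem v Wi).mpr hv)
      have hlt : U < U ⊔ (ℝ ∙ v) := by
        refine lt_of_le_of_ne le_sup_left (fun hEq => hvU ?_)
        rw [hEq]
        exact Submodule.mem_sup_right (Submodule.mem_span_singleton_self v)
      have h1 := Submodule.finrank_lt_finrank_of_lt hlt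
      rw [hd] at h1
      exact Submodule.eq_of_le_of_finrank_le hle (by rw [hr]; omega)
    have hUlt1 : U < W1 := by
      refine lt_of_le_of_ne hU1 (fun h => ?_)
      rw [h, hW1] at hd
      omega
    have hUlt2 : U < W2 := by
      refine lt_of_le_of_ne hU2 (fun h => ?_)
      rw [h, hW2] at hd
      omega
    obtain ⟨u1, hu1, hu1U⟩ := SetLike.exists_of_lt hUlt1
    obtain ⟨u2, hu2, hu2U⟩ := SetLike.exists_of_lt hUlt2
    have hsp1 : U ⊔ (ℝ ∙ u1) = W1 := key W1 hW1 hU1 u1 hu1 hu1U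
    have hsp2 : U ⊔ (ℝ ∙ u2) = W2 := key W2 hW2 hU2 u2 hu2 hu2U
    set B := U ⊓ W with hBdef
    obtain ⟨E, hEU, hBE, hBEsup⟩ := inner_compl B U inf_le_left
    have hEzero : ∀ x ∈ E, x ∈ W → x = 0 := by
      intro x hxE hxW
      have hmem : x ∈ B ⊓ E := ⟨⟨hEU hxE, hxW⟩, hxE⟩
      rw [hBE] at hmem
      exact hmem
    have hBW1 : B ≤ W1 ⊓ W := inf_le_inf_right W hU1
    have hBW2 : B ≤ W2 ⊓ W := inf_le_inf_right W hU2
    have bigcase : ∀ (Wi : Submodule ℝ (Fin m → ℝ)), finrank ℝ Wi = k → U ≤ Wi →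
        ¬(Wi ⊓ W ≤ U) → Wi ≤ (Wi ⊓ W) ⊔ E := by
      intro Wi hr hUi hbig
      obtain ⟨x1, hx1, hx1U⟩ := SetLike.not_le_iff_exists.mp hbig
      conv_lhs => rw [← key Wi hr hUi x1 hx1.1 hx1U]
      apply sup_le
      · rw [← hBEsup]
        apply sup_le
        · intro x hx
          rw [hBdef] at hx
          exact Submodule.mem_sup_left
            (Submodule.mem_inf.mpr ⟨hUi (Submodule.mem_inf.mp hx).1, (Submodule.mem_inf.mp hx).2⟩)
        · exact le_sup_right
      · intro x hx
        exact Submodule.mem_sup_left ((Submodule.span_singleton_le_iff_mem x1 _).mpr hx1 hx)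

    by_cases hA1 : W1 ⊓ W ≤ U
    · by_cases hA2 : W2 ⊓ W ≤ U
      · by_cases hV : W ⊓ (W1 ⊔ W2) ≤ U
        · -- case C1 : fix with D = (E ⊔ span u1) ⊔ span u2
          have hDW : ((E ⊔ (ℝ ∙ u1)) ⊔ (ℝ ∙ u2)) ⊓ W = ⊥ := by
            rw [eq_bot_iff]
            rintro x ⟨hxD, hxW⟩
            obtain ⟨y, hy, r2, hr2, rfl⟩ := Submodule.mem_sup.mp hxD
            obtain ⟨e, he, r1, hr1, rfl⟩ := Submodule.mem_sup.mp hy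
            obtain ⟨s, rfl⟩ := Submodule.mem_span_singleton.mp hr1
            obtain ⟨t, rfl⟩ := Submodule.mem_span_singleton.mp hr2
            have hxU : e + s • u1 + t • u2 ∈ U := by
              refine hV ⟨hxW, ?_⟩
              exact Submodule.add_mem _
                (Submodule.mem_sup_left (Submodule.add_mem _ (hU1 (hEU he))
                  (Submodule.smul_mem _ _ hu1)))
                (Submodule.mem_sup_right (Submodule.smul_mem _ _ hu2))
            have hsu1 : s • u1 ∈ U := by
              have h2 : s • u1 ∈ W2 := by
                have h' : s • u1 = (e + s • u1 + t • u2) - e - t • u2 := by abel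
                rw [h']
                exact Submodule.sub_mem _
                  (Submodule.sub_mem _ (hU2 hxU) (hU2 (hEU he)))
                  (Submodule.smul_mem _ _ hu2)
              exact ⟨Submodule.smul_mem _ _ hu1, h2⟩
            have hs : s = 0 := smul_coeff_zero hsu1 hu1U
            rw [hs, zero_smul, add_zero] at hxU hxW ⊢
            have htu2 : t • u2 ∈ U := by
              have h' : t • u2 = (e + t • u2) - e := by abel
              rw [h']
              exact Submodule.sub_mem _ hxU ⟨hU1 (hEU he), hU2 (hEU he)⟩
            have ht : t = 0 := smul_coeff_zero htu2 hu2U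
            rw [ht, zero_smul, add_zero] at hxW ⊢
            simp [hEzero e he hxW]
          obtain ⟨g, hsym, h1', h2'⟩ := exists_fix W W1 W2 _ hDW
            (by conv_lhs => rw [← hsp1]
                apply sup_le
                · rw [← hBEsup]
                  exact sup_le (le_trans hBW1 le_sup_left)
                    (le_trans (le_trans le_sup_left le_sup_left) le_sup_right)
                · exact le_trans (le_trans le_sup_right le_sup_left) le_sup_right)
            (by conv_lhs => rw [← hsp2]
                apply sup_le
                · rw [← hBEsup]
                  exact sup_le (le_trans hBW2 le_sup_left)
                    (le_trans (le_trans le_sup_left le_sup_left) le_sup_right)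
                · exact le_trans le_sup_right le_sup_right)
          exact ⟨g, hsym, Or.inl ⟨h1', h2'⟩⟩
        · -- case C2 : swap
          obtain ⟨w0, hw0, hw0U⟩ := SetLike.not_le_iff_exists.mp hV
          have hw0W : w0 ∈ W := hw0.1
          have hsupU : W1 ⊔ W2 = (U ⊔ (ℝ ∙ u1)) ⊔ (ℝ ∙ u2) := by
            rw [hsp1, ← hsp2, ← sup_assoc, sup_eq_left.mpr hU1]
          have hw0mem : w0 ∈ (U ⊔ (ℝ ∙ u1)) ⊔ (ℝ ∙ u2) := hsupU ▸ hw0.2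
          obtain ⟨y, hy, r2, hr2, hw0eq0⟩ := Submodule.mem_sup.mp hw0mem
          obtain ⟨p, hpU, r1, hr1, hyeq⟩ := Submodule.mem_sup.mp hy
          obtain ⟨s, rfl⟩ := Submodule.mem_span_singleton.mp hr1
          obtain ⟨t, rfl⟩ := Submodule.mem_span_singleton.mp hr2
          have hw0eq : w0 = p + s • u1 + t • u2 := by
            rw [← hw0eq0, ← hyeq]
          have hs : s ≠ 0 := by
            intro h
            apply hw0U
            rw [h, zero_smul, add_zero] at hw0eq
            have hw02 : w0 ∈ W2 := by
              rw [hw0eq]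
              exact Submodule.add_mem _ (hU2 hpU) (Submodule.smul_mem _ _ hu2)
            exact hA2 ⟨hw02, hw0W⟩
          have ht : t ≠ 0 := by
            intro h
            apply hw0U
            rw [h, zero_smul] at hw0eq
            have hw01 : w0 ∈ W1 := by
              rw [hw0eq, add_zero]
              exact Submodule.add_mem _ (hU1 hpU) (Submodule.smul_mem _ _ hu1)
            exact hA1 ⟨hw01, hw0W⟩
          set v1 := s • u1 with hv1def
          set v2 := t • u2 with hv2def
          have hv1W1 : v1 ∈ W1 := Submodule.smul_mem _ _ hu1
          have hv2W2 : v2 ∈ W2 := Submodule.smul_mem _ _ hu2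
          have hv1U : v1 ∉ U := fun h => hu1U ((U.smul_mem_iff hs).mp h)
          have hv2U : v2 ∉ U := fun h => hu2U ((U.smul_mem_iff ht).mp h)
          have hsp1' : U ⊔ (ℝ ∙ v1) = W1 := key W1 hW1 hU1 v1 hv1W1 hv1U
          have hsp2' : U ⊔ (ℝ ∙ v2) = W2 := key W2 hW2 hU2 v2 hv2W2 hv2U
          set z := v1 - v2 - p with hzdef
          have hDW : (E ⊔ (ℝ ∙ z)) ⊓ W = ⊥ := by
            rw [eq_bot_iff]
            rintro x ⟨hxD, hxW⟩
            obtain ⟨e, he, r, hr, rfl⟩ := Submodule.mem_sup.mp hxD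
            obtain ⟨c, rfl⟩ := Submodule.mem_span_singleton.mp hr
            have hkeymem : e + (2 * c) • v1 ∈ W1 ⊓ W := by
              constructor
              · exact Submodule.add_mem _ (hU1 (hEU he)) (Submodule.smul_mem _ _ hv1W1)
              · have h' : e + (2 * c) • v1 = (e + c • z) + c • w0 := by
                  rw [hzdef, hw0eq]; module
                rw [h']
                exact Submodule.add_mem _ hxW (Submodule.smul_mem _ _ hw0W)
            have hc2 : (2 * c : ℝ) = 0 := by
              have h1 := hA1 hkeymem
              have h2 : (2 * c) • v1 ∈ U := by
                have h' : (2 * c) • v1 = (e + (2 * c) • v1) - e := by abel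
                rw [h']
                exact Submodule.sub_mem _ h1 (hEU he)
              exact smul_coeff_zero h2 hv1U
            have hc : c = 0 := by
              norm_num at hc2
              exact hc2
            rw [hc, zero_smul, add_zero] at hxW ⊢
            simp [hEzero e he hxW]
          obtain ⟨C, hDC, hC⟩ := exists_isCompl_ge W _ hDW
          set g := reflMap W C hC with hgdef
          have hzC : z ∈ C := hDC (Submodule.mem_sup_right (Submodule.mem_span_singleton_self z))
          have hEC : E ≤ C := le_trans le_sup_left hDC
          have hBWle : B ≤ W := inf_le_right
          have hgU : ∀ x ∈ U, g x ∈ U := by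
            intro x hx
            rw [← hBEsup] at hx
            obtain ⟨b, hb, e, he, rfl⟩ := Submodule.mem_sup.mp hx
            rw [map_add, reflMap_mem_left hC (hBWle hb), reflMap_mem_right hC (hEC he)]
            exact Submodule.add_mem _ hb.1 (U.neg_mem (hEU he))
          have hgw0 : g w0 = w0 := reflMap_mem_left hC hw0W
          have hgz : g z = -z := reflMap_mem_right hC hzC
          have hgv1 : g v1 = v2 + p := by
            have h3 : (2 : ℝ) • (g v1) = (2 : ℝ) • (v2 + p) := by
              have h2 : (2 : ℝ) • v1 = w0 + z := by
                rw [hw0eq, hzdef]; module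
              rw [← map_smul, h2, map_add, hgw0, hgz, hw0eq, hzdef]; module
            exact smul_right_injective _ (by norm_num : (2 : ℝ) ≠ 0) h3
          have hgp : g p ∈ U := hgU p hpU
          have hgv2 : g v2 = v1 - g p := by
            have h4 : v2 = v1 - z - p := by rw [hzdef]; abel
            rw [h4, map_sub, map_sub, hgv1, hgz, hzdef]
            abel
          have hmap1 : ∀ x ∈ W1, g x ∈ W2 := by
            intro x hx
            rw [← hsp1'] at hx
            obtain ⟨uu, huu, r, hr, rfl⟩ := Submodule.mem_sup.mp hx
            obtain ⟨c, rfl⟩ := Submodule.mem_span_singleton.mp hr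
            rw [map_add, map_smul, hgv1]
            exact Submodule.add_mem _ (hU2 (hgU uu huu))
              (Submodule.smul_mem _ _ (Submodule.add_mem _ hv2W2 (hU2 hpU)))
          have hmap2 : ∀ x ∈ W2, g x ∈ W1 := by
            intro x hx
            rw [← hsp2'] at hx
            obtain ⟨uu, huu, r, hr, rfl⟩ := Submodule.mem_sup.mp hx
            obtain ⟨c, rfl⟩ := Submodule.mem_span_singleton.mp hr
            rw [map_add, map_smul, hgv2]
            exact Submodule.add_mem _ (hU1 (hgU uu huu))
              (Submodule.smul_mem _ _ (Submodule.sub_mem _ hv1W1 (hU1 hgp)))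
          exact ⟨g, reflMap_grsym W C hC,
            Or.inr ⟨map_inv_pair _ (reflMap_invol hC) hmap1 hmap2,
              map_inv_pair _ (reflMap_invol hC) hmap2 hmap1⟩⟩
      · -- case hA1, ¬hA2 : fix with D = E ⊔ span u1
        have hDW : (E ⊔ (ℝ ∙ u1)) ⊓ W = ⊥ := by
          rw [eq_bot_iff]
          rintro x ⟨hxD, hxW⟩
          obtain ⟨e, he, r, hr, rfl⟩ := Submodule.mem_sup.mp hxD
          obtain ⟨s, rfl⟩ := Submodule.mem_span_singleton.mp hr
          have hxU : e + s • u1 ∈ U := hA1 ⟨Submodule.add_mem _ (hU1 (hEU he))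
            (Submodule.smul_mem _ _ hu1), hxW⟩
          have hsu : s • u1 ∈ U := by
            have h' : s • u1 = (e + s • u1) - e := by abel
            rw [h']
            exact Submodule.sub_mem _ hxU (hEU he)
          have hs : s = 0 := smul_coeff_zero hsu hu1U
          rw [hs, zero_smul, add_zero] at hxW ⊢
          simp [hEzero e he hxW]
        obtain ⟨g, hsym, h1', h2'⟩ := exists_fix W W1 W2 _ hDW
          (by conv_lhs => rw [← hsp1]
              apply sup_le
              · rw [← hBEsup]
                exact sup_le (le_trans hBW1 le_sup_left) (le_trans le_sup_left le_sup_right)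
              · exact le_trans le_sup_right le_sup_right)
          (le_trans (bigcase W2 hW2 hU2 hA2)
            (sup_le le_sup_left (le_trans le_sup_left le_sup_right)))
        exact ⟨g, hsym, Or.inl ⟨h1', h2'⟩⟩
    · by_cases hA2 : W2 ⊓ W ≤ U
      · -- case ¬hA1, hA2 : fix with D = E ⊔ span u2
        have hDW : (E ⊔ (ℝ ∙ u2)) ⊓ W = ⊥ := by
          rw [eq_bot_iff]
          rintro x ⟨hxD, hxW⟩
          obtain ⟨e, he, r, hr, rfl⟩ := Submodule.mem_sup.mp hxD
          obtain ⟨s, rfl⟩ := Submodule.mem_span_singleton.mp hr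
          have hxU : e + s • u2 ∈ U := hA2 ⟨Submodule.add_mem _ (hU2 (hEU he))
            (Submodule.smul_mem _ _ hu2), hxW⟩
          have hsu : s • u2 ∈ U := by
            have h' : s • u2 = (e + s • u2) - e := by abel
            rw [h']
            exact Submodule.sub_mem _ hxU (hEU he)
          have hs : s = 0 := smul_coeff_zero hsu hu2U
          rw [hs, zero_smul, add_zero] at hxW ⊢
          simp [hEzero e he hxW]
        obtain ⟨g, hsym, h1', h2'⟩ := exists_fix W W1 W2 _ hDW
          (le_trans (bigcase W1 hW1 hU1 hA1)
            (sup_le le_sup_left (le_trans le_sup_left le_sup_right)))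
          (by conv_lhs => rw [← hsp2]
              apply sup_le
              · rw [← hBEsup]
                exact sup_le (le_trans hBW2 le_sup_left) (le_trans le_sup_left le_sup_right)
              · exact le_trans le_sup_right le_sup_right)
        exact ⟨g, hsym, Or.inl ⟨h1', h2'⟩⟩
      · -- case ¬hA1, ¬hA2 : fix with D = E
        have hDW : E ⊓ W = ⊥ := by
          rw [eq_bot_iff]
          rintro x ⟨hxE, hxW⟩
          simp [hEzero x hxE hxW]
        obtain ⟨g, hsym, h1', h2'⟩ := exists_fix W W1 W2 E hDW
          (bigcase W1 hW1 hU1 hA1) (bigcase W2 hW2 hU2 hA2)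
        exact ⟨g, hsym, Or.inl ⟨h1', h2'⟩⟩
end

section
/- Let m ≥ 2 and let W1 ≠ W2 be Lagrangian subspaces of ℝ^{2m} with its standard symplectic form Ω. Then the following are equivalent: (i) for every Lagrangian subspace W of ℝ^{2m} with W ∉ {W1, W2} there exists a Lagrangian symmetry g at W such that {g(W1), g(W2)} = {W1, W2}; (ii) dim(W1 ∩ W2) = m − 1. -/
/-- The standard symplectic form on `ℝ^{2m}`:
`Ω(x,y) = Σ_{i=1}^m (x_i y_{m+i} − x_{m+i} y_i)`. -/
def Omega (m : ℕ) (x y : Fin (2 * m) → ℝ) : ℝ :=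
  ∑ i : Fin m,
    (x ⟨i.1, by have := i.2; omega⟩ * y ⟨m + i.1, by have := i.2; omega⟩ -
      x ⟨m + i.1, by have := i.2; omega⟩ * y ⟨i.1, by have := i.2; omega⟩)

/-- A subspace of `ℝ^{2m}` is Lagrangian if it has dimension `m` and `Ω` vanishes on it. -/
def IsLagrangian (m : ℕ) (W : Submodule ℝ (Fin (2 * m) → ℝ)) : Prop :=
  Module.finrank ℝ W = m ∧ ∀ x ∈ W, ∀ y ∈ W, Omega m x y = 0

/-- A *Lagrangian symmetry* at a Lagrangian subspace `W ⊆ ℝ^{2m}`: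
an invertible linear map `g` such that for some `c ≠ 0`, `g w = c • w` for all `w ∈ W`
and `Ω(g x, g y) = −c² Ω(x, y)` for all `x, y`. -/
def LagSym (m : ℕ) (W : Submodule ℝ (Fin (2 * m) → ℝ))
    (g : (Fin (2 * m) → ℝ) ≃ₗ[ℝ] (Fin (2 * m) → ℝ)) : Prop :=
  ∃ c : ℝ, c ≠ 0 ∧ (∀ w ∈ W, g w = c • w) ∧
    ∀ x y : Fin (2 * m) → ℝ, Omega m (g x) (g y) = -c ^ 2 * Omega m x y

namespace Stmt1Aux

open Module Submodule

variable {m : ℕ}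

/-- lower index embedding -/
def lo (m : ℕ) (i : Fin m) : Fin (2 * m) := ⟨i.1, by have := i.2; omega⟩
/-- upper index embedding -/
def hi (m : ℕ) (i : Fin m) : Fin (2 * m) := ⟨m + i.1, by have := i.2; omega⟩

lemma Omega_def (x y : Fin (2 * m) → ℝ) :
    Omega m x y = ∑ i : Fin m, (x (lo m i) * y (hi m i) - x (hi m i) * y (lo m i)) := rfl

lemma omega_add_left (x x' y : Fin (2 * m) → ℝ) :
    Omega m (x + x') y = Omega m x y + Omega m x' y := by
  simp only [Omega_def, Pi.add_apply, ← Finset.sum_add_distrib]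
  exact Finset.sum_congr rfl fun i _ => by ring

lemma omega_smul_left (c : ℝ) (x y : Fin (2 * m) → ℝ) :
    Omega m (c • x) y = c * Omega m x y := by
  simp only [Omega_def, Pi.smul_apply, smul_eq_mul, Finset.mul_sum]
  exact Finset.sum_congr rfl fun i _ => by ring

lemma omega_add_right (x y y' : Fin (2 * m) → ℝ) :
    Omega m x (y + y') = Omega m x y + Omega m x y' := by
  simp only [Omega_def, Pi.add_apply, ← Finset.sum_add_distrib]
  exact Finset.sum_congr rfl fun i _ => by ring

lemma omega_smul_right (c : ℝ) (x y : Fin (2 * m) → ℝ) :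
    Omega m x (c • y) = c * Omega m x y := by
  simp only [Omega_def, Pi.smul_apply, smul_eq_mul, Finset.mul_sum]
  exact Finset.sum_congr rfl fun i _ => by ring

/-- `Omega` as a bilinear form. -/
def Bm (m : ℕ) : LinearMap.BilinForm ℝ (Fin (2 * m) → ℝ) :=
  LinearMap.mk₂ ℝ (Omega m) omega_add_left omega_smul_left omega_add_right omega_smul_right

@[simp] lemma Bm_apply (x y : Fin (2 * m) → ℝ) : Bm m x y = Omega m x y := rfl

lemma omega_self (x : Fin (2 * m) → ℝ) : Omega m x x = 0 := by
  simp only [Omega_def]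
  rw [Finset.sum_eq_zero]
  intro i _; ring

lemma omega_neg_symm (x y : Fin (2 * m) → ℝ) : Omega m x y = -Omega m y x := by
  rw [Omega_def, Omega_def, ← Finset.sum_neg_distrib]
  exact Finset.sum_congr rfl fun i _ => by ring

lemma bm_refl : (Bm m).IsRefl := by
  intro x y h
  simp only [Bm_apply] at *
  rw [omega_neg_symm, h, neg_zero]

def sing (j : Fin (2 * m)) : Fin (2 * m) → ℝ := Pi.single j 1

lemma sing_apply (j k : Fin (2 * m)) : sing j k = if k = j then 1 else 0 := by
  rw [sing, Pi.single_apply]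

lemma omega_single_hi (x : Fin (2 * m) → ℝ) (i : Fin m) :
    Omega m x (sing (hi m i)) = x (lo m i) := by
  rw [Omega_def]
  have h : ∀ k ∈ Finset.univ (α := Fin m),
      (x (lo m k) * sing (hi m i) (hi m k) -
        x (hi m k) * sing (hi m i) (lo m k)) = if k = i then x (lo m i) else 0 := by
    intro k _
    have hlo : lo m k ≠ hi m i := by simp only [lo, hi, ne_eq, Fin.mk.injEq]; omega
    rcases eq_or_ne k i with h | h
    · subst h; simp [sing_apply, hlo]
    · have h1 : hi m k ≠ hi m i := by
        simp only [hi, ne_eq, Fin.mk.injEq]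
        intro hh
        exact h (Fin.ext (by omega))
      simp [sing_apply, hlo, h1, h]
  rw [Finset.sum_congr rfl h, Finset.sum_ite_eq' Finset.univ i fun _ => x (lo m i)]
  simp

lemma omega_single_lo (x : Fin (2 * m) → ℝ) (i : Fin m) :
    Omega m x (sing (lo m i)) = -x (hi m i) := by
  rw [Omega_def]
  have h : ∀ k ∈ Finset.univ (α := Fin m),
      (x (lo m k) * sing (lo m i) (hi m k) -
        x (hi m k) * sing (lo m i) (lo m k)) = if k = i then -x (hi m i) else 0 := by
    intro k _
    have hhi : hi m k ≠ lo m i := by simp only [lo, hi, ne_eq, Fin.mk.injEq]; omega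
    rcases eq_or_ne k i with h | h
    · subst h; simp [sing_apply, hhi]
    · have h1 : lo m k ≠ lo m i := by
        simp only [lo, ne_eq, Fin.mk.injEq]
        intro hh
        exact h (Fin.ext (by omega))
      simp [sing_apply, hhi, h1, h]
  rw [Finset.sum_congr rfl h, Finset.sum_ite_eq' Finset.univ i fun _ => -x (hi m i)]
  simp

lemma omega_separating (x : Fin (2 * m) → ℝ) (hx : ∀ y, Omega m x y = 0) : x = 0 := by
  funext j
  rcases lt_or_ge j.1 m with h | h
  · have := hx (sing (hi m ⟨j.1, h⟩))
    rw [omega_single_hi] at this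
    have hj : lo m ⟨j.1, h⟩ = j := Fin.ext rfl
    rw [hj] at this
    simpa using this
  · have hlt : j.1 - m < m := by have := j.2; omega
    have := hx (sing (lo m ⟨j.1 - m, hlt⟩))
    rw [omega_single_lo] at this
    have hj : hi m ⟨j.1 - m, hlt⟩ = j := Fin.ext (by simp [hi]; omega)
    rw [hj] at this
    simpa using this

lemma bm_nondeg : (Bm m).Nondegenerate := by
  refine (LinearMap.IsRefl.nondegenerate_iff_separatingLeft bm_refl).mpr fun x hx => ?_
  exact omega_separating x fun y => by rw [← Bm_apply]; exact hx y

lemma finrank_V : finrank ℝ (Fin (2 * m) → ℝ) = 2 * m := Module.finrank_fin_fun ℝ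

lemma finrank_orth (S : Submodule ℝ (Fin (2 * m) → ℝ)) :
    finrank ℝ ((Bm m).orthogonal S) = 2 * m - finrank ℝ S := by
  rw [LinearMap.BilinForm.finrank_orthogonal bm_nondeg, finrank_V]

lemma orth_orth (S : Submodule ℝ (Fin (2 * m) → ℝ)) :
    (Bm m).orthogonal ((Bm m).orthogonal S) = S :=
  LinearMap.BilinForm.orthogonal_orthogonal bm_nondeg bm_refl S

lemma mem_orth {S : Submodule ℝ (Fin (2 * m) → ℝ)} {x : Fin (2 * m) → ℝ} :
    x ∈ (Bm m).orthogonal S ↔ ∀ y ∈ S, Omega m y x = 0 := by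
  simp only [LinearMap.BilinForm.mem_orthogonal_iff, LinearMap.BilinForm.IsOrtho, Bm_apply]

lemma finrank_le_of_isotropic {S : Submodule ℝ (Fin (2 * m) → ℝ)}
    (hS : S ≤ (Bm m).orthogonal S) : finrank ℝ S ≤ m := by
  have h1 : finrank ℝ S ≤ finrank ℝ ((Bm m).orthogonal S) := Submodule.finrank_mono hS
  rw [finrank_orth] at h1
  have h2 : finrank ℝ S ≤ 2 * m := by
    have h3 := S.finrank_le
    rwa [finrank_V] at h3
  omega

lemma isotropic_iff {S : Submodule ℝ (Fin (2 * m) → ℝ)} :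
    S ≤ (Bm m).orthogonal S ↔ ∀ x ∈ S, ∀ y ∈ S, Omega m x y = 0 := by
  constructor
  · intro h x hx y hy
    exact mem_orth.mp (h hy) x hx
  · intro h x hx
    rw [mem_orth]
    intro y hy
    exact h y hy x hx

lemma lag_orth_eq {W : Submodule ℝ (Fin (2 * m) → ℝ)} (hW : IsLagrangian m W) :
    (Bm m).orthogonal W = W := by
  have h1 : W ≤ (Bm m).orthogonal W := isotropic_iff.mpr hW.2
  have h2 : finrank ℝ ((Bm m).orthogonal W) ≤ finrank ℝ W := by
    rw [finrank_orth, hW.1]; omega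
  exact (Submodule.eq_of_le_of_finrank_le h1 h2).symm

lemma lag_of_isotropic {S : Submodule ℝ (Fin (2 * m) → ℝ)}
    (hS : S ≤ (Bm m).orthogonal S) (hr : finrank ℝ S = m) : IsLagrangian m S :=
  ⟨hr, isotropic_iff.mp hS⟩

lemma orth_sup (A B : Submodule ℝ (Fin (2 * m) → ℝ)) :
    (Bm m).orthogonal (A ⊔ B) = (Bm m).orthogonal A ⊓ (Bm m).orthogonal B := by
  apply le_antisymm
  · exact le_inf (LinearMap.BilinForm.orthogonal_le le_sup_left)
      (LinearMap.BilinForm.orthogonal_le le_sup_right)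
  · intro x hx
    rw [mem_orth]
    intro y hy
    rcases Submodule.mem_sup.mp hy with ⟨a, ha, b, hb, rfl⟩
    have h1 := mem_orth.mp hx.1 a ha
    have h2 := mem_orth.mp hx.2 b hb
    calc Omega m (a + b) x = Bm m (a + b) x := (Bm_apply _ _).symm
    _ = Bm m a x + Bm m b x := by rw [map_add, LinearMap.add_apply]
    _ = 0 := by rw [Bm_apply, Bm_apply, h1, h2, add_zero]

lemma finrank_inf_lb (A B : Submodule ℝ (Fin (2 * m) → ℝ)) :
    finrank ℝ A + finrank ℝ B ≤ finrank ℝ (A ⊓ B : Submodule ℝ (Fin (2 * m) → ℝ)) + 2 * m := by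
  have := Submodule.finrank_sup_add_finrank_inf_eq A B
  have h2 : finrank ℝ (A ⊔ B : Submodule ℝ (Fin (2 * m) → ℝ)) ≤ 2 * m := by
    have h3 := Submodule.finrank_le (A ⊔ B)
    rwa [finrank_V] at h3
  omega

lemma avoid2 {A B S : Submodule ℝ (Fin (2 * m) → ℝ)} (hA : ¬S ≤ A) (hB : ¬S ≤ B) :
    ∃ v ∈ S, v ∉ A ∧ v ∉ B := by
  obtain ⟨x, hxS, hxA⟩ := Set.not_subset.mp fun h => hA h
  obtain ⟨y, hyS, hyB⟩ := Set.not_subset.mp fun h => hB h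
  by_cases hxB : x ∈ B
  · by_cases hyA : y ∈ A
    · refine ⟨x + y, S.add_mem hxS hyS, fun h => hxA ?_, fun h => hyB ?_⟩
      · have := A.sub_mem h hyA; simpa using this
      · have := B.sub_mem h hxB; simpa using this
    · exact ⟨y, hyS, hyA, hyB⟩
  · exact ⟨x, hxS, hxA, hxB⟩

lemma mem_sup_span {S : Submodule ℝ (Fin (2 * m) → ℝ)} {v x : Fin (2 * m) → ℝ} :
    x ∈ S ⊔ span ℝ {v} ↔ ∃ s ∈ S, ∃ c : ℝ, x = s + c • v := by
  rw [Submodule.mem_sup]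
  constructor
  · rintro ⟨s, hs, z, hz, rfl⟩
    obtain ⟨c, rfl⟩ := Submodule.mem_span_singleton.mp hz
    exact ⟨s, hs, c, rfl⟩
  · rintro ⟨s, hs, c, rfl⟩
    exact ⟨s, hs, c • v, Submodule.mem_span_singleton.mpr ⟨c, rfl⟩, rfl⟩

lemma finrank_sup_span {S : Submodule ℝ (Fin (2 * m) → ℝ)} {v : Fin (2 * m) → ℝ}
    (hv : v ∉ S) : finrank ℝ (S ⊔ span ℝ {v} : Submodule ℝ (Fin (2 * m) → ℝ))
      = finrank ℝ S + 1 := by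
  have hv0 : v ≠ 0 := fun h => hv (h ▸ S.zero_mem)
  have hinf : S ⊓ span ℝ {v} = ⊥ := by
    rw [Submodule.eq_bot_iff]
    rintro x ⟨hxS, hxv⟩
    obtain ⟨c, rfl⟩ := Submodule.mem_span_singleton.mp hxv
    rcases eq_or_ne c 0 with rfl | hc
    · simp
    · exact absurd (by simpa [smul_smul, inv_mul_cancel₀ hc] using S.smul_mem c⁻¹ hxS) hv
  have := Submodule.finrank_sup_add_finrank_inf_eq S (span ℝ {v})
  rw [hinf, finrank_bot, finrank_span_singleton hv0] at this
  omega

lemma sup_span_eq {U X : Submodule ℝ (Fin (2 * m) → ℝ)} {v : Fin (2 * m) → ℝ}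
    (hle : U ≤ X) (hv : v ∈ X) (hvU : v ∉ U) (h : finrank ℝ U + 1 = finrank ℝ X) :
    U ⊔ span ℝ {v} = X := by
  have hle2 : U ⊔ span ℝ {v} ≤ X := sup_le hle ((Submodule.span_singleton_le_iff_mem v X).mpr hv)
  exact Submodule.eq_of_le_of_finrank_le hle2 (by rw [finrank_sup_span hvU]; omega)

lemma span_singleton_neg (v : Fin (2 * m) → ℝ) : span ℝ {-v} = span ℝ {v} := by
  apply le_antisymm
  · rw [Submodule.span_singleton_le_iff_mem]
    exact Submodule.neg_mem _ (Submodule.mem_span_singleton_self v)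
  · rw [Submodule.span_singleton_le_iff_mem]
    have := Submodule.neg_mem (span ℝ {-v}) (Submodule.mem_span_singleton_self (-v))
    simpa using this

lemma smul_trick {A : Submodule ℝ (Fin (2 * m) → ℝ)} {t v : Fin (2 * m) → ℝ} {c : ℝ}
    (hc : c ≠ 0) (ht : t ∈ A) (hx : t + c • v ∈ A) : v ∈ A := by
  have h := A.smul_mem c⁻¹ (A.sub_mem hx ht)
  simpa [add_sub_cancel_left, smul_smul, inv_mul_cancel₀ hc] using h

lemma isotr_sup_span {T : Submodule ℝ (Fin (2 * m) → ℝ)} {v : Fin (2 * m) → ℝ}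
    (hT : T ≤ (Bm m).orthogonal T) (hv : v ∈ (Bm m).orthogonal T) :
    T ⊔ span ℝ {v} ≤ (Bm m).orthogonal (T ⊔ span ℝ {v}) := by
  rw [isotropic_iff]
  intro x hx y hy
  rcases mem_sup_span.mp hx with ⟨t, ht, c, rfl⟩
  rcases mem_sup_span.mp hy with ⟨s, hs, d, rfl⟩
  have h1 : Omega m t s = 0 := isotropic_iff.mp hT t ht s hs
  have h2 : Omega m t v = 0 := mem_orth.mp hv t ht
  have h3 : Omega m v s = 0 := by
    rw [omega_neg_symm, mem_orth.mp hv s hs, neg_zero]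
  have h4 : Omega m v v = 0 := omega_self v
  rw [omega_add_left, omega_add_right, omega_add_right, omega_smul_left, omega_smul_left,
    omega_smul_right, omega_smul_right, h1, h2, h3, h4]
  ring

lemma ext_lagrangian (W : Submodule ℝ (Fin (2 * m) → ℝ)) (hW : IsLagrangian m W)
    (T : Submodule ℝ (Fin (2 * m) → ℝ)) (hT : T ≤ (Bm m).orthogonal T) (hTW : T ⊓ W = ⊥) :
    ∃ W', IsLagrangian m W' ∧ T ≤ W' ∧ W ⊓ W' = ⊥ := by
  suffices H : ∀ n (T : Submodule ℝ (Fin (2 * m) → ℝ)), T ≤ (Bm m).orthogonal T →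
      T ⊓ W = ⊥ → m ≤ finrank ℝ T + n →
      ∃ W', IsLagrangian m W' ∧ T ≤ W' ∧ W ⊓ W' = ⊥ by
    exact H m T hT hTW (by omega)
  intro n
  induction n with
  | zero =>
    intro T hT hTW hrank
    have hfin : finrank ℝ T = m := le_antisymm (finrank_le_of_isotropic hT) (by omega)
    exact ⟨T, lag_of_isotropic hT hfin, le_rfl, by rw [inf_comm]; exact hTW⟩
  | succ n ih =>
    intro T hT hTW hrank
    by_cases hfin : finrank ℝ T = m
    · exact ⟨T, lag_of_isotropic hT hfin, le_rfl, by rw [inf_comm]; exact hTW⟩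
    · have hd : finrank ℝ T < m := lt_of_le_of_ne (finrank_le_of_isotropic hT) hfin
      set A := W ⊔ T with hA
      have hSA : ¬ ((Bm m).orthogonal T ≤ A) := by
        intro hle
        have h1 : (Bm m).orthogonal A ≤ T := by
          have := LinearMap.BilinForm.orthogonal_le (B := Bm m) hle
          rwa [orth_orth] at this
        have h2 : (Bm m).orthogonal A = W ⊓ (Bm m).orthogonal T := by
          rw [hA, orth_sup, lag_orth_eq hW]
        have h3 : W ⊓ (Bm m).orthogonal T = ⊥ :=
          le_bot_iff.mp (le_trans (le_inf (h2 ▸ h1) inf_le_left) (le_of_eq hTW))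
        have h4 := finrank_inf_lb W ((Bm m).orthogonal T)
        rw [h3, finrank_bot, finrank_orth, hW.1] at h4
        omega
      obtain ⟨v, hvS, hvA⟩ := SetLike.not_le_iff_exists.mp hSA
      have hvT : v ∉ T := fun h => hvA (Submodule.mem_sup_right h)
      have hTW' : (T ⊔ span ℝ {v}) ⊓ W = ⊥ := by
        rw [Submodule.eq_bot_iff]
        rintro x ⟨hx1, hx2⟩
        rcases mem_sup_span.mp hx1 with ⟨t, ht, c, rfl⟩
        rcases eq_or_ne c 0 with rfl | hc
        · have : t + (0 : ℝ) • v ∈ T ⊓ W := ⟨by simpa using ht, hx2⟩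
          rw [hTW] at this
          exact this
        · exact absurd (smul_trick hc (Submodule.mem_sup_right ht) (Submodule.mem_sup_left hx2)) hvA
      obtain ⟨W', hL, hle, hcompl⟩ := ih (T ⊔ span ℝ {v}) (isotr_sup_span hT hvS) hTW'
        (by rw [finrank_sup_span hvT]; omega)
      exact ⟨W', hL, le_trans le_sup_left hle, hcompl⟩
lemma mem_orth_span_singleton {v x : Fin (2 * m) → ℝ} :
    x ∈ (Bm m).orthogonal (span ℝ {v}) ↔ Omega m v x = 0 := by
  rw [mem_orth]
  constructor
  · intro h; exact h v (Submodule.mem_span_singleton_self v)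
  · intro h y hy
    obtain ⟨c, rfl⟩ := Submodule.mem_span_singleton.mp hy
    rw [omega_smul_left, h, mul_zero]

lemma badW {W1 W2 : Submodule ℝ (Fin (2 * m) → ℝ)} (hm : 1 ≤ m)
    (h1 : IsLagrangian m W1) (h2 : IsLagrangian m W2)
    {a : Fin (2 * m) → ℝ} (ha1 : a ∈ W1) (ha2 : a ∉ W2) :
    ∃ W, IsLagrangian m W ∧ W ⊓ W1 = span ℝ {a} ∧ W ⊓ W2 = ⊥ := by
  have ha0 : a ≠ 0 := fun h => ha2 (h ▸ W2.zero_mem)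
  suffices H : ∀ d, d ≤ m - 1 → ∃ T : Submodule ℝ (Fin (2 * m) → ℝ),
      T ≤ (Bm m).orthogonal T ∧ T ≤ (Bm m).orthogonal (span ℝ {a}) ∧
      T ⊓ W1 = ⊥ ∧ (T ⊔ span ℝ {a}) ⊓ W2 = ⊥ ∧ finrank ℝ T = d by
    obtain ⟨T, hiso, horth, hTW1, hTW2, hrank⟩ := H (m - 1) le_rfl
    have haT : a ∉ T := by
      intro h
      have : a ∈ T ⊓ W1 := ⟨h, ha1⟩
      rw [hTW1] at this
      exact ha0 this
    have haOT : a ∈ (Bm m).orthogonal T := by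
      rw [mem_orth]
      intro t ht
      rw [omega_neg_symm, mem_orth_span_singleton.mp (horth ht), neg_zero]
    refine ⟨T ⊔ span ℝ {a}, lag_of_isotropic (isotr_sup_span hiso haOT) ?_, ?_, hTW2⟩
    · rw [finrank_sup_span haT, hrank]; omega
    · apply le_antisymm
      · rintro x ⟨hx1, hxW1⟩
        rcases mem_sup_span.mp hx1 with ⟨t, ht, c, rfl⟩
        have htW1 : t ∈ W1 := by
          have : t + c • a - c • a ∈ W1 := W1.sub_mem hxW1 (W1.smul_mem c ha1)
          simpa using this
        have : t ∈ T ⊓ W1 := ⟨ht, htW1⟩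
        rw [hTW1] at this
        rw [this, zero_add]
        exact Submodule.smul_mem _ c (Submodule.mem_span_singleton_self a)
      · exact le_inf le_sup_right ((Submodule.span_singleton_le_iff_mem a _).mpr ha1)
  intro d
  induction d with
  | zero =>
    intro _
    refine ⟨⊥, bot_le, bot_le, by rw [bot_inf_eq], ?_, finrank_bot ℝ _⟩
    rw [bot_sup_eq, Submodule.eq_bot_iff]
    intro x ⟨hx1, hx2⟩
    obtain ⟨c, rfl⟩ := Submodule.mem_span_singleton.mp hx1
    rcases eq_or_ne c 0 with rfl | hc
    · simp
    · exact absurd (by simpa [smul_smul, inv_mul_cancel₀ hc] using W2.smul_mem c⁻¹ hx2) ha2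
  | succ d ih =>
    intro hdm
    obtain ⟨T, hiso, horth, hTW1, hTW2, hrank⟩ := ih (by omega)
    have haT : a ∉ T := by
      intro h
      have : a ∈ T ⊓ W1 := ⟨h, ha1⟩
      rw [hTW1] at this
      exact ha0 this
    have haOT : a ∈ (Bm m).orthogonal T := by
      rw [mem_orth]
      intro t ht
      rw [omega_neg_symm, mem_orth_span_singleton.mp (horth ht), neg_zero]
    set Tp := T ⊔ span ℝ {a} with hTp
    have hTpiso : Tp ≤ (Bm m).orthogonal Tp := isotr_sup_span hiso haOT
    have hrankTp : finrank ℝ Tp = d + 1 := by rw [hTp, finrank_sup_span haT, hrank]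
    have hnotA : ¬ ((Bm m).orthogonal Tp ≤ W1 ⊔ T) := by
      intro hle
      have h1' : (Bm m).orthogonal (W1 ⊔ T) ≤ Tp := by
        have := LinearMap.BilinForm.orthogonal_le (B := Bm m) hle
        rwa [orth_orth] at this
      have h2' : (Bm m).orthogonal (W1 ⊔ T) = W1 ⊓ (Bm m).orthogonal T := by
        rw [orth_sup, lag_orth_eq h1]
      have h3' : W1 ⊓ (Bm m).orthogonal T ≤ span ℝ {a} := by
        intro x hx
        have hxTp : x ∈ W1 ⊓ Tp := ⟨hx.1, h1' (h2' ▸ hx)⟩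
        rcases mem_sup_span.mp hxTp.2 with ⟨t, ht, c, rfl⟩
        have htW1 : t ∈ W1 := by
          have : t + c • a - c • a ∈ W1 := W1.sub_mem hxTp.1 (W1.smul_mem c ha1)
          simpa using this
        have : t ∈ T ⊓ W1 := ⟨ht, htW1⟩
        rw [hTW1] at this
        rw [this, zero_add]
        exact Submodule.smul_mem _ c (Submodule.mem_span_singleton_self a)
      have h4' : finrank ℝ (W1 ⊓ (Bm m).orthogonal T :
          Submodule ℝ (Fin (2 * m) → ℝ)) ≤ 1 := by
        have := Submodule.finrank_mono h3'
        rwa [finrank_span_singleton ha0] at this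
      have h5' := finrank_inf_lb W1 ((Bm m).orthogonal T)
      rw [finrank_orth, h1.1, hrank] at h5'
      omega
    have hnotB : ¬ ((Bm m).orthogonal Tp ≤ W2 ⊔ Tp) := by
      intro hle
      have h1' : (Bm m).orthogonal (W2 ⊔ Tp) ≤ Tp := by
        have := LinearMap.BilinForm.orthogonal_le (B := Bm m) hle
        rwa [orth_orth] at this
      have h2' : (Bm m).orthogonal (W2 ⊔ Tp) = W2 ⊓ (Bm m).orthogonal Tp := by
        rw [orth_sup, lag_orth_eq h2]
      have h3' : W2 ⊓ (Bm m).orthogonal Tp = ⊥ := by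
        rw [Submodule.eq_bot_iff]
        intro x hx
        have : x ∈ Tp ⊓ W2 := ⟨h1' (h2' ▸ hx), hx.1⟩
        rw [hTW2] at this
        exact this
      have h5' := finrank_inf_lb W2 ((Bm m).orthogonal Tp)
      rw [finrank_orth, h2.1, hrankTp, h3', finrank_bot] at h5'
      omega
    obtain ⟨v, hvS, hvA, hvB⟩ := avoid2 hnotA hnotB
    have hvT : v ∉ T := fun h => hvA (Submodule.mem_sup_right h)
    have hvOT : v ∈ (Bm m).orthogonal T :=
      LinearMap.BilinForm.orthogonal_le (B := Bm m) le_sup_left hvS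
    refine ⟨T ⊔ span ℝ {v}, isotr_sup_span hiso hvOT, ?_, ?_, ?_, ?_⟩
    · apply sup_le horth
      rw [Submodule.span_singleton_le_iff_mem, mem_orth_span_singleton]
      exact mem_orth.mp hvS a (Submodule.mem_sup_right (Submodule.mem_span_singleton_self a))
    · rw [Submodule.eq_bot_iff]
      rintro x ⟨hx1, hx2⟩
      rcases mem_sup_span.mp hx1 with ⟨t, ht, c, rfl⟩
      rcases eq_or_ne c 0 with rfl | hc
      · have : t + (0 : ℝ) • v ∈ T ⊓ W1 := ⟨by simpa using ht, hx2⟩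
        rw [hTW1] at this
        exact this
      · exact absurd (smul_trick hc (Submodule.mem_sup_right ht)
          (Submodule.mem_sup_left hx2)) hvA
    · have hre : (T ⊔ span ℝ {v}) ⊔ span ℝ {a} = Tp ⊔ span ℝ {v} := by
        rw [hTp, sup_right_comm]
      rw [hre, Submodule.eq_bot_iff]
      rintro x ⟨hx1, hx2⟩
      rcases mem_sup_span.mp hx1 with ⟨t, ht, c, rfl⟩
      rcases eq_or_ne c 0 with rfl | hc
      · have : t + (0 : ℝ) • v ∈ Tp ⊓ W2 := ⟨by simpa using ht, hx2⟩
        rw [hTW2] at this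
        exact this
      · exact absurd (smul_trick hc (Submodule.mem_sup_right ht)
          (Submodule.mem_sup_left hx2)) hvB
    · rw [finrank_sup_span hvT, hrank]
lemma exists_compl_within {P U : Submodule ℝ (Fin (2 * m) → ℝ)} (h : P ≤ U) :
    ∃ C, C ≤ U ∧ P ⊓ C = ⊥ ∧ P ⊔ C = U := by
  obtain ⟨C', hC'⟩ := Submodule.exists_isCompl (Submodule.comap U.subtype P)
  refine ⟨C'.map U.subtype, Submodule.map_subtype_le U C', ?_, ?_⟩
  · rw [Submodule.eq_bot_iff]
    rintro x ⟨hxP, hxC⟩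
    obtain ⟨y, hyC, rfl⟩ := Submodule.mem_map.mp hxC
    have hy : y ∈ Submodule.comap U.subtype P ⊓ C' := ⟨hxP, hyC⟩
    rw [disjoint_iff.mp hC'.1] at hy
    rw [hy]
    rfl
  · have hP : P = Submodule.map U.subtype (Submodule.comap U.subtype P) := by
      rw [Submodule.map_comap_subtype, inf_eq_right.mpr h]
    rw [hP, ← Submodule.map_sup, codisjoint_iff.mp hC'.2, Submodule.map_top,
      Submodule.range_subtype]

lemma map_eq_of_fixed {g : (Fin (2 * m) → ℝ) ≃ₗ[ℝ] (Fin (2 * m) → ℝ)}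
    {S : Submodule ℝ (Fin (2 * m) → ℝ)} (h : ∀ x ∈ S, g x = x) : S.map g.toLinearMap = S := by
  apply le_antisymm
  · rintro _ ⟨x, hx, rfl⟩
    rw [LinearEquiv.coe_coe, h x hx]
    exact hx
  · intro x hx
    exact ⟨x, hx, h x hx⟩

lemma map_eq_of_neg {g : (Fin (2 * m) → ℝ) ≃ₗ[ℝ] (Fin (2 * m) → ℝ)}
    {S : Submodule ℝ (Fin (2 * m) → ℝ)} (h : ∀ x ∈ S, g x = -x) : S.map g.toLinearMap = S := by
  apply le_antisymm
  · rintro _ ⟨x, hx, rfl⟩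
    rw [LinearEquiv.coe_coe, h x hx]
    exact S.neg_mem hx
  · intro x hx
    refine ⟨-x, S.neg_mem hx, ?_⟩
    rw [map_neg, LinearEquiv.coe_coe, h x hx, neg_neg]

lemma map_span_singleton (g : (Fin (2 * m) → ℝ) ≃ₗ[ℝ] (Fin (2 * m) → ℝ))
    (v : Fin (2 * m) → ℝ) : (span ℝ {v}).map g.toLinearMap = span ℝ {g v} := by
  rw [Submodule.map_span, Set.image_singleton, LinearEquiv.coe_coe]

lemma decomp {W W' : Submodule ℝ (Fin (2 * m) → ℝ)} (hc : IsCompl W W')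
    (x : Fin (2 * m) → ℝ) : ∃ p ∈ W, ∃ q ∈ W', x = p + q := by
  have hx : x ∈ W ⊔ W' := by rw [hc.sup_eq_top]; exact Submodule.mem_top
  obtain ⟨p, hp, q, hq, rfl⟩ := Submodule.mem_sup.mp hx
  exact ⟨p, hp, q, hq, rfl⟩

lemma sigma_exists {W W' : Submodule ℝ (Fin (2 * m) → ℝ)}
    (hW : IsLagrangian m W) (hW' : IsLagrangian m W') (hd : W ⊓ W' = ⊥) :
    ∃ g : (Fin (2 * m) → ℝ) ≃ₗ[ℝ] (Fin (2 * m) → ℝ),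
      LagSym m W g ∧ (∀ x ∈ W, g x = x) ∧ (∀ x ∈ W', g x = -x) := by
  have hcompl : IsCompl W W' := by
    constructor
    · rw [disjoint_iff]; exact hd
    · rw [codisjoint_iff]
      apply Submodule.eq_top_of_finrank_eq
      have h5 := Submodule.finrank_sup_add_finrank_inf_eq W W'
      rw [hd, finrank_bot, hW.1, hW'.1] at h5
      rw [finrank_V]; omega
  set σ : (Fin (2 * m) → ℝ) →ₗ[ℝ] (Fin (2 * m) → ℝ) :=
    2 • (W.subtype ∘ₗ Submodule.projectionOnto W W' hcompl) - LinearMap.id with hσ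
  have σ_left : ∀ x ∈ W, σ x = x := by
    intro x hx
    simp only [hσ, LinearMap.sub_apply, LinearMap.smul_apply, LinearMap.comp_apply,
      LinearMap.id_apply, Submodule.coe_subtype]
    rw [show x = ((⟨x, hx⟩ : W) : Fin (2 * m) → ℝ) from rfl,
      Submodule.projectionOnto_apply_left hcompl ⟨x, hx⟩]
    rw [two_smul]
    abel
  have σ_right : ∀ x ∈ W', σ x = -x := by
    intro x hx
    simp only [hσ, LinearMap.sub_apply, LinearMap.smul_apply, LinearMap.comp_apply,
      LinearMap.id_apply, Submodule.coe_subtype]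
    rw [Submodule.projectionOnto_apply_of_mem_right hcompl hx]
    simp
  have invol : ∀ x, σ (σ x) = x := by
    intro x
    obtain ⟨p, hp, q, hq, rfl⟩ := decomp hcompl x
    rw [map_add, σ_left p hp, σ_right q hq, map_add, σ_left p hp, map_neg, σ_right q hq, neg_neg]
  have hid : σ ∘ₗ σ = LinearMap.id := LinearMap.ext invol
  refine ⟨LinearEquiv.ofLinear σ σ hid hid, ⟨1, one_ne_zero, ?_, ?_⟩, ?_, ?_⟩
  · intro w hw
    rw [LinearEquiv.ofLinear_apply, σ_left w hw, one_smul]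
  · intro x y
    rw [LinearEquiv.ofLinear_apply, LinearEquiv.ofLinear_apply]
    obtain ⟨p, hp, q, hq, rfl⟩ := decomp hcompl x
    obtain ⟨p', hp', q', hq', rfl⟩ := decomp hcompl y
    have e1 : σ (p + q) = p + (-1 : ℝ) • q := by
      rw [map_add, σ_left p hp, σ_right q hq]; module
    have e2 : σ (p' + q') = p' + (-1 : ℝ) • q' := by
      rw [map_add, σ_left p' hp', σ_right q' hq']; module
    rw [e1, e2]
    have hpp : Omega m p p' = 0 := hW.2 p hp p' hp'
    have hqq : Omega m q q' = 0 := hW'.2 q hq q' hq'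
    rw [omega_add_left, omega_add_right, omega_add_right, omega_smul_left, omega_smul_left,
      omega_smul_right, omega_smul_right, omega_add_left, omega_add_right, omega_add_right,
      hpp, hqq]
    ring
  · intro x hx
    rw [LinearEquiv.ofLinear_apply]
    exact σ_left x hx
  · intro x hx
    rw [LinearEquiv.ofLinear_apply]
    exact σ_right x hx
lemma lag_sup_orth {L1 L2 : Submodule ℝ (Fin (2 * m) → ℝ)}
    (h1 : IsLagrangian m L1) (h2 : IsLagrangian m L2) :
    L1 ⊔ L2 = (Bm m).orthogonal (L1 ⊓ L2) := by
  have hle : L1 ⊔ L2 ≤ (Bm m).orthogonal (L1 ⊓ L2) := by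
    apply sup_le
    · have := LinearMap.BilinForm.orthogonal_le (B := Bm m) (inf_le_left (a := L1) (b := L2))
      rwa [lag_orth_eq h1] at this
    · have := LinearMap.BilinForm.orthogonal_le (B := Bm m) (inf_le_right (a := L1) (b := L2))
      rwa [lag_orth_eq h2] at this
  apply Submodule.eq_of_le_of_finrank_le hle
  have e1 := Submodule.finrank_sup_add_finrank_inf_eq L1 L2
  rw [h1.1, h2.1] at e1
  have e2 := finrank_orth (m := m) (L1 ⊓ L2)
  have e3 : finrank ℝ (L1 ⊓ L2 : Submodule ℝ (Fin (2 * m) → ℝ)) ≤ m := by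
    have := Submodule.finrank_mono (inf_le_left (a := L1) (b := L2))
    rwa [h1.1] at this
  omega

lemma fix_case {W1 W2 W : Submodule ℝ (Fin (2 * m) → ℝ)} (hm : 2 ≤ m)
    (h1 : IsLagrangian m W1) (h2 : IsLagrangian m W2) (hW : IsLagrangian m W)
    (hU : finrank ℝ (W1 ⊓ W2 : Submodule ℝ (Fin (2 * m) → ℝ)) = m - 1)
    (hc1 : ¬ (W ⊓ W1 ≤ W1 ⊓ W2)) :
    ∃ g : (Fin (2 * m) → ℝ) ≃ₗ[ℝ] (Fin (2 * m) → ℝ),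
      LagSym m W g ∧ W1.map g.toLinearMap = W1 ∧ W2.map g.toLinearMap = W2 := by
  set U := W1 ⊓ W2 with hUdef
  have hUW1 : U ≤ W1 := inf_le_left
  have hUW2 : U ≤ W2 := inf_le_right
  obtain ⟨a, haWW1, haU⟩ := SetLike.not_le_iff_exists.mp hc1
  have haW : a ∈ W := haWW1.1
  have haW1 : a ∈ W1 := haWW1.2
  set P := W ⊓ U with hPdef
  have hPU : P ≤ U := inf_le_right
  have hPW : P ≤ W := inf_le_left
  obtain ⟨C, hCU, hPC, hPCsup⟩ := exists_compl_within hPU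
  have hW1eq : U ⊔ span ℝ {a} = W1 := sup_span_eq hUW1 haW1 haU (by rw [hU, h1.1]; omega)
  -- map of U will be U
  by_cases hc2 : W ⊓ W2 ≤ U
  · -- W ⊓ W2 = P; pick v2 ∈ W2 \ U
    have hWW2P : W ⊓ W2 = P := by
      apply le_antisymm (le_inf inf_le_left hc2) (le_inf hPW (le_trans hPU hUW2))
    have hUneW2 : U < W2 := by
      apply lt_of_le_of_ne hUW2
      intro h
      rw [h, h2.1] at hU
      omega
    obtain ⟨v2, hv2W2, hv2U⟩ := SetLike.exists_of_lt hUneW2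
    have hW2eq : U ⊔ span ℝ {v2} = W2 := sup_span_eq hUW2 hv2W2 hv2U (by rw [hU, h2.1]; omega)
    have hCiso : C ≤ (Bm m).orthogonal C := by
      rw [isotropic_iff]
      intro x hx y hy
      exact h2.2 x (hUW2 (hCU hx)) y (hUW2 (hCU hy))
    have hv2OC : v2 ∈ (Bm m).orthogonal C := by
      rw [mem_orth]
      intro y hy
      exact h2.2 y (hUW2 (hCU hy)) v2 hv2W2
    have hTW : (C ⊔ span ℝ {v2}) ⊓ W = ⊥ := by
      rw [Submodule.eq_bot_iff]
      rintro x ⟨hx1, hx2⟩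
      rcases mem_sup_span.mp hx1 with ⟨cc, hcc, t, rfl⟩
      have hxW2 : cc + t • v2 ∈ W2 := W2.add_mem (hUW2 (hCU hcc)) (W2.smul_mem t hv2W2)
      have hxP : cc + t • v2 ∈ P := by rw [← hWW2P]; exact ⟨hx2, hxW2⟩
      have ht : t = 0 := by
        by_contra ht
        exact hv2U (smul_trick ht (hCU hcc) (hPU hxP))
      rw [ht, zero_smul, add_zero] at hxP ⊢
      have : cc ∈ P ⊓ C := ⟨hxP, hcc⟩
      rwa [hPC] at this
    obtain ⟨W', hW'L, hTW', hWW'⟩ := ext_lagrangian W hW _ (isotr_sup_span hCiso hv2OC) hTW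
    obtain ⟨g, hsym, hfix, hneg⟩ := sigma_exists hW hW'L hWW'
    have hmapU : U.map g.toLinearMap = U := by
      rw [← hPCsup, Submodule.map_sup,
        map_eq_of_fixed (fun x hx => hfix x (hPW hx)),
        map_eq_of_neg (fun x hx => hneg x (hTW' (Submodule.mem_sup_left hx)))]
    refine ⟨g, hsym, ?_, ?_⟩
    · rw [← hW1eq, Submodule.map_sup, hmapU, map_span_singleton, hfix a haW, hW1eq]
    · have hv2W' : v2 ∈ W' := hTW' (Submodule.mem_sup_right (Submodule.mem_span_singleton_self v2))
      rw [← hW2eq, Submodule.map_sup, hmapU, map_span_singleton, hneg v2 hv2W',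
        span_singleton_neg, hW2eq]
  · -- both W ⊓ W1 and W ⊓ W2 stick out of U
    obtain ⟨b, hbWW2, hbU⟩ := SetLike.not_le_iff_exists.mp hc2
    have hbW : b ∈ W := hbWW2.1
    have hbW2 : b ∈ W2 := hbWW2.2
    have hW2eq : U ⊔ span ℝ {b} = W2 := sup_span_eq hUW2 hbW2 hbU (by rw [hU, h2.1]; omega)
    have hCiso : C ≤ (Bm m).orthogonal C := by
      rw [isotropic_iff]
      intro x hx y hy
      exact h2.2 x (hUW2 (hCU hx)) y (hUW2 (hCU hy))
    have hTW : C ⊓ W = ⊥ := by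
      rw [Submodule.eq_bot_iff]
      rintro x ⟨hx1, hx2⟩
      have : x ∈ P ⊓ C := ⟨⟨hx2, hCU hx1⟩, hx1⟩
      rwa [hPC] at this
    obtain ⟨W', hW'L, hTW', hWW'⟩ := ext_lagrangian W hW C hCiso hTW
    obtain ⟨g, hsym, hfix, hneg⟩ := sigma_exists hW hW'L hWW'
    have hmapU : U.map g.toLinearMap = U := by
      rw [← hPCsup, Submodule.map_sup,
        map_eq_of_fixed (fun x hx => hfix x (hPW hx)),
        map_eq_of_neg (fun x hx => hneg x (hTW' hx))]
    refine ⟨g, hsym, ?_, ?_⟩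
    · rw [← hW1eq, Submodule.map_sup, hmapU, map_span_singleton, hfix a haW, hW1eq]
    · rw [← hW2eq, Submodule.map_sup, hmapU, map_span_singleton, hfix b hbW, hW2eq]
lemma swap_case {W1 W2 W : Submodule ℝ (Fin (2 * m) → ℝ)} (hm : 2 ≤ m)
    (h1 : IsLagrangian m W1) (h2 : IsLagrangian m W2) (hW : IsLagrangian m W)
    (hU : finrank ℝ (W1 ⊓ W2 : Submodule ℝ (Fin (2 * m) → ℝ)) = m - 1)
    (hc1 : W ⊓ W1 ≤ W1 ⊓ W2) (hc2 : W ⊓ W2 ≤ W1 ⊓ W2) :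
    ∃ g : (Fin (2 * m) → ℝ) ≃ₗ[ℝ] (Fin (2 * m) → ℝ),
      LagSym m W g ∧ W1.map g.toLinearMap = W2 ∧ W2.map g.toLinearMap = W1 := by
  set U := W1 ⊓ W2 with hUdef
  have hUW1 : U ≤ W1 := inf_le_left
  have hUW2 : U ≤ W2 := inf_le_right
  set P := W ⊓ U with hPdef
  have hPU : P ≤ U := inf_le_right
  have hPW : P ≤ W := inf_le_left
  obtain ⟨C, hCU, hPC, hPCsup⟩ := exists_compl_within hPU
  have hWW1P : W ⊓ W1 = P := by
    apply le_antisymm (le_inf inf_le_left hc1) (le_inf hPW (le_trans hPU hUW1))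
  have hWW2P : W ⊓ W2 = P := by
    apply le_antisymm (le_inf inf_le_left hc2) (le_inf hPW (le_trans hPU hUW2))
  have hUneW1 : U < W1 := by
    apply lt_of_le_of_ne hUW1
    intro h
    rw [h, h1.1] at hU
    omega
  obtain ⟨v1, hv1W1, hv1U⟩ := SetLike.exists_of_lt hUneW1
  -- W1 ≤ W ⊔ W2
  have hle : W1 ≤ W ⊔ W2 := by
    rw [lag_sup_orth hW h2, hWW2P]
    have ho := LinearMap.BilinForm.orthogonal_le (B := Bm m) (le_trans hPU hUW1)
    rw [lag_orth_eq h1] at ho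
    exact ho
  obtain ⟨w, hw, v2, hv2W2, hsum⟩ := Submodule.mem_sup.mp (hle hv1W1)
  have hwmem : v1 - v2 ∈ W := by
    have : v1 - v2 = w := by rw [← hsum]; abel
    rw [this]; exact hw
  have hv2U : v2 ∉ U := by
    intro h
    have hd : v1 - v2 ∈ W ⊓ W1 := ⟨hwmem, W1.sub_mem hv1W1 (hUW1 h)⟩
    rw [hWW1P] at hd
    have : v1 = (v1 - v2) + v2 := by abel
    exact hv1U (this ▸ U.add_mem (hPU hd) h)
  have hW1eq : U ⊔ span ℝ {v1} = W1 := sup_span_eq hUW1 hv1W1 hv1U (by rw [hU, h1.1]; omega)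
  have hW2eq : U ⊔ span ℝ {v2} = W2 := sup_span_eq hUW2 hv2W2 hv2U (by rw [hU, h2.1]; omega)
  set z := v1 + v2 with hzdef
  have hCiso : C ≤ (Bm m).orthogonal C := by
    rw [isotropic_iff]
    intro x hx y hy
    exact h1.2 x (hUW1 (hCU hx)) y (hUW1 (hCU hy))
  have hzOC : z ∈ (Bm m).orthogonal C := by
    rw [mem_orth]
    intro y hy
    rw [hzdef, omega_add_right, h1.2 y (hUW1 (hCU hy)) v1 hv1W1,
      h2.2 y (hUW2 (hCU hy)) v2 hv2W2, add_zero]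
  have hTW : (C ⊔ span ℝ {z}) ⊓ W = ⊥ := by
    rw [Submodule.eq_bot_iff]
    rintro x ⟨hx1, hx2⟩
    rcases mem_sup_span.mp hx1 with ⟨cc, hcc, t, rfl⟩
    rcases eq_or_ne t 0 with rfl | ht
    · rw [zero_smul, add_zero] at hx2 ⊢
      have : cc ∈ P ⊓ C := ⟨⟨hx2, hCU hcc⟩, hcc⟩
      rwa [hPC] at this
    · exfalso
      have hy : cc + t • z + t • (v1 - v2) ∈ W :=
        W.add_mem hx2 (W.smul_mem t hwmem)
      have hyy : cc + t • z + t • (v1 - v2) = cc + (2 * t) • v1 := by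
        rw [hzdef]; module
      rw [hyy] at hy
      have hyW1 : cc + (2 * t) • v1 ∈ W1 := W1.add_mem (hUW1 (hCU hcc)) (W1.smul_mem _ hv1W1)
      have hyP : cc + (2 * t) • v1 ∈ P := by rw [← hWW1P]; exact ⟨hy, hyW1⟩
      exact hv1U (smul_trick (by simpa using ht : (2 : ℝ) * t ≠ 0) (hCU hcc) (hPU hyP))
  obtain ⟨W', hW'L, hTW', hWW'⟩ := ext_lagrangian W hW _ (isotr_sup_span hCiso hzOC) hTW
  obtain ⟨g, hsym, hfix, hneg⟩ := sigma_exists hW hW'L hWW'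
  have hzW' : z ∈ W' := hTW' (Submodule.mem_sup_right (Submodule.mem_span_singleton_self z))
  have hgz : g z = -z := hneg z hzW'
  have hgw : g (v1 - v2) = v1 - v2 := hfix _ hwmem
  have hgv1 : g v1 = -v2 := by
    have hv1e : v1 = (2⁻¹ : ℝ) • (v1 - v2) + (2⁻¹ : ℝ) • z := by rw [hzdef]; module
    rw [hv1e, map_add, map_smul, map_smul, hgw, hgz, hzdef]
    module
  have hgv2 : g v2 = -v1 := by
    have hv2e : v2 = (2⁻¹ : ℝ) • z + (-2⁻¹ : ℝ) • (v1 - v2) := by rw [hzdef]; module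
    rw [hv2e, map_add, map_smul, map_smul, hgw, hgz, hzdef]
    module
  have hmapU : U.map g.toLinearMap = U := by
    rw [← hPCsup, Submodule.map_sup,
      map_eq_of_fixed (fun x hx => hfix x (hPW hx)),
      map_eq_of_neg (fun x hx => hneg x (hTW' (Submodule.mem_sup_left hx)))]
  refine ⟨g, hsym, ?_, ?_⟩
  · rw [← hW1eq, Submodule.map_sup, hmapU, map_span_singleton, hgv1,
      span_singleton_neg, hW2eq]
  · rw [← hW2eq, Submodule.map_sup, hmapU, map_span_singleton, hgv2,
      span_singleton_neg, hW1eq]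
end Stmt1Aux

open Module Submodule Stmt1Aux in
theorem stmt1 (m : ℕ) (hm : 2 ≤ m)
    (W1 W2 : Submodule ℝ (Fin (2 * m) → ℝ))
    (h1 : IsLagrangian m W1) (h2 : IsLagrangian m W2) (hne : W1 ≠ W2) :
    (∀ W : Submodule ℝ (Fin (2 * m) → ℝ), IsLagrangian m W → W ≠ W1 → W ≠ W2 →
        ∃ g : (Fin (2 * m) → ℝ) ≃ₗ[ℝ] (Fin (2 * m) → ℝ), LagSym m W g ∧
          ((W1.map g.toLinearMap = W1 ∧ W2.map g.toLinearMap = W2) ∨ (W1.map g.toLinearMap = W2 ∧ W2.map g.toLinearMap = W1)))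
      ↔ Module.finrank ℝ ↥(W1 ⊓ W2) = m - 1 := by
  constructor
  · intro H
    by_contra hk
    have hnle : ¬(W1 ≤ W2) := by
      intro h
      exact hne (Submodule.eq_of_le_of_finrank_le h (by rw [h1.1, h2.1]))
    obtain ⟨a, haW1, haW2⟩ := SetLike.not_le_iff_exists.mp hnle
    have ha0 : a ≠ 0 := fun h => haW2 (h ▸ W2.zero_mem)
    have hklt : finrank ℝ (W1 ⊓ W2 : Submodule ℝ (Fin (2 * m) → ℝ)) < m := by
      have hne' : W1 ⊓ W2 ≠ W1 := by
        intro h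
        exact hnle (by rw [← h]; exact inf_le_right)
      have := Submodule.finrank_lt_finrank_of_lt
        (lt_of_le_of_ne (inf_le_left (a := W1) (b := W2)) hne')
      rwa [h1.1] at this
    have hk2 : finrank ℝ (W1 ⊓ W2 : Submodule ℝ (Fin (2 * m) → ℝ)) ≤ m - 2 := by omega
    obtain ⟨W, hWL, hWW1, hWW2⟩ := badW (by omega) h1 h2 haW1 haW2
    have hWne1 : W ≠ W1 := by
      intro h
      rw [h, inf_idem] at hWW1
      have he := h1.1
      rw [hWW1, finrank_span_singleton ha0] at he
      omega
    have hWne2 : W ≠ W2 := by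
      intro h
      rw [h, inf_idem] at hWW2
      have he := h2.1
      rw [hWW2, finrank_bot] at he
      omega
    obtain ⟨g, ⟨c, hc0, hgW, hgB⟩, hor⟩ := H W hWL hWne1 hWne2
    have haW : a ∈ W ⊓ W1 := by
      rw [hWW1]; exact Submodule.mem_span_singleton_self a
    rcases hor with ⟨hm1, hm2⟩ | ⟨hm1, hm2⟩
    · -- fixing case: impossible
      have step1 : ∀ x, g x + c • x ∈ W := by
        intro x
        rw [← lag_orth_eq hWL, mem_orth]
        intro w hwW
        have e1 := hgB w x
        rw [hgW w hwW, omega_smul_left] at e1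
        have e2 : Omega m w (g x) = -c * Omega m w x :=
          mul_left_cancel₀ hc0 (e1.trans (by ring))
        rw [omega_add_right, omega_smul_right, e2]
        ring
      have step2 : ∀ x, g (g x) = (c * c) • x := by
        intro x
        have h3 := hgW _ (step1 x)
        rw [map_add, map_smul, smul_add, smul_smul] at h3
        have h4 : g (g x) + c • g x = (c * c) • x + c • g x := by
          rw [h3]; abel
        exact add_right_cancel h4
      set σ : (Fin (2 * m) → ℝ) →ₗ[ℝ] (Fin (2 * m) → ℝ) := g.toLinearMap with hσ
      have hσa : ∀ x, σ x = g x := fun _ => rfl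
      set Kp := LinearMap.ker (σ - c • LinearMap.id) with hKp
      set Kn := LinearMap.ker (σ + c • LinearMap.id) with hKn
      have memKp : ∀ x, x ∈ Kp ↔ g x = c • x := by
        intro x
        rw [hKp, LinearMap.mem_ker, LinearMap.sub_apply, LinearMap.smul_apply,
          LinearMap.id_apply, sub_eq_zero, hσa]
      have memKn : ∀ x, x ∈ Kn ↔ g x = -(c • x) := by
        intro x
        rw [hKn, LinearMap.mem_ker, LinearMap.add_apply, LinearMap.smul_apply,
          LinearMap.id_apply, add_eq_zero_iff_eq_neg, hσa]
      have hWKp : W ≤ Kp := fun x hx => (memKp x).mpr (hgW x hx)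
      have hKpiso : Kp ≤ (Bm m).orthogonal Kp := by
        rw [isotropic_iff]
        intro x hx y hy
        have e1 := hgB x y
        rw [(memKp x).mp hx, (memKp y).mp hy, omega_smul_left, omega_smul_right] at e1
        have h2c : (2 * (c * c)) * Omega m x y = 0 := by linear_combination e1
        have : (2 : ℝ) * (c * c) ≠ 0 := by positivity
        exact (mul_eq_zero.mp h2c).resolve_left this
      have hKniso : Kn ≤ (Bm m).orthogonal Kn := by
        rw [isotropic_iff]
        intro x hx y hy
        have e1 := hgB x y
        rw [(memKn x).mp hx, (memKn y).mp hy] at e1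
        rw [show -(c • x) = (-c) • x by module, show -(c • y) = (-c) • y by module,
          omega_smul_left, omega_smul_right] at e1
        have h2c : (2 * (c * c)) * Omega m x y = 0 := by linear_combination e1
        have : (2 : ℝ) * (c * c) ≠ 0 := by positivity
        exact (mul_eq_zero.mp h2c).resolve_left this
      have hKpW : Kp = W := by
        symm
        apply Submodule.eq_of_le_of_finrank_le hWKp
        rw [hWL.1]
        exact finrank_le_of_isotropic hKpiso
      have h2c0 : (2 * c) ≠ 0 := by simpa using hc0
      have hdec : ∀ x, x = (2 * c)⁻¹ • (g x + c • x) + (2 * c)⁻¹ • (c • x - g x) := by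
        intro x
        have e : (2 * c)⁻¹ • (g x + c • x) + (2 * c)⁻¹ • (c • x - g x)
            = (2 * c)⁻¹ • ((2 * c) • x) := by module
        rw [e, smul_smul, inv_mul_cancel₀ h2c0, one_smul]
      have hplusK : ∀ x, (2 * c)⁻¹ • (g x + c • x) ∈ Kp := by
        intro x
        rw [memKp, map_smul, map_add, step2 x, map_smul]
        module
      have hminusK : ∀ x, (2 * c)⁻¹ • (c • x - g x) ∈ Kn := by
        intro x
        rw [memKn, map_smul, map_sub, step2 x, map_smul]
        module
      have hW2Kn : W2 ≤ Kn := by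
        intro x hx
        have hgxW2 : g x ∈ W2 := by
          rw [← hm2]; exact Submodule.mem_map_of_mem hx
        have hx1 : (2 * c)⁻¹ • (g x + c • x) ∈ W2 :=
          W2.smul_mem _ (W2.add_mem hgxW2 (W2.smul_mem c hx))
        have hx2 : (2 * c)⁻¹ • (g x + c • x) ∈ W ⊓ W2 := ⟨hKpW ▸ hplusK x, hx1⟩
        rw [hWW2] at hx2
        have := hdec x
        rw [hx2, zero_add] at this
        rw [this]
        exact hminusK x
      have hKnW2 : Kn = W2 := by
        symm
        apply Submodule.eq_of_le_of_finrank_le hW2Kn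
        rw [h2.1]
        exact finrank_le_of_isotropic hKniso
      have hW1le : W1 ≤ span ℝ {a} ⊔ (W1 ⊓ W2) := by
        intro x hx
        have hgxW1 : g x ∈ W1 := by
          rw [← hm1]; exact Submodule.mem_map_of_mem hx
        have hx1 : (2 * c)⁻¹ • (g x + c • x) ∈ W ⊓ W1 :=
          ⟨hKpW ▸ hplusK x, W1.smul_mem _ (W1.add_mem hgxW1 (W1.smul_mem c hx))⟩
        rw [hWW1] at hx1
        have hx2 : (2 * c)⁻¹ • (c • x - g x) ∈ W1 ⊓ W2 :=
          ⟨W1.smul_mem _ (W1.sub_mem (W1.smul_mem c hx) hgxW1),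
            hKnW2 ▸ hminusK x⟩
        rw [hdec x]
        exact Submodule.add_mem _ (Submodule.mem_sup_left hx1) (Submodule.mem_sup_right hx2)
      have hr1 : m ≤ finrank ℝ (span ℝ {a} ⊔ (W1 ⊓ W2) : Submodule ℝ (Fin (2 * m) → ℝ)) := by
        have := Submodule.finrank_mono hW1le
        rwa [h1.1] at this
      have hr2 := Submodule.finrank_sup_add_finrank_inf_eq (span ℝ {a}) (W1 ⊓ W2)
      rw [finrank_span_singleton ha0] at hr2
      omega
    · -- swapping case: impossible
      have hga : g a ∈ W2 := by
        rw [← hm1]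
        exact Submodule.mem_map_of_mem haW.2
      rw [hgW a haW.1] at hga
      exact haW2 (by simpa [smul_smul, inv_mul_cancel₀ hc0] using W2.smul_mem c⁻¹ hga)
  · intro hk W hWL hne1 hne2
    by_cases hc1 : W ⊓ W1 ≤ W1 ⊓ W2
    · by_cases hc2 : W ⊓ W2 ≤ W1 ⊓ W2
      · obtain ⟨g, hs, hswap1, hswap2⟩ := swap_case hm h1 h2 hWL hk hc1 hc2
        exact ⟨g, hs, Or.inr ⟨hswap1, hswap2⟩⟩
      · have hc2' : ¬(W ⊓ W2 ≤ W2 ⊓ W1) := by rwa [inf_comm W2 W1]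
        have hk' : finrank ℝ (W2 ⊓ W1 : Submodule ℝ (Fin (2 * m) → ℝ)) = m - 1 := by
          rwa [inf_comm W2 W1]
        obtain ⟨g, hs, hfix2, hfix1⟩ := fix_case hm h2 h1 hWL hk' hc2'
        exact ⟨g, hs, Or.inl ⟨hfix1, hfix2⟩⟩
    · obtain ⟨g, hs, hfix1, hfix2⟩ := fix_case hm h1 h2 hWL hk hc1
      exact ⟨g, hs, Or.inl ⟨hfix1, hfix2⟩⟩
end

section
/- Let m ≥ 2 and let W1, W2 be Lagrangian subspaces of ℝ^{2m} (with the standard symplectic form Ω) such that dim(W1 ∩ W2) = m − 1. For a Lagrangian subspace W ∉ {W1, W2}, there exists a Lagrangian symmetry g at W with g(W1) = W1 and g(W2) = W2 if and only if W ∩ (W1 + W2) ⊆ W1 or W ∩ (W1 + W2) ⊆ W2. -/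
open Module Submodule

namespace StmtAux

variable {m : ℕ}

lemma Omega_add_left (x x' y : Fin (2 * m) → ℝ) :
    Omega m (x + x') y = Omega m x y + Omega m x' y := by
  unfold Omega
  rw [← Finset.sum_add_distrib]
  refine Finset.sum_congr rfl fun i _ => ?_
  simp only [Pi.add_apply]; ring

lemma Omega_smul_left (c : ℝ) (x y : Fin (2 * m) → ℝ) :
    Omega m (c • x) y = c * Omega m x y := by
  unfold Omega
  rw [Finset.mul_sum]
  refine Finset.sum_congr rfl fun i _ => ?_
  simp only [Pi.smul_apply, smul_eq_mul]; ring

lemma Omega_add_right (x y y' : Fin (2 * m) → ℝ) :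
    Omega m x (y + y') = Omega m x y + Omega m x y' := by
  unfold Omega
  rw [← Finset.sum_add_distrib]
  refine Finset.sum_congr rfl fun i _ => ?_
  simp only [Pi.add_apply]; ring

lemma Omega_smul_right (c : ℝ) (x y : Fin (2 * m) → ℝ) :
    Omega m x (c • y) = c * Omega m x y := by
  unfold Omega
  rw [Finset.mul_sum]
  refine Finset.sum_congr rfl fun i _ => ?_
  simp only [Pi.smul_apply, smul_eq_mul]; ring

lemma Omega_skew (x y : Fin (2 * m) → ℝ) : Omega m x y = -Omega m y x := by
  unfold Omega
  rw [← Finset.sum_neg_distrib]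
  refine Finset.sum_congr rfl fun i _ => ?_
  ring

lemma Omega_self (x : Fin (2 * m) → ℝ) : Omega m x x = 0 := by
  have := Omega_skew x x; linarith

lemma Omega_neg_left (x y : Fin (2 * m) → ℝ) : Omega m (-x) y = -Omega m x y := by
  have := Omega_smul_left (-1) x y; simpa using this

lemma Omega_sub_left (x x' y : Fin (2 * m) → ℝ) :
    Omega m (x - x') y = Omega m x y - Omega m x' y := by
  rw [sub_eq_add_neg, Omega_add_left, Omega_neg_left]; ring

/-- `Omega` as a bilinear form. -/
noncomputable def OmB (m : ℕ) : LinearMap.BilinForm ℝ (Fin (2 * m) → ℝ) :=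
  LinearMap.mk₂ ℝ (Omega m) Omega_add_left Omega_smul_left Omega_add_right Omega_smul_right

@[simp] lemma OmB_apply (x y : Fin (2 * m) → ℝ) : OmB m x y = Omega m x y := rfl

lemma OmB_refl : (OmB m).IsRefl := by
  intro x y h
  simp only [OmB_apply] at *
  rw [Omega_skew]; simpa using h

lemma Omega_single_hi (x : Fin (2 * m) → ℝ) (j : Fin m) :
    Omega m x (Pi.single (⟨m + j.1, by have := j.2; omega⟩ : Fin (2 * m)) 1) =
      x ⟨j.1, by have := j.2; omega⟩ := by
  have hjm := j.2
  unfold Omega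
  rw [Finset.sum_eq_single j]
  · simp only [Pi.single_apply, Fin.mk.injEq]
    rw [if_pos trivial, if_neg (by omega)]; ring
  · intro i _ hij
    have hi2 := i.2
    have hvne : i.1 ≠ j.1 := fun h => hij (Fin.ext h)
    simp only [Pi.single_apply, Fin.mk.injEq]
    rw [if_neg (by omega), if_neg (by omega)]; ring
  · intro h; exact absurd (Finset.mem_univ j) h

lemma Omega_single_lo (x : Fin (2 * m) → ℝ) (j : Fin m) :
    Omega m x (Pi.single (⟨j.1, by have := j.2; omega⟩ : Fin (2 * m)) 1) =
      -x ⟨m + j.1, by have := j.2; omega⟩ := by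
  have hjm := j.2
  unfold Omega
  rw [Finset.sum_eq_single j]
  · simp only [Pi.single_apply, Fin.mk.injEq]
    rw [if_neg (by omega), if_pos trivial]; ring
  · intro i _ hij
    have hi2 := i.2
    have hvne : i.1 ≠ j.1 := fun h => hij (Fin.ext h)
    simp only [Pi.single_apply, Fin.mk.injEq]
    rw [if_neg (by omega), if_neg (by omega)]; ring
  · intro h; exact absurd (Finset.mem_univ j) h

lemma OmB_nondeg : (OmB m).Nondegenerate := by
  refine (LinearMap.IsRefl.nondegenerate_iff_separatingLeft OmB_refl).2 ?_
  intro x hx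
  have hx' : ∀ n, Omega m x n = 0 := fun n => hx n
  funext j
  show x j = 0
  rcases lt_or_ge j.1 m with hj | hj
  · have := Omega_single_hi x ⟨j.1, hj⟩
    rw [hx'] at this
    exact this.symm
  · have hj2 := j.2
    have := Omega_single_lo x ⟨j.1 - m, by omega⟩
    rw [hx'] at this
    have hjj : (⟨m + (j.1 - m), by omega⟩ : Fin (2 * m)) = j := Fin.ext (by simp; omega)
    rw [hjj] at this
    linarith

/-- symplectic orthogonal complement -/
noncomputable def perp (m : ℕ) (S : Submodule ℝ (Fin (2 * m) → ℝ)) :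
    Submodule ℝ (Fin (2 * m) → ℝ) := (OmB m).orthogonal S

lemma mem_perp {S : Submodule ℝ (Fin (2 * m) → ℝ)} {x : Fin (2 * m) → ℝ} :
    x ∈ perp m S ↔ ∀ n ∈ S, Omega m n x = 0 := Iff.rfl

lemma finrank_total : finrank ℝ (Fin (2 * m) → ℝ) = 2 * m := Module.finrank_fin_fun ℝ

lemma finrank_sub_le (S : Submodule ℝ (Fin (2 * m) → ℝ)) : finrank ℝ S ≤ 2 * m := by
  have h := S.finrank_le
  rwa [finrank_total] at h

lemma finrank_perp (S : Submodule ℝ (Fin (2 * m) → ℝ)) :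
    finrank ℝ (perp m S) = 2 * m - finrank ℝ S := by
  rw [perp, LinearMap.BilinForm.finrank_orthogonal OmB_nondeg, finrank_total]

lemma perp_perp (S : Submodule ℝ (Fin (2 * m) → ℝ)) : perp m (perp m S) = S :=
  LinearMap.BilinForm.orthogonal_orthogonal OmB_nondeg OmB_refl S

lemma perp_le_perp {S T : Submodule ℝ (Fin (2 * m) → ℝ)} (h : S ≤ T) :
    perp m T ≤ perp m S := LinearMap.BilinForm.orthogonal_le h

lemma perp_sup (S T : Submodule ℝ (Fin (2 * m) → ℝ)) :
    perp m (S ⊔ T) = perp m S ⊓ perp m T := by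
  refine le_antisymm (le_inf (perp_le_perp le_sup_left) (perp_le_perp le_sup_right)) ?_
  rintro x ⟨hxS, hxT⟩ n hn
  obtain ⟨a, ha, b, hb, rfl⟩ := Submodule.mem_sup.1 hn
  show Omega m (a + b) x = 0
  rw [Omega_add_left, show Omega m a x = 0 from hxS a ha,
    show Omega m b x = 0 from hxT b hb, add_zero]

lemma lagr_perp {L : Submodule ℝ (Fin (2 * m) → ℝ)} (hL : IsLagrangian m L) :
    perp m L = L := by
  have hle : L ≤ perp m L := fun x hx n hn => hL.2 n hn x hx
  have : finrank ℝ (perp m L) = finrank ℝ L := by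
    rw [finrank_perp, hL.1]; omega
  exact (Submodule.eq_of_le_of_finrank_eq hle this.symm).symm

lemma mem_sup_span {p : Submodule ℝ (Fin (2 * m) → ℝ)} {v y : Fin (2 * m) → ℝ}
    (hy : y ∈ p ⊔ (ℝ ∙ v)) : ∃ s ∈ p, ∃ t : ℝ, y = s + t • v := by
  obtain ⟨s, hs, w, hw, rfl⟩ := Submodule.mem_sup.1 hy
  obtain ⟨t, rfl⟩ := Submodule.mem_span_singleton.1 hw
  exact ⟨s, hs, t, rfl⟩

lemma inf_span_bot {p : Submodule ℝ (Fin (2 * m) → ℝ)} {v : Fin (2 * m) → ℝ}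
    (hv : v ∉ p) : p ⊓ (ℝ ∙ v) = ⊥ := by
  rw [eq_bot_iff]
  rintro y ⟨hyp, hys⟩
  obtain ⟨t, rfl⟩ := Submodule.mem_span_singleton.1 hys
  rcases eq_or_ne t 0 with rfl | ht
  · simp
  · exact absurd (by simpa [smul_smul, inv_mul_cancel₀ ht] using p.smul_mem t⁻¹ hyp) hv

lemma finrank_sup_span {p : Submodule ℝ (Fin (2 * m) → ℝ)} {v : Fin (2 * m) → ℝ}
    (hv : v ∉ p) : finrank ℝ (p ⊔ (ℝ ∙ v) : Submodule ℝ (Fin (2 * m) → ℝ)) = finrank ℝ p + 1 := by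
  have h0 : v ≠ 0 := fun h => hv (h ▸ p.zero_mem)
  have := Submodule.finrank_sup_add_finrank_inf_eq p (ℝ ∙ v)
  rw [inf_span_bot hv, finrank_bot, finrank_span_singleton h0] at this
  omega

lemma exists_compl_within {p q : Submodule ℝ (Fin (2 * m) → ℝ)} (h : p ≤ q) :
    ∃ r : Submodule ℝ (Fin (2 * m) → ℝ), r ≤ q ∧ p ⊔ r = q ∧ p ⊓ r = ⊥ := by
  obtain ⟨r', hr'⟩ := Submodule.exists_isCompl (p.comap q.subtype)
  refine ⟨r'.map q.subtype, Submodule.map_subtype_le q r', ?_, ?_⟩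
  · have := congrArg (Submodule.map q.subtype) hr'.sup_eq_top
    rwa [Submodule.map_sup, Submodule.map_comap_subtype, inf_eq_right.2 h,
      Submodule.map_subtype_top] at this
  · have hinj : Function.Injective q.subtype := Subtype.coe_injective
    have := congrArg (Submodule.map q.subtype) hr'.inf_eq_bot
    rwa [Submodule.map_inf _ hinj, Submodule.map_comap_subtype, inf_eq_right.2 h,
      Submodule.map_bot] at this

/-- Extend an isotropic subspace transverse to a Lagrangian `W` to a Lagrangian
subspace transverse to `W`. -/
lemma ext_lagr {W : Submodule ℝ (Fin (2 * m) → ℝ)} (hW : IsLagrangian m W) :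
    ∀ k (S : Submodule ℝ (Fin (2 * m) → ℝ)),
      (∀ x ∈ S, ∀ y ∈ S, Omega m x y = 0) → S ⊓ W = ⊥ → finrank ℝ S + k = m →
      ∃ W', IsLagrangian m W' ∧ S ≤ W' ∧ W' ⊓ W = ⊥ := by
  intro k
  induction k with
  | zero =>
    intro S hiso hdisj hfr
    exact ⟨S, ⟨by omega, hiso⟩, le_rfl, hdisj⟩
  | succ k ih =>
    intro S hiso hdisj hfr
    have hSle : S ≤ perp m S := fun x hx n hn => hiso n hn x hx
    -- find v ∈ perp S, v ∉ S ⊔ W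
    have hnle : ¬ (perp m S ≤ S ⊔ W) := by
      intro hle
      have h1 : perp m S ⊓ W ≤ S := by
        have := perp_le_perp hle
        rw [perp_sup, lagr_perp hW, perp_perp] at this
        exact this
      have h2 : perp m S ⊓ W = ⊥ := by
        rw [eq_bot_iff]
        intro y hy
        have : y ∈ S ⊓ W := ⟨h1 hy, hy.2⟩
        rwa [hdisj] at this
      have h3 := Submodule.finrank_sup_add_finrank_inf_eq (perp m S) W
      rw [h2, finrank_bot, finrank_perp, hW.1] at h3
      have h4 := finrank_sub_le (perp m S ⊔ W)
      have h5 := finrank_sub_le S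
      omega
    obtain ⟨v, hvperp, hvnot⟩ := SetLike.not_le_iff_exists.1 hnle
    have hvS : v ∉ S := fun h => hvnot (Submodule.mem_sup_left h)
    have hiso' : ∀ x ∈ S ⊔ (ℝ ∙ v), ∀ y ∈ S ⊔ (ℝ ∙ v), Omega m x y = 0 := by
      intro x hx y hy
      obtain ⟨sx, hsx, t, rfl⟩ := mem_sup_span hx
      obtain ⟨sy, hsy, r, rfl⟩ := mem_sup_span hy
      rw [Omega_add_left, Omega_add_right, Omega_add_right, Omega_smul_left,
        Omega_smul_right, Omega_smul_right, Omega_smul_left]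
      have h1 : Omega m sx sy = 0 := hiso sx hsx sy hsy
      have h2 : Omega m sx v = 0 := hvperp sx hsx
      have h3 : Omega m sy v = 0 := hvperp sy hsy
      have h4 : Omega m v sy = 0 := by rw [Omega_skew, h3, neg_zero]
      have h5 : Omega m v v = 0 := Omega_self v
      rw [h1, h2, h4, h5]; ring
    have hdisj' : (S ⊔ (ℝ ∙ v)) ⊓ W = ⊥ := by
      rw [eq_bot_iff]
      rintro y ⟨hyS, hyW⟩
      obtain ⟨s, hs, t, rfl⟩ := mem_sup_span hyS
      rcases eq_or_ne t 0 with rfl | ht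
      · have : s ∈ S ⊓ W := ⟨hs, by simpa using hyW⟩
        rw [hdisj] at this; simpa using this
      · exfalso
        apply hvnot
        have h1 : t • v = (s + t • v) - s := by abel
        have h2 : t • v ∈ S ⊔ W :=
          h1 ▸ sub_mem (Submodule.mem_sup_right hyW) (Submodule.mem_sup_left hs)
        have := (S ⊔ W).smul_mem t⁻¹ h2
        rwa [smul_smul, inv_mul_cancel₀ ht, one_smul] at this
    have hfr' : finrank ℝ (S ⊔ (ℝ ∙ v) : Submodule ℝ (Fin (2 * m) → ℝ)) + k = m := by
      rw [finrank_sup_span hvS]; omega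
    obtain ⟨W', hW', hle', hdisj''⟩ := ih (S ⊔ (ℝ ∙ v)) hiso' hdisj' hfr'
    exact ⟨W', hW', le_trans le_sup_left hle', hdisj''⟩

lemma Omega_neg_right (x y : Fin (2 * m) → ℝ) : Omega m x (-y) = -Omega m x y := by
  have := Omega_smul_right (-1) x y; simpa using this

lemma Omega_sub_right (x y y' : Fin (2 * m) → ℝ) :
    Omega m x (y - y') = Omega m x y - Omega m x y' := by
  rw [sub_eq_add_neg, Omega_add_right, Omega_neg_right]; ring

lemma decomp {W W' : Submodule ℝ (Fin (2 * m) → ℝ)} (hc : IsCompl W W')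
    (x : Fin (2 * m) → ℝ) : ∃ w ∈ W, ∃ w' ∈ W', x = w + w' := by
  have hx : x ∈ W ⊔ W' := by rw [hc.codisjoint.eq_top]; trivial
  obtain ⟨w, hw, w', hw', rfl⟩ := Submodule.mem_sup.1 hx
  exact ⟨w, hw, w', hw', rfl⟩

/-- The reflection with `+1`-eigenspace `W` and `−1`-eigenspace `W'`. -/
lemma exists_refl {W W' : Submodule ℝ (Fin (2 * m) → ℝ)} (hc : IsCompl W W') :
    ∃ g : (Fin (2 * m) → ℝ) ≃ₗ[ℝ] (Fin (2 * m) → ℝ),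
      (∀ w ∈ W, g w = w) ∧ (∀ w ∈ W', g w = -w) := by
  set f : (Fin (2 * m) → ℝ) →ₗ[ℝ] (Fin (2 * m) → ℝ) :=
    W.subtype.comp (W.linearProjOfIsCompl W' hc) -
      W'.subtype.comp (W'.linearProjOfIsCompl W hc.symm) with hf
  have hfW : ∀ w ∈ W, f w = w := by
    intro w hw
    have e1 : W.linearProjOfIsCompl W' hc w = ⟨w, hw⟩ :=
      Submodule.linearProjOfIsCompl_apply_left hc ⟨w, hw⟩
    have e2 : W'.linearProjOfIsCompl W hc.symm w = 0 :=
      Submodule.projectionOnto_apply_of_mem_right hc.symm hw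
    simp [hf, e1, e2]
  have hfW' : ∀ w ∈ W', f w = -w := by
    intro w hw
    have e1 : W.linearProjOfIsCompl W' hc w = 0 :=
      Submodule.projectionOnto_apply_of_mem_right hc hw
    have e2 : W'.linearProjOfIsCompl W hc.symm w = ⟨w, hw⟩ :=
      Submodule.linearProjOfIsCompl_apply_left hc.symm ⟨w, hw⟩
    simp [hf, e1, e2]
  have hinv : ∀ x, f (f x) = x := by
    intro x
    obtain ⟨w, hw, w', hw', rfl⟩ := decomp hc x
    rw [map_add, hfW w hw, hfW' w' hw', map_add, hfW w hw, map_neg, hfW' w' hw']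
    abel
  refine ⟨LinearEquiv.ofLinear f f (LinearMap.ext hinv) (LinearMap.ext hinv), ?_, ?_⟩
  · intro w hw; rw [LinearEquiv.ofLinear_apply]; exact hfW w hw
  · intro w hw; rw [LinearEquiv.ofLinear_apply]; exact hfW' w hw

lemma map_eq_self_of_fix (g : (Fin (2 * m) → ℝ) ≃ₗ[ℝ] (Fin (2 * m) → ℝ))
    (p : Submodule ℝ (Fin (2 * m) → ℝ)) (h : ∀ x ∈ p, g x = x) :
    p.map g.toLinearMap = p := by
  refine le_antisymm ?_ ?_
  · rintro y ⟨x, hx, rfl⟩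
    show g x ∈ p
    rw [h x hx]; exact hx
  · intro x hx
    exact ⟨x, hx, h x hx⟩

lemma map_eq_self_of_neg (g : (Fin (2 * m) → ℝ) ≃ₗ[ℝ] (Fin (2 * m) → ℝ))
    (p : Submodule ℝ (Fin (2 * m) → ℝ)) (h : ∀ x ∈ p, g x = -x) :
    p.map g.toLinearMap = p := by
  refine le_antisymm ?_ ?_
  · rintro y ⟨x, hx, rfl⟩
    show g x ∈ p
    rw [h x hx]; exact p.neg_mem hx
  · intro x hx
    refine ⟨-x, p.neg_mem hx, ?_⟩
    show g (-x) = x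
    rw [map_neg, h x hx, neg_neg]

/-- Reverse implication: construction of a Lagrangian symmetry. -/
lemma reverse (m : ℕ) (hm : 2 ≤ m)
    (W1 W2 : Submodule ℝ (Fin (2 * m) → ℝ))
    (h1 : IsLagrangian m W1) (h2 : IsLagrangian m W2)
    (hint : Module.finrank ℝ ↥(W1 ⊓ W2) = m - 1)
    (W : Submodule ℝ (Fin (2 * m) → ℝ)) (hW : IsLagrangian m W)
    (hsub : W ⊓ (W1 ⊔ W2) ≤ W1) :
    ∃ g : (Fin (2 * m) → ℝ) ≃ₗ[ℝ] (Fin (2 * m) → ℝ), LagSym m W g ∧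
      W1.map g.toLinearMap = W1 ∧ W2.map g.toLinearMap = W2 := by
  have hUle1 : W1 ⊓ W2 ≤ W1 := inf_le_left
  have hpW1 : perp m W1 = W1 := lagr_perp h1
  have hpW2 : perp m W2 = W2 := lagr_perp h2
  have hpW : perp m W = W := lagr_perp hW
  have hpV : perp m (W1 ⊔ W2) = W1 ⊓ W2 := by rw [perp_sup, hpW1, hpW2]
  have hpU : perp m (W1 ⊓ W2) = W1 ⊔ W2 := by rw [← hpV, perp_perp]
  -- the intersection W ⊓ (W1 ⊔ W2) is not contained in W1 ⊓ W2
  have key : ¬ (W ⊓ (W1 ⊔ W2) ≤ W1 ⊓ W2) := by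
    intro hc
    have hWU_eq : W ⊓ (W1 ⊓ W2) = W ⊓ (W1 ⊔ W2) :=
      le_antisymm (inf_le_inf_left _ (le_trans inf_le_left le_sup_left))
        (le_inf inf_le_left hc)
    have e1 : perp m (W ⊔ (W1 ⊓ W2)) = W ⊓ (W1 ⊔ W2) := by
      rw [perp_sup, hpW, hpU]
    have e2 : perp m (W ⊔ (W1 ⊔ W2)) = W ⊓ (W1 ⊓ W2) := by
      rw [perp_sup, hpW, hpV]
    have f1 := finrank_perp (W ⊔ (W1 ⊓ W2)); rw [e1] at f1
    have f2 := finrank_perp (W ⊔ (W1 ⊔ W2)); rw [e2] at f2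
    have f3 : finrank ℝ ↥(W ⊓ (W1 ⊓ W2)) = finrank ℝ ↥(W ⊓ (W1 ⊔ W2)) := by rw [hWU_eq]
    have b1 := finrank_sub_le (W ⊔ (W1 ⊓ W2))
    have b2 := finrank_sub_le (W ⊔ (W1 ⊔ W2))
    have heq : W ⊔ (W1 ⊓ W2) = W ⊔ (W1 ⊔ W2) :=
      Submodule.eq_of_le_of_finrank_le
        (sup_le_sup_left (le_trans inf_le_left le_sup_left) W) (by omega)
    have hW1netU : ¬ (W1 ≤ W1 ⊓ W2) := by
      intro hle
      have : W1 = W1 ⊓ W2 := le_antisymm hle inf_le_left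
      have hfr : finrank ℝ ↥W1 = m - 1 := by rw [this, hint]
      rw [h1.1] at hfr; omega
    obtain ⟨x1, hx1W1, hx1U⟩ := SetLike.not_le_iff_exists.1 hW1netU
    have hx1V : x1 ∈ W ⊔ (W1 ⊓ W2) := by
      rw [heq]
      exact Submodule.mem_sup_right (Submodule.mem_sup_left hx1W1)
    obtain ⟨w, hw, u, hu, hxwu⟩ := Submodule.mem_sup.1 hx1V
    have hwW1 : w ∈ W1 := by
      have he : w = x1 - u := by rw [← hxwu]; abel
      rw [he]; exact sub_mem hx1W1 (hUle1 hu)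
    have hwU : w ∈ W1 ⊓ W2 := hc ⟨hw, Submodule.mem_sup_left hwW1⟩
    exact hx1U (hxwu ▸ add_mem hwU hu)
  -- notation
  have hAV : W ⊓ (W1 ⊔ W2) = W ⊓ W1 :=
    le_antisymm (le_inf inf_le_left hsub) (inf_le_inf_left _ le_sup_left)
  have hA_not : ¬ (W ⊓ W1 ≤ W1 ⊓ W2) := by rw [← hAV]; exact key
  have hBA : W ⊓ (W1 ⊓ W2) ≤ W ⊓ W1 := inf_le_inf_left _ inf_le_left
  have hBAne : W ⊓ (W1 ⊓ W2) ≠ W ⊓ W1 := by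
    intro h
    exact hA_not (h ▸ inf_le_right)
  have hba : finrank ℝ ↥(W ⊓ (W1 ⊓ W2)) < finrank ℝ ↥(W ⊓ W1) :=
    Submodule.finrank_lt_finrank_of_lt (lt_of_le_of_ne hBA hBAne)
  have hABU : (W ⊓ W1) ⊓ (W1 ⊓ W2) = W ⊓ (W1 ⊓ W2) := by
    refine le_antisymm (le_inf (le_trans inf_le_left inf_le_left) inf_le_right) ?_
    exact le_inf (le_inf inf_le_left (le_trans inf_le_right inf_le_left)) inf_le_right
  have hab : finrank ℝ ↥(W ⊓ W1) ≤ finrank ℝ ↥(W ⊓ (W1 ⊓ W2)) + 1 := by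
    have hs := Submodule.finrank_sup_add_finrank_inf_eq (W ⊓ W1) (W1 ⊓ W2)
    rw [hABU, hint] at hs
    have hle : (W ⊓ W1) ⊔ (W1 ⊓ W2) ≤ W1 := sup_le inf_le_right inf_le_left
    have hfr := Submodule.finrank_mono (t := W1) hle
    rw [h1.1] at hfr
    omega
  -- a = b + 1
  have haeq : finrank ℝ ↥(W ⊓ W1) = finrank ℝ ↥(W ⊓ (W1 ⊓ W2)) + 1 := by omega
  -- complement D of B inside U
  obtain ⟨D, hDU, hsupD, hinfD⟩ :=
    exists_compl_within (show W ⊓ (W1 ⊓ W2) ≤ W1 ⊓ W2 from inf_le_right)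
  have hfrD : m - 1 = finrank ℝ ↥(W ⊓ (W1 ⊓ W2)) + finrank ℝ ↥D := by
    have hs := Submodule.finrank_sup_add_finrank_inf_eq (W ⊓ (W1 ⊓ W2)) D
    rw [hsupD, hinfD, hint, finrank_bot] at hs
    omega
  -- x2 ∈ W2 \ U
  have hW2netU : ¬ (W2 ≤ W1 ⊓ W2) := by
    intro hle
    have : W2 = W1 ⊓ W2 := le_antisymm hle inf_le_right
    have hfr : finrank ℝ ↥W2 = m - 1 := by rw [this, hint]
    rw [h2.1] at hfr; omega
  obtain ⟨x2, hx2W2, hx2U⟩ := SetLike.not_le_iff_exists.1 hW2netU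
  -- the isotropic subspace S
  have hSW2 : D ⊔ (ℝ ∙ x2) ≤ W2 :=
    sup_le (le_trans hDU inf_le_right) ((Submodule.span_singleton_le_iff_mem x2 W2).2 hx2W2)
  have hSiso : ∀ x ∈ D ⊔ (ℝ ∙ x2), ∀ y ∈ D ⊔ (ℝ ∙ x2), Omega m x y = 0 :=
    fun x hx y hy => h2.2 x (hSW2 hx) y (hSW2 hy)
  have hSW : (D ⊔ (ℝ ∙ x2)) ⊓ W = ⊥ := by
    rw [eq_bot_iff]
    rintro y ⟨hyS, hyW⟩
    have hyW2 : y ∈ W2 := hSW2 hyS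
    have hyU : y ∈ W1 ⊓ W2 :=
      ⟨hsub ⟨hyW, Submodule.mem_sup_right hyW2⟩, hyW2⟩
    obtain ⟨d, hd, t, rfl⟩ := mem_sup_span hyS
    rcases eq_or_ne t 0 with rfl | ht
    · have hdB : d ∈ (W ⊓ (W1 ⊓ W2)) ⊓ D := by
        refine ⟨⟨by simpa using hyW, by simpa using hyU⟩, hd⟩
      rw [hinfD] at hdB
      simpa using hdB
    · exfalso
      apply hx2U
      have h1' : t • x2 = (d + t • x2) - d := by abel
      have h2' : t • x2 ∈ W1 ⊓ W2 := h1' ▸ sub_mem hyU (hDU hd)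
      have := (W1 ⊓ W2).smul_mem t⁻¹ h2'
      rwa [smul_smul, inv_mul_cancel₀ ht, one_smul] at this
  have hx2D : x2 ∉ D := fun h => hx2U (hDU h)
  have hfrS : finrank ℝ ↥(D ⊔ (ℝ ∙ x2)) + finrank ℝ ↥(W ⊓ (W1 ⊓ W2)) = m := by
    rw [finrank_sup_span hx2D]; omega
  -- extend to a Lagrangian complement W' of W
  obtain ⟨W', hW', hSle, hW'W⟩ :=
    ext_lagr hW (finrank ℝ ↥(W ⊓ (W1 ⊓ W2))) (D ⊔ (ℝ ∙ x2)) hSiso hSW hfrS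
  have hWW' : W ⊓ W' = ⊥ := by rw [inf_comm]; exact hW'W
  have hcompl : IsCompl W W' := by
    constructor
    · rw [disjoint_iff]; exact hWW'
    · rw [codisjoint_iff]
      apply Submodule.eq_top_of_finrank_eq
      have hs := Submodule.finrank_sup_add_finrank_inf_eq W W'
      rw [hWW', finrank_bot, hW.1, hW'.1] at hs
      rw [finrank_total]
      omega
  -- the two splittings
  have hDE1 : D ≤ W1 ⊓ W' := le_inf (le_trans hDU inf_le_left) (le_trans le_sup_left hSle)
  have hfrE1 : finrank ℝ ↥D ≤ finrank ℝ ↥(W1 ⊓ W') := Submodule.finrank_mono hDE1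
  have hAE1 : (W ⊓ W1) ⊓ (W1 ⊓ W') = ⊥ := by
    rw [eq_bot_iff]
    rintro y ⟨hyA, hyE⟩
    have : y ∈ W ⊓ W' := ⟨hyA.1, hyE.2⟩
    rwa [hWW'] at this
  have hs1 : (W ⊓ W1) ⊔ (W1 ⊓ W') = W1 := by
    refine Submodule.eq_of_le_of_finrank_le (sup_le inf_le_right inf_le_left) ?_
    have hs := Submodule.finrank_sup_add_finrank_inf_eq (W ⊓ W1) (W1 ⊓ W')
    rw [hAE1, finrank_bot] at hs
    rw [h1.1]
    omega
  have hSE2 : D ⊔ (ℝ ∙ x2) ≤ W2 ⊓ W' := le_inf hSW2 hSle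
  have hfrE2 : finrank ℝ ↥(D ⊔ (ℝ ∙ x2)) ≤ finrank ℝ ↥(W2 ⊓ W') := Submodule.finrank_mono hSE2
  have hBE2 : (W ⊓ (W1 ⊓ W2)) ⊓ (W2 ⊓ W') = ⊥ := by
    rw [eq_bot_iff]
    rintro y ⟨hyB, hyE⟩
    have : y ∈ W ⊓ W' := ⟨hyB.1, hyE.2⟩
    rwa [hWW'] at this
  have hs2 : (W ⊓ (W1 ⊓ W2)) ⊔ (W2 ⊓ W') = W2 := by
    refine Submodule.eq_of_le_of_finrank_le
      (sup_le (le_trans inf_le_right inf_le_right) inf_le_left) ?_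
    have hs := Submodule.finrank_sup_add_finrank_inf_eq (W ⊓ (W1 ⊓ W2)) (W2 ⊓ W')
    rw [hBE2, finrank_bot] at hs
    rw [h2.1]
    omega
  -- construct g
  obtain ⟨g, hgW, hgW'⟩ := exists_refl hcompl
  refine ⟨g, ⟨1, one_ne_zero, fun w hw => by rw [hgW w hw, one_smul], ?_⟩, ?_, ?_⟩
  · intro x y
    obtain ⟨w, hw, w', hw', rfl⟩ := decomp hcompl x
    obtain ⟨v, hv, v', hv', rfl⟩ := decomp hcompl y
    have hgx : g (w + w') = w - w' := by
      rw [map_add, hgW w hw, hgW' w' hw']; abel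
    have hgy : g (v + v') = v - v' := by
      rw [map_add, hgW v hv, hgW' v' hv']; abel
    rw [hgx, hgy, Omega_sub_left, Omega_sub_right, Omega_sub_right,
      Omega_add_left, Omega_add_right, Omega_add_right,
      hW.2 w hw v hv, hW'.2 w' hw' v' hv']
    ring
  · rw [← hs1, Submodule.map_sup,
      map_eq_self_of_fix g (W ⊓ W1) (fun x hx => hgW x hx.1),
      map_eq_self_of_neg g (W1 ⊓ W') (fun x hx => hgW' x hx.2)]
  · rw [← hs2, Submodule.map_sup,
      map_eq_self_of_fix g (W ⊓ (W1 ⊓ W2)) (fun x hx => hgW x hx.1),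
      map_eq_self_of_neg g (W2 ⊓ W') (fun x hx => hgW' x hx.2)]

/-- Forward implication. -/
lemma forward (m : ℕ) (hm : 2 ≤ m)
    (W1 W2 : Submodule ℝ (Fin (2 * m) → ℝ))
    (h1 : IsLagrangian m W1) (h2 : IsLagrangian m W2)
    (hint : Module.finrank ℝ ↥(W1 ⊓ W2) = m - 1)
    (W : Submodule ℝ (Fin (2 * m) → ℝ)) (hW : IsLagrangian m W)
    (g : (Fin (2 * m) → ℝ) ≃ₗ[ℝ] (Fin (2 * m) → ℝ)) (hLS : LagSym m W g)
    (hg1 : W1.map g.toLinearMap = W1) (hg2 : W2.map g.toLinearMap = W2) :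
    W ⊓ (W1 ⊔ W2) ≤ W1 ∨ W ⊓ (W1 ⊔ W2) ≤ W2 := by
  by_contra hcon
  push_neg at hcon
  obtain ⟨hn1, hn2⟩ := hcon
  obtain ⟨x, hxWV, hxW1⟩ := SetLike.not_le_iff_exists.1 hn1
  obtain ⟨y, hyWV, hyW2⟩ := SetLike.not_le_iff_exists.1 hn2
  obtain ⟨z, hzWV, hzW1, hzW2⟩ :
      ∃ z, z ∈ W ⊓ (W1 ⊔ W2) ∧ z ∉ W1 ∧ z ∉ W2 := by
    by_cases hxW2 : x ∈ W2
    · by_cases hyW1 : y ∈ W1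
      · refine ⟨x + y, add_mem hxWV hyWV, ?_, ?_⟩
        · intro h
          exact hxW1 (by simpa using sub_mem h hyW1)
        · intro h
          exact hyW2 (by simpa using sub_mem h hxW2)
      · exact ⟨y, hyWV, hyW1, hyW2⟩
    · exact ⟨x, hxWV, hxW1, hxW2⟩
  obtain ⟨hzW, hzV⟩ := hzWV
  obtain ⟨z1, hz1, z2, hz2, hzeq⟩ := Submodule.mem_sup.1 hzV
  have hz1W2 : z1 ∉ W2 := fun h => hzW2 (hzeq ▸ add_mem h hz2)
  have hz2W1 : z2 ∉ W1 := fun h => hzW1 (hzeq ▸ add_mem hz1 h)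
  have hz2U : z2 ∉ W1 ⊓ W2 := fun h => hz2W1 h.1
  obtain ⟨c, hc, hcW, hcO⟩ := hLS
  have hgz1W1 : g z1 ∈ W1 := by
    have h' : g z1 ∈ W1.map g.toLinearMap := Submodule.mem_map_of_mem (f := g.toLinearMap) hz1
    rwa [hg1] at h'
  have hgz2W2 : g z2 ∈ W2 := by
    have h' : g z2 ∈ W2.map g.toLinearMap := Submodule.mem_map_of_mem (f := g.toLinearMap) hz2
    rwa [hg2] at h'
  have hsum : g z1 + g z2 = c • z1 + c • z2 := by
    have h' := hcW z hzW
    rw [← hzeq, map_add, smul_add] at h'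
    exact h'
  have hukey : g z1 - c • z1 = c • z2 - g z2 := by
    rw [sub_eq_sub_iff_add_eq_add]
    rw [hsum]; abel
  have huW1 : g z1 - c • z1 ∈ W1 := sub_mem hgz1W1 (W1.smul_mem c hz1)
  have huW2 : g z1 - c • z1 ∈ W2 := by
    rw [hukey]; exact sub_mem (W2.smul_mem c hz2) hgz2W2
  obtain ⟨u, hudef, huW1', huW2'⟩ : ∃ u, u = g z1 - c • z1 ∧ u ∈ W1 ∧ u ∈ W2 :=
    ⟨_, rfl, huW1, huW2⟩
  have hOz1u : Omega m z1 u = 0 := h1.2 z1 hz1 u huW1'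
  have hOuz2 : Omega m u z2 = 0 := h2.2 u huW2' z2 hz2
  have hgz1 : g z1 = c • z1 + u := by rw [hudef]; abel
  have hgz2 : g z2 = c • z2 - u := by rw [hudef, hukey]; abel
  have hcal := hcO z1 z2
  rw [hgz1, hgz2] at hcal
  rw [Omega_add_left, Omega_sub_right, Omega_sub_right, Omega_smul_left, Omega_smul_left,
    Omega_smul_right, Omega_smul_right, hOz1u, hOuz2, Omega_self] at hcal
  have hO12 : Omega m z1 z2 = 0 := by
    have hmul : (Omega m z1 z2) * (2 * c ^ 2) = 0 := by linear_combination hcal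
    rcases mul_eq_zero.1 hmul with h | h
    · exact h
    · exact absurd h (mul_ne_zero two_ne_zero (pow_ne_zero 2 hc))
  -- W2 = (W1 ⊓ W2) ⊔ span z2
  have hW2eq : (W1 ⊓ W2) ⊔ (ℝ ∙ z2) = W2 := by
    refine Submodule.eq_of_le_of_finrank_le
      (sup_le inf_le_right ((Submodule.span_singleton_le_iff_mem z2 W2).2 hz2)) ?_
    rw [finrank_sup_span hz2U, hint, h2.1]
    omega
  have hz1perp : z1 ∈ perp m W2 := by
    rw [mem_perp]
    intro n hn
    rw [← hW2eq] at hn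
    obtain ⟨u', hu', t, rfl⟩ := mem_sup_span hn
    rw [Omega_add_left, Omega_smul_left]
    have e1 : Omega m u' z1 = 0 := h1.2 u' hu'.1 z1 hz1
    have e2 : Omega m z2 z1 = 0 := by rw [Omega_skew, hO12, neg_zero]
    rw [e1, e2]; ring
  rw [lagr_perp h2] at hz1perp
  exact hz1W2 hz1perp

end StmtAux

theorem stmt3 (m : ℕ) (hm : 2 ≤ m)
    (W1 W2 : Submodule ℝ (Fin (2 * m) → ℝ))
    (h1 : IsLagrangian m W1) (h2 : IsLagrangian m W2)
    (hint : Module.finrank ℝ ↥(W1 ⊓ W2) = m - 1)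
    (W : Submodule ℝ (Fin (2 * m) → ℝ)) (hW : IsLagrangian m W)
    (hne1 : W ≠ W1) (hne2 : W ≠ W2) :
    (∃ g : (Fin (2 * m) → ℝ) ≃ₗ[ℝ] (Fin (2 * m) → ℝ), LagSym m W g ∧
        W1.map g.toLinearMap = W1 ∧ W2.map g.toLinearMap = W2)
      ↔ (W ⊓ (W1 ⊔ W2) ≤ W1 ∨ W ⊓ (W1 ⊔ W2) ≤ W2) := by
  constructor
  · rintro ⟨g, hg, hg1, hg2⟩
    exact StmtAux.forward m hm W1 W2 h1 h2 hint W hW g hg hg1 hg2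
  · rintro (h | h)
    · exact StmtAux.reverse m hm W1 W2 h1 h2 hint W hW h
    · have hint' : Module.finrank ℝ ↥(W2 ⊓ W1) = m - 1 := by rwa [inf_comm]
      have h' : W ⊓ (W2 ⊔ W1) ≤ W2 := by rwa [sup_comm]
      obtain ⟨g, hg, hg2, hg1⟩ := StmtAux.reverse m hm W2 W1 h2 h1 hint' W hW h'
      exact ⟨g, hg, hg1, hg2⟩
end

section
/- Let m ≥ 2 and let W1, W2 be Lagrangian subspaces of ℝ^{2m} (with the standard symplectic form Ω) such that dim(W1 ∩ W2) = m − 1. If W is a Lagrangian subspace with W ∉ {W1, W2} such that W ∩ (W1 + W2) is contained neither in W1 nor in W2, then there exists a Lagrangian symmetry g at W with g(W1) = W2 and g(W2) = W1. -/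
lemma Omega_add_left (m : ℕ) (x x' y : Fin (2*m) → ℝ) :
    Omega m (x + x') y = Omega m x y + Omega m x' y := by
  simp only [Omega, Pi.add_apply, ← Finset.sum_add_distrib]
  exact Finset.sum_congr rfl fun i _ => by ring

lemma Omega_add_right (m : ℕ) (x y y' : Fin (2*m) → ℝ) :
    Omega m x (y + y') = Omega m x y + Omega m x y' := by
  simp only [Omega, Pi.add_apply, ← Finset.sum_add_distrib]
  exact Finset.sum_congr rfl fun i _ => by ring

lemma Omega_smul_left (m : ℕ) (c : ℝ) (x y : Fin (2*m) → ℝ) :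
    Omega m (c • x) y = c * Omega m x y := by
  simp only [Omega, Pi.smul_apply, smul_eq_mul, Finset.mul_sum]
  exact Finset.sum_congr rfl fun i _ => by ring

lemma Omega_smul_right (m : ℕ) (c : ℝ) (x y : Fin (2*m) → ℝ) :
    Omega m x (c • y) = c * Omega m x y := by
  simp only [Omega, Pi.smul_apply, smul_eq_mul, Finset.mul_sum]
  exact Finset.sum_congr rfl fun i _ => by ring

lemma Omega_self (m : ℕ) (x : Fin (2*m) → ℝ) : Omega m x x = 0 := by
  simp only [Omega]
  exact Finset.sum_eq_zero fun i _ => by ring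

lemma Omega_swap (m : ℕ) (x y : Fin (2*m) → ℝ) : Omega m x y = - Omega m y x := by
  simp only [Omega, ← Finset.sum_neg_distrib]
  exact Finset.sum_congr rfl fun i _ => by ring

noncomputable def Bf (m : ℕ) : LinearMap.BilinForm ℝ (Fin (2*m) → ℝ) :=
  LinearMap.mk₂ ℝ (Omega m) (Omega_add_left m) (fun c x y => Omega_smul_left m c x y)
    (Omega_add_right m) (fun c x y => Omega_smul_right m c x y)

@[simp] lemma Bf_apply (m : ℕ) (x y : Fin (2*m) → ℝ) : Bf m x y = Omega m x y := rfl

lemma Bf_alt (m : ℕ) : (Bf m).IsAlt := fun x => Omega_self m x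

lemma Bf_refl (m : ℕ) : (Bf m).IsRefl := (Bf_alt m).isRefl

-- the standard complex structure, for nondegeneracy
def Jmap (m : ℕ) (x : Fin (2*m) → ℝ) : Fin (2*m) → ℝ := fun k =>
  if h : (k : ℕ) < m then - x ⟨m + k, by omega⟩ else x ⟨(k : ℕ) - m, by have := k.2; omega⟩

lemma Omega_J (m : ℕ) (x : Fin (2*m) → ℝ) :
    Omega m x (Jmap m x) = ∑ i : Fin m,
      (x ⟨i.1, by have := i.2; omega⟩ ^ 2 + x ⟨m + i.1, by have := i.2; omega⟩ ^ 2) := by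
  unfold Omega
  refine Finset.sum_congr rfl fun i _ => ?_
  have hi := i.2
  rw [Jmap, Jmap]
  rw [dif_neg (by simp), dif_pos (by simpa using hi)]
  have e : (⟨(⟨m + i.1, by have := i.2; omega⟩ : Fin (2*m)).1 - m, by have := i.2; omega⟩ : Fin (2*m)) = ⟨i.1, by have := i.2; omega⟩ := by
    ext; simp
  rw [e]
  ring

lemma Bf_nondeg (m : ℕ) : (Bf m).Nondegenerate := by
  refine (Bf_refl m).nondegenerate_iff_separatingLeft.mpr ?_
  intro x hx
  have h0 : Omega m x (Jmap m x) = 0 := hx _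
  rw [Omega_J] at h0
  have hz := (Finset.sum_eq_zero_iff_of_nonneg (fun i _ => by positivity)).mp h0
  funext k
  have hk := k.2
  by_cases h : (k : ℕ) < m
  · have hh := hz ⟨k, h⟩ (Finset.mem_univ _)
    simp only [Pi.zero_apply]
    have h1 : x ⟨(k:ℕ), by omega⟩ = 0 := by nlinarith [sq_nonneg (x ⟨(k:ℕ), by omega⟩), sq_nonneg (x ⟨m + (k:ℕ), by omega⟩)]
    have : (⟨(k:ℕ), by omega⟩ : Fin (2*m)) = k := by ext; simp
    rwa [this] at h1
  · have hlt : (k : ℕ) - m < m := by omega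
    have hh := hz ⟨(k:ℕ) - m, hlt⟩ (Finset.mem_univ _)
    simp only [Pi.zero_apply]
    have h2 : x ⟨m + ((k:ℕ) - m), by omega⟩ = 0 := by nlinarith [sq_nonneg (x ⟨(k:ℕ) - m, by omega⟩), sq_nonneg (x ⟨m + ((k:ℕ)-m), by omega⟩)]
    have : (⟨m + ((k:ℕ) - m), by omega⟩ : Fin (2*m)) = k := by ext; simp; omega
    rwa [this] at h2

lemma finrank_V (m : ℕ) : Module.finrank ℝ (Fin (2*m) → ℝ) = 2*m :=
  Module.finrank_fin_fun ℝ

lemma finrank_orth (m : ℕ) (P : Submodule ℝ (Fin (2*m) → ℝ)) :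
    Module.finrank ℝ ((Bf m).orthogonal P) = 2*m - Module.finrank ℝ P := by
  rw [LinearMap.BilinForm.finrank_orthogonal (Bf_nondeg m), finrank_V]

lemma orth_sup (m : ℕ) (P Q : Submodule ℝ (Fin (2*m) → ℝ)) :
    (Bf m).orthogonal (P ⊔ Q) = (Bf m).orthogonal P ⊓ (Bf m).orthogonal Q := by
  apply le_antisymm
  · exact le_inf (fun x hx => LinearMap.BilinForm.mem_orthogonal_iff.mpr
      (fun n hn => LinearMap.BilinForm.mem_orthogonal_iff.mp hx n (Submodule.mem_sup_left hn)))
      (fun x hx => LinearMap.BilinForm.mem_orthogonal_iff.mpr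
      (fun n hn => LinearMap.BilinForm.mem_orthogonal_iff.mp hx n (Submodule.mem_sup_right hn)))
  · intro x hx
    rw [LinearMap.BilinForm.mem_orthogonal_iff]
    intro n hn
    obtain ⟨p, hp, q, hq, rfl⟩ := Submodule.mem_sup.mp hn
    have h1 := LinearMap.BilinForm.mem_orthogonal_iff.mp hx.1 p hp
    have h2 := LinearMap.BilinForm.mem_orthogonal_iff.mp hx.2 q hq
    rw [map_add, LinearMap.add_apply, h1, h2, add_zero]

lemma lagr_orth (m : ℕ) {W : Submodule ℝ (Fin (2*m) → ℝ)} (hW : IsLagrangian m W) :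
    (Bf m).orthogonal W = W := by
  symm
  apply Submodule.eq_of_le_of_finrank_le
  · intro w hw
    rw [LinearMap.BilinForm.mem_orthogonal_iff]
    exact fun n hn => hW.2 n hn w hw
  · rw [finrank_orth, hW.1]
    omega

lemma isotropic_finrank_le (m : ℕ) {T : Submodule ℝ (Fin (2*m) → ℝ)}
    (hT : ∀ x ∈ T, ∀ y ∈ T, Omega m x y = 0) : Module.finrank ℝ T ≤ m := by
  have hle : T ≤ (Bf m).orthogonal T := fun x hx =>
    LinearMap.BilinForm.mem_orthogonal_iff.mpr (fun n hn => hT n hn x hx)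
  have := Submodule.finrank_mono hle
  rw [finrank_orth] at this
  have ht := Submodule.finrank_le T
  rw [finrank_V] at ht
  omega

/-- Witt-style extension: an isotropic subspace transverse to a Lagrangian `W`
extends to a Lagrangian transverse to `W`. -/
lemma extend_isotropic (m : ℕ) {W : Submodule ℝ (Fin (2*m) → ℝ)} (hW : IsLagrangian m W) :
    ∀ (k : ℕ) (T : Submodule ℝ (Fin (2*m) → ℝ)), m - Module.finrank ℝ T = k →
      (∀ x ∈ T, ∀ y ∈ T, Omega m x y = 0) → T ⊓ W = ⊥ →
      ∃ Λ : Submodule ℝ (Fin (2*m) → ℝ), IsLagrangian m Λ ∧ T ≤ Λ ∧ Λ ⊓ W = ⊥ := by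
  intro k
  induction k with
  | zero =>
    intro T hk hT hTW
    have h1 : Module.finrank ℝ T ≤ m := isotropic_finrank_le m hT
    have h2 : Module.finrank ℝ T = m := by omega
    exact ⟨T, ⟨h2, hT⟩, le_rfl, hTW⟩
  | succ k ih =>
    intro T hk hT hTW
    have hTm : Module.finrank ℝ T < m := by omega
    set O := (Bf m).orthogonal T with hO
    set N := W ⊓ O with hN
    have hTO : T ≤ O := fun x hx =>
      LinearMap.BilinForm.mem_orthogonal_iff.mpr (fun n hn => hT n hn x hx)
    have hNO : N ≤ O := inf_le_right
    have hNfr : Module.finrank ℝ N = m - Module.finrank ℝ T := by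
      have : N = (Bf m).orthogonal (W ⊔ T) := by
        rw [orth_sup, lagr_orth m hW, hN, hO]
      rw [this, finrank_orth]
      have hsup : Module.finrank ℝ (W ⊔ T : Submodule ℝ (Fin (2*m) → ℝ))
          = m + Module.finrank ℝ T := by
        have := Submodule.finrank_sup_add_finrank_inf_eq W T
        rw [inf_comm, hTW] at this
        rw [finrank_bot ℝ (Fin (2*m) → ℝ), add_zero] at this
        rw [this, hW.1]
      rw [hsup]
      omega
    have hlt : (T ⊔ N) < O := by
      apply lt_of_le_of_ne (sup_le hTO hNO)
      intro heq
      have h1 : Module.finrank ℝ (T ⊔ N : Submodule ℝ (Fin (2*m) → ℝ))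
          ≤ Module.finrank ℝ T + Module.finrank ℝ N := by
        have := Submodule.finrank_sup_add_finrank_inf_eq T N
        omega
      rw [heq, finrank_orth] at h1
      omega
    obtain ⟨x, hxO, hxTN⟩ := SetLike.exists_of_lt hlt
    have hxT : x ∉ T := fun h => hxTN (Submodule.mem_sup_left h)
    have hx0 : x ≠ 0 := fun h => hxT (h ▸ T.zero_mem)
    set T' := T ⊔ Submodule.span ℝ {x} with hT'
    -- T' is isotropic
    have hT'iso : ∀ z ∈ T', ∀ z' ∈ T', Omega m z z' = 0 := by
      intro z hz z' hz'
      obtain ⟨t, ht, s, hs, rfl⟩ := Submodule.mem_sup.mp hz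
      obtain ⟨t', ht', s', hs', rfl⟩ := Submodule.mem_sup.mp hz'
      obtain ⟨c, rfl⟩ := Submodule.mem_span_singleton.mp hs
      obtain ⟨c', rfl⟩ := Submodule.mem_span_singleton.mp hs'
      have hxt : ∀ u ∈ T, Omega m u x = 0 := fun u hu =>
        LinearMap.BilinForm.mem_orthogonal_iff.mp hxO u hu
      have h1 : Omega m t t' = 0 := hT t ht t' ht'
      have h2 : Omega m t x = 0 := hxt t ht
      have h3 : Omega m x t' = 0 := by
        rw [Omega_swap, hxt t' ht', neg_zero]
      simp only [Omega_add_left, Omega_add_right, Omega_smul_left, Omega_smul_right,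
        h1, h2, h3, Omega_self m x]
      ring
    -- T' ⊓ W = ⊥
    have hT'W : T' ⊓ W = ⊥ := by
      rw [eq_bot_iff]
      rintro z ⟨hzT', hzW⟩
      obtain ⟨t, ht, s, hs, rfl⟩ := Submodule.mem_sup.mp hzT'
      obtain ⟨c, rfl⟩ := Submodule.mem_span_singleton.mp hs
      by_cases hc : c = 0
      · subst hc
        simp only [zero_smul, add_zero] at *
        have : t ∈ T ⊓ W := ⟨ht, hzW⟩
        rw [hTW] at this
        exact this
      · exfalso
        apply hxTN
        have hzO : t + c • x ∈ O := by
          exact O.add_mem (hTO ht) (O.smul_mem c hxO)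
        have hzN : t + c • x ∈ N := ⟨hzW, hzO⟩
        have : x = c⁻¹ • ((t + c • x) - t) := by
          rw [add_sub_cancel_left, smul_smul, inv_mul_cancel₀ hc, one_smul]
        rw [this]
        exact (T ⊔ N).smul_mem _ ((T ⊔ N).sub_mem
          (Submodule.mem_sup_right hzN) (Submodule.mem_sup_left ht))
    have hfr' : Module.finrank ℝ T' = Module.finrank ℝ T + 1 := by
      have hbot : T ⊓ Submodule.span ℝ {x} = ⊥ := by
        rw [eq_bot_iff]
        rintro z ⟨hzT, hzS⟩
        obtain ⟨c, rfl⟩ := Submodule.mem_span_singleton.mp hzS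
        by_cases hc : c = 0
        · simp [hc]
        · exfalso
          apply hxT
          have : x = c⁻¹ • (c • x) := by rw [smul_smul, inv_mul_cancel₀ hc, one_smul]
          rw [this]
          exact T.smul_mem _ hzT
      have := Submodule.finrank_sup_add_finrank_inf_eq T (Submodule.span ℝ {x})
      rw [hbot, finrank_bot ℝ (Fin (2*m) → ℝ), add_zero, finrank_span_singleton hx0] at this
      rw [hT', this]
    have := ih T' (by omega) hT'iso hT'W
    obtain ⟨Λ, hΛ, hTΛ, hΛW⟩ := this
    exact ⟨Λ, hΛ, le_trans le_sup_left hTΛ, hΛW⟩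

lemma Omega_sub_left (m : ℕ) (x y z : Fin (2*m) → ℝ) :
    Omega m (x - y) z = Omega m x z - Omega m y z := by
  rw [sub_eq_add_neg, Omega_add_left, ← neg_one_smul ℝ y, Omega_smul_left]; ring

lemma Omega_sub_right (m : ℕ) (x y z : Fin (2*m) → ℝ) :
    Omega m x (y - z) = Omega m x y - Omega m x z := by
  rw [sub_eq_add_neg, Omega_add_right, ← neg_one_smul ℝ z, Omega_smul_right]; ring

lemma sup_span_eq (m : ℕ) (hm : 1 ≤ m) {U W1 : Submodule ℝ (Fin (2*m) → ℝ)}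
    {a : Fin (2*m) → ℝ} (hUW : U ≤ W1) (hU : Module.finrank ℝ U = m - 1)
    (hW1 : Module.finrank ℝ W1 = m) (ha : a ∈ W1) (haU : a ∉ U) :
    U ⊔ Submodule.span ℝ {a} = W1 := by
  have ha0 : a ≠ 0 := fun h => haU (h ▸ U.zero_mem)
  have hbot : U ⊓ Submodule.span ℝ {a} = ⊥ := by
    rw [eq_bot_iff]
    rintro z ⟨hzU, hzS⟩
    obtain ⟨c, rfl⟩ := Submodule.mem_span_singleton.mp hzS
    by_cases hc : c = 0
    · simp [hc]
    · exfalso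
      apply haU
      have : a = c⁻¹ • (c • a) := by rw [smul_smul, inv_mul_cancel₀ hc, one_smul]
      rw [this]
      exact U.smul_mem _ hzU
  apply Submodule.eq_of_le_of_finrank_le
  · exact sup_le hUW ((Submodule.span_singleton_le_iff_mem a W1).mpr ha)
  · have := Submodule.finrank_sup_add_finrank_inf_eq U (Submodule.span ℝ {a})
    rw [hbot, finrank_bot ℝ (Fin (2*m) → ℝ), add_zero, finrank_span_singleton ha0, hU] at this
    rw [hW1, this]
    omega

theorem stmt5 (m : ℕ) (hm : 2 ≤ m)
    (W1 W2 : Submodule ℝ (Fin (2 * m) → ℝ))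
    (h1 : IsLagrangian m W1) (h2 : IsLagrangian m W2)
    (hint : Module.finrank ℝ ↥(W1 ⊓ W2) = m - 1)
    (W : Submodule ℝ (Fin (2 * m) → ℝ)) (hW : IsLagrangian m W)
    (hne1 : W ≠ W1) (hne2 : W ≠ W2)
    (hnc1 : ¬ W ⊓ (W1 ⊔ W2) ≤ W1) (hnc2 : ¬ W ⊓ (W1 ⊔ W2) ≤ W2) :
    ∃ g : (Fin (2 * m) → ℝ) ≃ₗ[ℝ] (Fin (2 * m) → ℝ), LagSym m W g ∧
      W1.map (g : (Fin (2 * m) → ℝ) →ₗ[ℝ] (Fin (2 * m) → ℝ)) = W2 ∧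
      W2.map (g : (Fin (2 * m) → ℝ) →ₗ[ℝ] (Fin (2 * m) → ℝ)) = W1 := by
  set U := W1 ⊓ W2 with hUdef
  -- find v ∈ W ⊓ (W1 ⊔ W2), v ∉ W1, v ∉ W2
  obtain ⟨x, hx, hx1⟩ := SetLike.not_le_iff_exists.mp hnc1
  obtain ⟨y, hy, hy2⟩ := SetLike.not_le_iff_exists.mp hnc2
  obtain ⟨v, hv, hv1, hv2⟩ :
      ∃ v, v ∈ W ⊓ (W1 ⊔ W2) ∧ v ∉ W1 ∧ v ∉ W2 := by
    by_cases hx2 : x ∈ W2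
    · by_cases hy1 : y ∈ W1
      · refine ⟨x + y, Submodule.add_mem _ hx hy, fun h => hx1 ?_, fun h => hy2 ?_⟩
        · have : x = (x + y) - y := by ring_nf
          rw [this]; exact Submodule.sub_mem _ h hy1
        · have : y = (x + y) - x := by ring_nf
          rw [this]; exact Submodule.sub_mem _ h hx2
      · exact ⟨y, hy, hy1, hy2⟩
    · exact ⟨x, hx, hx1, hx2⟩
  have hvW : v ∈ W := hv.1
  obtain ⟨a, ha1, b, hb2, hvab⟩ := Submodule.mem_sup.mp hv.2
  -- basic position facts
  have hbW1 : b ∉ W1 := fun h => hv1 (hvab ▸ Submodule.add_mem _ ha1 h)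
  have haW2 : a ∉ W2 := fun h => hv2 (hvab ▸ Submodule.add_mem _ h hb2)
  have haU : a ∉ U := fun h => haW2 h.2
  have hbU : b ∉ U := fun h => hbW1 h.1
  have hW1eq : U ⊔ Submodule.span ℝ {a} = W1 :=
    sup_span_eq m (by omega) inf_le_left hint h1.1 ha1 haU
  have hW2eq : U ⊔ Submodule.span ℝ {b} = W2 :=
    sup_span_eq m (by omega) inf_le_right hint h2.1 hb2 hbU
  have hab : Omega m a b ≠ 0 := by
    intro h0
    apply hbW1
    rw [← lagr_orth m h1]
    rw [LinearMap.BilinForm.mem_orthogonal_iff]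
    intro z hz
    rw [← hW1eq] at hz
    obtain ⟨u, hu, s, hs, rfl⟩ := Submodule.mem_sup.mp hz
    obtain ⟨c, rfl⟩ := Submodule.mem_span_singleton.mp hs
    show Omega m (u + c • a) b = 0
    rw [Omega_add_left, Omega_smul_left, h0, h2.2 u hu.2 b hb2]
    ring
  -- complement S of U ⊓ W inside U
  obtain ⟨S₀, hS₀⟩ := Submodule.exists_isCompl (W.comap U.subtype)
  set S := S₀.map U.subtype with hSdef
  have hSU : S ≤ U := Submodule.map_subtype_le U S₀
  have hKS : (U ⊓ W) ⊓ S = ⊥ := by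
    rw [eq_bot_iff]
    rintro z ⟨⟨hzU, hzW⟩, hzS⟩
    obtain ⟨s₀, hs₀, rfl⟩ := Submodule.mem_map.mp hzS
    have h1' : s₀ ∈ W.comap U.subtype := hzW
    have : s₀ ∈ (W.comap U.subtype) ⊓ S₀ := ⟨h1', hs₀⟩
    rw [hS₀.inf_eq_bot] at this
    have h0 : s₀ = 0 := by simpa using this
    simp [h0]
  have hKSsup : (U ⊓ W) ⊔ S = U := by
    have h2' : Submodule.map U.subtype (Submodule.comap U.subtype W) = U ⊓ W :=
      Submodule.map_comap_subtype U W
    calc (U ⊓ W) ⊔ S = Submodule.map U.subtype (Submodule.comap U.subtype W ⊔ S₀) := by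
          rw [Submodule.map_sup, h2']
      _ = U := by rw [hS₀.sup_eq_top, Submodule.map_top, Submodule.range_subtype]
  -- T := span {a - b} ⊔ S is isotropic, transverse to W
  set T := Submodule.span ℝ {a - b} ⊔ S with hTdef
  have hsU_omega : ∀ s ∈ U, Omega m (a - b) s = 0 ∧ Omega m s (a - b) = 0 := by
    intro s hs
    have e1 : Omega m a s = 0 := h1.2 a ha1 s hs.1
    have e2 : Omega m b s = 0 := h2.2 b hb2 s hs.2
    constructor
    · rw [Omega_sub_left, e1, e2]; ring
    · rw [Omega_swap, Omega_sub_left, e1, e2]; ring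
  have hTiso : ∀ z ∈ T, ∀ z' ∈ T, Omega m z z' = 0 := by
    intro z hz z' hz'
    obtain ⟨p, hp, s, hs, rfl⟩ := Submodule.mem_sup.mp hz
    obtain ⟨p', hp', s', hs', rfl⟩ := Submodule.mem_sup.mp hz'
    obtain ⟨c, rfl⟩ := Submodule.mem_span_singleton.mp hp
    obtain ⟨c', rfl⟩ := Submodule.mem_span_singleton.mp hp'
    have e1 : Omega m s s' = 0 := h1.2 s (hSU hs).1 s' (hSU hs').1
    have e2 : Omega m (a - b) s' = 0 := (hsU_omega s' (hSU hs')).1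
    have e3 : Omega m s (a - b) = 0 := (hsU_omega s (hSU hs)).2
    simp only [Omega_add_left, Omega_add_right, Omega_smul_left, Omega_smul_right,
      e1, e2, e3, Omega_self m (a - b)]
    ring
  have hTW : T ⊓ W = ⊥ := by
    rw [eq_bot_iff]
    rintro z ⟨hzT, hzW⟩
    obtain ⟨p, hp, s, hs, rfl⟩ := Submodule.mem_sup.mp hzT
    obtain ⟨c, rfl⟩ := Submodule.mem_span_singleton.mp hp
    have hzv : Omega m (c • (a - b) + s) v = 0 := hW.2 _ hzW v hvW
    have e1 : Omega m s v = 0 := by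
      rw [← hvab, Omega_add_right, h1.2 s (hSU hs).1 a ha1, h2.2 s (hSU hs).2 b hb2]
      ring
    have e2 : Omega m (a - b) v = 2 * Omega m a b := by
      rw [← hvab, Omega_sub_left, Omega_add_right, Omega_add_right,
        Omega_self, Omega_self, Omega_swap m b a]
      ring
    rw [Omega_add_left, Omega_smul_left, e1, e2] at hzv
    have hc : c = 0 := by
      rcases mul_eq_zero.mp (by linarith only [hzv] : c * (2 * Omega m a b) = 0) with h | h
      · exact h
      · exact absurd (by linarith only [h] : Omega m a b = 0) hab
    subst hc
    rw [zero_smul, zero_add] at hzW ⊢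
    have : s ∈ (U ⊓ W) ⊓ S := ⟨⟨hSU hs, hzW⟩, hs⟩
    rw [hKS] at this
    exact this
  -- extend T to a Lagrangian Λ transverse to W
  obtain ⟨Λ, hΛ, hTΛ, hΛW⟩ :=
    extend_isotropic m hW (m - Module.finrank ℝ ↥T) T rfl hTiso hTW
  have hcompl : IsCompl W Λ := by
    constructor
    · rw [disjoint_iff, inf_comm, hΛW]
    · rw [codisjoint_iff]
      apply Submodule.eq_top_of_finrank_eq
      have := Submodule.finrank_sup_add_finrank_inf_eq W Λ
      rw [inf_comm, hΛW, finrank_bot ℝ (Fin (2*m) → ℝ), add_zero, hW.1, hΛ.1] at this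
      rw [this, finrank_V]; ring
  -- the involution: identity on W, minus identity on Λ
  set f : (Fin (2*m) → ℝ) →ₗ[ℝ] (Fin (2*m) → ℝ) :=
    W.subtype ∘ₗ (W.linearProjOfIsCompl Λ hcompl) - Λ.subtype ∘ₗ (Λ.linearProjOfIsCompl W hcompl.symm)
    with hfdef
  have hfapply : ∀ z, f z = ↑(W.linearProjOfIsCompl Λ hcompl z) - ↑(Λ.linearProjOfIsCompl W hcompl.symm z) := by
    intro z; rfl
  have hfW : ∀ w ∈ W, f w = w := by
    intro w hw
    rw [hfapply]
    erw [Submodule.linearProjOfIsCompl_apply_left hcompl ⟨w, hw⟩,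
      Submodule.linearProjOfIsCompl_apply_right hcompl.symm ⟨w, hw⟩]
    simp
  have hfΛ : ∀ l ∈ Λ, f l = -l := by
    intro l hl
    rw [hfapply]
    erw [Submodule.linearProjOfIsCompl_apply_right hcompl ⟨l, hl⟩,
      Submodule.linearProjOfIsCompl_apply_left hcompl.symm ⟨l, hl⟩]
    simp
  have hdecomp : ∀ z, ((W.linearProjOfIsCompl Λ hcompl z : Fin (2*m) → ℝ)) + ((Λ.linearProjOfIsCompl W hcompl.symm z : Fin (2*m) → ℝ)) = z :=
    fun z => Submodule.projection_add_projection_eq_self hcompl z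
  have hff : ∀ z, f (f z) = z := by
    intro z
    set w := W.linearProjOfIsCompl Λ hcompl z
    set l := Λ.linearProjOfIsCompl W hcompl.symm z
    rw [hfapply z, map_sub, hfW _ w.2, hfΛ _ l.2, sub_neg_eq_add, hdecomp z]
  have hffc : f ∘ₗ f = LinearMap.id := LinearMap.ext fun z => hff z
  set g : (Fin (2 * m) → ℝ) ≃ₗ[ℝ] (Fin (2 * m) → ℝ) := LinearEquiv.ofLinear f f hffc hffc with hgdef
  have hgapply : ∀ z, g z = f z := fun z => rfl
  -- anti-symplectic property
  have hkey : ∀ z z', Omega m (f z) (f z') = - Omega m z z' := by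
    intro z z'
    set w := W.linearProjOfIsCompl Λ hcompl z
    set l := Λ.linearProjOfIsCompl W hcompl.symm z
    set w' := W.linearProjOfIsCompl Λ hcompl z'
    set l' := Λ.linearProjOfIsCompl W hcompl.symm z'
    have e1 : Omega m ↑w ↑w' = 0 := hW.2 _ w.2 _ w'.2
    have e2 : Omega m (↑l : Fin (2*m) → ℝ) ↑l' = 0 := hΛ.2 _ l.2 _ l'.2
    calc Omega m (f z) (f z')
        = Omega m ((↑w : Fin (2*m) → ℝ) - ↑l) ((↑w' : Fin (2*m) → ℝ) - ↑l') := by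
          rw [hfapply z, hfapply z']
      _ = - Omega m ((↑w : Fin (2*m) → ℝ) + ↑l) ((↑w' : Fin (2*m) → ℝ) + ↑l') := by
          simp only [Omega_sub_left, Omega_sub_right, Omega_add_left, Omega_add_right, e1, e2]
          ring
      _ = - Omega m z z' := by rw [hdecomp z, hdecomp z']
  refine ⟨g, ⟨1, one_ne_zero, fun w hw => by rw [hgapply, hfW w hw, one_smul], fun z z' => by
    rw [hgapply, hgapply, hkey]; ring⟩, ?_, ?_⟩
  -- images of a, b
  all_goals {
    have habΛ : a - b ∈ Λ := hTΛ (Submodule.mem_sup_left (Submodule.mem_span_singleton_self _))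
    have hfa : f a = b := by
      have ha' : a = (2⁻¹ : ℝ) • (v + (a - b)) := by
        rw [← hvab]; module
      rw [ha', map_smul, map_add, hfW v hvW, hfΛ _ habΛ, ← hvab]
      module
    have hfb : f b = a := by
      have hb' : b = (2⁻¹ : ℝ) • (v - (a - b)) := by
        rw [← hvab]; module
      rw [hb', map_smul, map_sub, hfW v hvW, hfΛ _ habΛ, ← hvab]
      module
    have hmapK : (U ⊓ W).map f = U ⊓ W := by
      apply le_antisymm
      · rintro z ⟨k, hk, rfl⟩
        rw [hfW k hk.2]; exact hk
      · intro k hk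
        exact ⟨k, hk, hfW k hk.2⟩
    have hmapS : S.map f = S := by
      apply le_antisymm
      · rintro z ⟨s, hs, rfl⟩
        have hsT : s ∈ T := Submodule.mem_sup_right hs
        rw [hfΛ s (hTΛ hsT)]
        exact S.neg_mem hs
      · intro s hs
        have hsT : s ∈ T := Submodule.mem_sup_right hs
        exact ⟨-s, S.neg_mem hs, by rw [hfΛ _ (hTΛ (Submodule.mem_sup_right (S.neg_mem hs)))]; simp⟩
    have hmapU : U.map f = U := by
      rw [← hKSsup, Submodule.map_sup, hmapK, hmapS]
    have hmapspan : ∀ (c d : Fin (2*m) → ℝ), f c = d →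
        (Submodule.span ℝ {c}).map f = Submodule.span ℝ {d} := by
      intro c d hcd
      rw [Submodule.map_span, Set.image_singleton, hcd]
    first
    | (show W1.map (g : (Fin (2 * m) → ℝ) →ₗ[ℝ] (Fin (2 * m) → ℝ)) = W2
       have : W1.map (g : (Fin (2 * m) → ℝ) →ₗ[ℝ] (Fin (2 * m) → ℝ)) = W1.map f := rfl
       rw [this, ← hW1eq, ← hW2eq, Submodule.map_sup, hmapU, hmapspan a b hfa])
    | (show W2.map (g : (Fin (2 * m) → ℝ) →ₗ[ℝ] (Fin (2 * m) → ℝ)) = W1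
       have : W2.map (g : (Fin (2 * m) → ℝ) →ₗ[ℝ] (Fin (2 * m) → ℝ)) = W2.map f := rfl
       rw [this, ← hW1eq, ← hW2eq, Submodule.map_sup, hmapU, hmapspan b a hfb])
  }
end

section
/- Let W1, W2, W3, W4 be Lagrangian subspaces of ℝ^{2m} with its standard symplectic form Ω. Then there exists g ∈ GL(2m,ℝ) with Ω(g x, g y) = Ω(x,y) for all x,y (i.e., g symplectic) such that g(W1) = W3 and g(W2) = W4, if and only if dim(W1 ∩ W2) = dim(W3 ∩ W4). -/
namespace Stmt9

open Module

noncomputable def B (m : ℕ) : LinearMap.BilinForm ℝ (Fin (2 * m) → ℝ) :=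
  LinearMap.mk₂ ℝ (Omega m)
    (fun x x' y => by
      simp only [Omega, Pi.add_apply]
      rw [← Finset.sum_add_distrib]
      exact Finset.sum_congr rfl fun i _ => by ring)
    (fun c x y => by
      simp only [Omega, Pi.smul_apply, smul_eq_mul]
      rw [Finset.mul_sum]
      exact Finset.sum_congr rfl fun i _ => by ring)
    (fun x y y' => by
      simp only [Omega, Pi.add_apply]
      rw [← Finset.sum_add_distrib]
      exact Finset.sum_congr rfl fun i _ => by ring)
    (fun c x y => by
      simp only [Omega, Pi.smul_apply, smul_eq_mul]
      rw [Finset.mul_sum]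
      exact Finset.sum_congr rfl fun i _ => by ring)

variable {m : ℕ}

lemma B_apply (x y : Fin (2 * m) → ℝ) : B m x y = Omega m x y := rfl

lemma B_alt (x : Fin (2 * m) → ℝ) : B m x x = 0 := by
  show Omega m x x = 0
  exact Finset.sum_eq_zero fun i _ => by ring

lemma B_skew (x y : Fin (2 * m) → ℝ) : B m x y = -B m y x := by
  have h := B_alt (m := m) (x + y)
  simp only [map_add, LinearMap.add_apply, B_alt, ← B_apply] at h ⊢
  linarith [h]

lemma B_refl : (B m).IsRefl := fun x y h => by rw [B_skew, h, neg_zero]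

lemma B_single_lo (x : Fin (2 * m) → ℝ) (i : Fin m) :
    B m x (Pi.single ⟨m + i.1, by have := i.2; omega⟩ 1) = x ⟨i.1, by have := i.2; omega⟩ := by
  simp only [B_apply, Omega]
  rw [Finset.sum_eq_single i]
  · rw [Pi.single_apply, Pi.single_apply]
    rw [if_pos rfl, if_neg (by simp only [Fin.ext_iff]; have := i.2; omega)]
    ring
  · intro j _ hj
    rw [Pi.single_apply, Pi.single_apply, if_neg (by simp [Fin.ext_iff]; omega),
      if_neg (by simp only [Fin.ext_iff]; intro h; exact hj (Fin.ext (by first | omega | (simp only [Fin.val_mk]; omega))))]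
    ring
  · simp

lemma B_single_hi (x : Fin (2 * m) → ℝ) (i : Fin m) :
    B m x (Pi.single ⟨i.1, by have := i.2; omega⟩ 1) = -x ⟨m + i.1, by have := i.2; omega⟩ := by
  simp only [B_apply, Omega]
  rw [Finset.sum_eq_single i]
  · rw [Pi.single_apply, Pi.single_apply]
    rw [if_neg (by simp only [Fin.ext_iff]; have := i.2; omega), if_pos rfl]
    ring
  · intro j _ hj
    rw [Pi.single_apply, Pi.single_apply,
      if_neg (by simp only [Fin.ext_iff]; intro h; exact hj (Fin.ext (by first | omega | (simp only [Fin.val_mk]; omega)))),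
      if_neg (by simp [Fin.ext_iff]; omega)]
    ring
  · simp

lemma B_nondeg : (B m).Nondegenerate := by
  have hL : (B m).SeparatingLeft := by
    intro x hx
    funext j
    simp only [Pi.zero_apply]
    rcases lt_or_ge j.1 m with h | h
    · have := B_single_lo x ⟨j.1, h⟩
      rw [hx] at this
      simpa using this.symm
    · have hj : j.1 - m < m := by have := j.2; omega
      have := B_single_hi x ⟨j.1 - m, hj⟩
      rw [hx] at this
      have e : (⟨m + (j.1 - m), by omega⟩ : Fin (2 * m)) = j := Fin.ext (by simp; omega)
      rw [e] at this
      linarith [this]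
  refine ⟨hL, fun y hy => hL y fun x => ?_⟩
  rw [B_skew, hy x, neg_zero]

lemma B_flip_nondeg : (B m).flip.Nondegenerate := by
  refine ⟨fun x hx => ?_, fun x hx => B_nondeg.1 x hx⟩
  refine B_nondeg.1 x fun y => ?_
  have h : B m y x = 0 := hx y
  rw [B_skew, h, neg_zero]

lemma prescribe {ι : Type} [Fintype ι] (z : ι → (Fin (2 * m) → ℝ))
    (hz : LinearIndependent ℝ z) (t : ι → ℝ) :
    ∃ x, ∀ i, B m (z i) x = t i := by
  set Z := Submodule.span ℝ (Set.range z)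
  let bz : Basis ι ℝ Z := Basis.span hz
  obtain ⟨Z', hZ'⟩ := Submodule.exists_isCompl Z
  let proj := Z.linearProjOfIsCompl Z' hZ'
  let f : (Fin (2 * m) → ℝ) →ₗ[ℝ] ℝ := (bz.constr ℝ t) ∘ₗ proj
  refine ⟨((B m).flip.toDual B_flip_nondeg).symm f, fun i => ?_⟩
  have h1 : B m (z i) (((B m).flip.toDual B_flip_nondeg).symm f) = f (z i) := by
    have := LinearMap.BilinForm.apply_toDual_symm_apply (B := (B m).flip)
      (hB := B_flip_nondeg) f (z i)
    exact this
  rw [h1]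
  have h2 : z i = (bz i : Fin (2 * m) → ℝ) := (Module.Basis.coe_span_apply hz i).symm
  have h3 : proj (bz i) = bz i := Submodule.linearProjOfIsCompl_apply_left hZ' (bz i)
  simp only [f, LinearMap.comp_apply, h2, h3, Basis.constr_basis]

lemma finrank_V : finrank ℝ (Fin (2 * m) → ℝ) = 2 * m := by
  simp [Module.finrank_fin_fun]

lemma lagr_max {W : Submodule ℝ (Fin (2 * m) → ℝ)} (hW : IsLagrangian m W)
    {x : Fin (2 * m) → ℝ} (hx : ∀ w ∈ W, B m w x = 0) : x ∈ W := by
  have hle : W ≤ (B m).orthogonal W := fun w hw =>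
    (LinearMap.BilinForm.mem_orthogonal_iff).2 fun n hn => by
      rw [B_apply]; exact hW.2 n hn w hw
  have hfr : finrank ℝ ((B m).orthogonal W) = m := by
    rw [LinearMap.BilinForm.finrank_orthogonal B_nondeg, finrank_V, hW.1]
    omega
  have heq : W = (B m).orthogonal W :=
    Submodule.eq_of_le_of_finrank_le hle (by rw [hfr, hW.1])
  rw [heq]
  exact (LinearMap.BilinForm.mem_orthogonal_iff).2 fun n hn => hx n hn

set_option maxHeartbeats 1000000 in
/-- Adapted symplectic basis for a pair of Lagrangian subspaces. -/
lemma adapted {W1 W2 : Submodule ℝ (Fin (2 * m) → ℝ)}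
    (h1 : IsLagrangian m W1) (h2 : IsLagrangian m W2) :
    ∃ p q : Fin m → (Fin (2 * m) → ℝ),
      (∀ i j, B m (p i) (p j) = 0) ∧
      (∀ i j, B m (q i) (q j) = 0) ∧
      (∀ i j, B m (p i) (q j) = if i = j then 1 else 0) ∧
      W1 = Submodule.span ℝ (Set.range p) ∧
      W2 = Submodule.span ℝ
        (Set.range (fun i : Fin m =>
          if i.1 < finrank ℝ ↥(W1 ⊓ W2) then p i else q i)) := by
  classical
  have hW1p : ∀ x ∈ W1, ∀ y ∈ W1, B m x y = 0 := h1.2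
  have hW2p : ∀ x ∈ W2, ∀ y ∈ W2, B m x y = 0 := h2.2
  set D := W1 ⊓ W2 with hDdef
  set k := finrank ℝ ↥D with hkdef
  have hDW1 : D ≤ W1 := inf_le_left
  have hDW2 : D ≤ W2 := inf_le_right
  have hk : k ≤ m := by
    have h := Submodule.finrank_mono hDW1
    rw [h1.1] at h
    exact h
  set r := m - k with hrdef
  -- basis of D
  let bu : Basis (Fin k) ℝ ↥D := Module.finBasisOfFinrankEq ℝ ↥D hkdef.symm
  set u : Fin k → (Fin (2 * m) → ℝ) := fun i => ↑(bu i) with hudef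
  have hu_memD : ∀ i, u i ∈ D := fun i => (bu i).2
  have hu_indep : LinearIndependent ℝ u :=
    bu.linearIndependent.map' D.subtype (Submodule.ker_subtype D)
  have hu_span : Submodule.span ℝ (Set.range u) = D := by
    have h : Set.range u = D.subtype '' Set.range bu := by
      rw [← Set.range_comp]; rfl
    rw [h, ← Submodule.map_span, Basis.span_eq, Submodule.map_subtype_top]
  -- complement A of D inside W1
  obtain ⟨A', hA'⟩ := Submodule.exists_isCompl (D.comap W1.subtype)
  set A := A'.map W1.subtype with hAdef
  have hAW1 : A ≤ W1 := Submodule.map_subtype_le W1 A'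
  have hDA : D ⊔ A = W1 := by
    have h := congrArg (Submodule.map W1.subtype) hA'.sup_eq_top
    rw [Submodule.map_sup, Submodule.map_comap_subtype, inf_eq_right.2 hDW1,
      Submodule.map_subtype_top] at h
    exact h
  have hfrA : finrank ℝ ↥A = r := by
    have hc := Submodule.finrank_add_eq_of_isCompl hA'
    have hc1 : finrank ℝ ↥(D.comap W1.subtype) = k :=
      LinearEquiv.finrank_eq (Submodule.comapSubtypeEquivOfLe hDW1)
    have hc2 : finrank ℝ ↥A' = finrank ℝ ↥A :=
      LinearEquiv.finrank_eq (Submodule.equivMapOfInjective W1.subtype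
        (Submodule.injective_subtype W1) A')
    rw [hc1, hc2, h1.1] at hc
    omega
  let ba : Basis (Fin r) ℝ ↥A := Module.finBasisOfFinrankEq ℝ ↥A hfrA
  set a : Fin r → (Fin (2 * m) → ℝ) := fun i => ↑(ba i) with hadef
  have ha_memA : ∀ i, a i ∈ A := fun i => (ba i).2
  have ha_mem1 : ∀ i, a i ∈ W1 := fun i => hAW1 (ha_memA i)
  have ha_span : Submodule.span ℝ (Set.range a) = A := by
    have h : Set.range a = A.subtype '' Set.range ba := by
      rw [← Set.range_comp]; rfl
    rw [h, ← Submodule.map_span, Basis.span_eq, Submodule.map_subtype_top]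
  -- the dual family q' inside W2
  let φ : ↥W2 →ₗ[ℝ] (Fin r → ℝ) := LinearMap.pi fun j => (B m (a j)) ∘ₗ W2.subtype
  have hφx : ∀ (x : ↥W2) (j : Fin r), φ x j = B m (a j) ↑x := fun x j => rfl
  have hker : LinearMap.ker φ = D.comap W2.subtype := by
    ext x
    simp only [LinearMap.mem_ker, Submodule.mem_comap]
    constructor
    · intro hx
      have hx' : ∀ j, B m (a j) ↑x = 0 := fun j => by
        have := congrFun hx j
        rwa [hφx] at this
      have hxW1 : (↑x : Fin (2 * m) → ℝ) ∈ W1 := by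
        apply lagr_max h1
        intro w hw
        have hw' : w ∈ Submodule.span ℝ (Set.range u ∪ Set.range a) := by
          rw [Submodule.span_union, hu_span, ha_span, hDA]
          exact hw
        have hle : Submodule.span ℝ (Set.range u ∪ Set.range a) ≤
            LinearMap.ker ((B m).flip ↑x) := by
          rw [Submodule.span_le]
          rintro w' (⟨i, rfl⟩ | ⟨j, rfl⟩)
          · exact hW2p (u i) (hDW2 (hu_memD i)) ↑x x.2
          · exact hx' j
        exact hle hw'
      exact Submodule.mem_inf.2 ⟨hxW1, x.2⟩
    · intro hx
      have : ∀ j, φ x j = 0 := fun j => by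
        rw [hφx]
        exact hW1p (a j) (ha_mem1 j) ↑x (hDW1 hx)
      funext j
      exact this j
  have hkerfr : finrank ℝ ↥(LinearMap.ker φ) = k := by
    rw [hker]
    exact LinearEquiv.finrank_eq (Submodule.comapSubtypeEquivOfLe hDW2)
  have hrange : LinearMap.range φ = ⊤ := by
    apply Submodule.eq_top_of_finrank_eq
    have hrn := LinearMap.finrank_range_add_finrank_ker φ
    rw [hkerfr, h2.1] at hrn
    rw [Module.finrank_fin_fun]
    omega
  have hq'ex : ∀ j : Fin r, ∃ y, y ∈ W2 ∧
      ∀ i, B m (a i) y = if i = j then 1 else 0 := by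
    intro j
    obtain ⟨x, hx⟩ := LinearMap.range_eq_top.1 hrange (Pi.single j 1)
    refine ⟨↑x, x.2, fun i => ?_⟩
    have h := congrFun hx i
    rw [hφx] at h
    rw [h, Pi.single_apply]
  choose q' hq'mem hBaq' using hq'ex
  -- Gram facts so far
  have hBuu : ∀ i j, B m (u i) (u j) = 0 :=
    fun i j => hW1p _ (hDW1 (hu_memD i)) _ (hDW1 (hu_memD j))
  have hBua : ∀ i j, B m (u i) (a j) = 0 :=
    fun i j => hW1p _ (hDW1 (hu_memD i)) _ (ha_mem1 j)
  have hBau : ∀ i j, B m (a i) (u j) = 0 :=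
    fun i j => hW1p _ (ha_mem1 i) _ (hDW1 (hu_memD j))
  have hBaa : ∀ i j, B m (a i) (a j) = 0 :=
    fun i j => hW1p _ (ha_mem1 i) _ (ha_mem1 j)
  have hBuq' : ∀ i j, B m (u i) (q' j) = 0 :=
    fun i j => hW2p _ (hDW2 (hu_memD i)) _ (hq'mem j)
  have hBq'u : ∀ i j, B m (q' i) (u j) = 0 :=
    fun i j => hW2p _ (hq'mem i) _ (hDW2 (hu_memD j))
  have hBq'q' : ∀ i j, B m (q' i) (q' j) = 0 :=
    fun i j => hW2p _ (hq'mem i) _ (hq'mem j)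
  have hBq'a : ∀ i j, B m (q' i) (a j) = if j = i then -1 else 0 := by
    intro i j
    rw [B_skew, hBaq']
    rcases eq_or_ne j i with h | h
    · subst h; simp
    · rw [if_neg h, if_neg h, neg_zero]
  -- linear independence of the triple family
  have htriple : LinearIndependent ℝ (Sum.elim (Sum.elim u a) q') := by
    rw [Fintype.linearIndependent_iff]
    intro g hg
    have key : ∀ y, ((∑ i, g (.inl (.inl i)) * B m (u i) y)
        + (∑ i, g (.inl (.inr i)) * B m (a i) y))
        + (∑ i, g (.inr i) * B m (q' i) y) = 0 := by
      intro y
      have h := congrArg (fun w => B m w y) hg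
      simpa only [Fintype.sum_sum_type, Sum.elim_inl, Sum.elim_inr, map_add, map_sum,
        map_smul, LinearMap.add_apply, LinearMap.sum_apply, LinearMap.smul_apply,
        smul_eq_mul, map_zero, LinearMap.zero_apply] using h
    have hga : ∀ j, g (.inl (.inr j)) = 0 := by
      intro j
      have hkey := key (q' j)
      simp only [hBuq', hBq'q', mul_zero, Finset.sum_const_zero, zero_add, add_zero] at hkey
      rw [Finset.sum_eq_single j (fun i _ hij => by rw [hBaq', if_neg hij, mul_zero])
        (by simp)] at hkey
      rwa [hBaq', if_pos rfl, mul_one] at hkey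
    have hgq : ∀ j, g (.inr j) = 0 := by
      intro j
      have hkey := key (a j)
      simp only [hBua, hBaa, mul_zero, Finset.sum_const_zero, zero_add, add_zero] at hkey
      rw [Finset.sum_eq_single j
        (fun i _ hij => by rw [hBq'a, if_neg (fun hh => hij hh.symm), mul_zero])
        (by simp)] at hkey
      rw [hBq'a, if_pos rfl, mul_neg_one] at hkey
      linarith
    have hg' : ∑ i, g (.inl (.inl i)) • u i = 0 := by
      rw [Fintype.sum_sum_type, Fintype.sum_sum_type] at hg
      simp only [Sum.elim_inl, Sum.elim_inr, hga, hgq, zero_smul,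
        Finset.sum_const_zero, add_zero] at hg
      exact hg
    have hgu := Fintype.linearIndependent_iff.1 hu_indep _ hg'
    rintro ((i | i) | i)
    exacts [hgu i, hga i, hgq i]
  -- the dual family w for u, then its isotropic correction v
  have hwex : ∀ j : Fin k, ∃ x, ∀ i0, B m (Sum.elim (Sum.elim u a) q' i0) x =
      Sum.elim (Sum.elim (fun i => if i = j then (1 : ℝ) else 0) (fun _ => 0)) (fun _ => 0) i0 :=
    fun j => prescribe _ htriple _
  choose w hw using hwex
  have hBuw : ∀ i j, B m (u i) (w j) = if i = j then 1 else 0 :=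
    fun i j => hw j (.inl (.inl i))
  have hBaw : ∀ i j, B m (a i) (w j) = 0 := fun i j => hw j (.inl (.inr i))
  have hBq'w : ∀ i j, B m (q' i) (w j) = 0 := fun i j => hw j (.inr i)
  set v : Fin k → (Fin (2 * m) → ℝ) :=
    fun j => w j + ∑ l, (-(2⁻¹ : ℝ) * B m (w j) (w l)) • u l with hvdef
  have expand_right : ∀ (x : Fin (2 * m) → ℝ) (j),
      B m x (v j) = B m x (w j) + ∑ l, (-(2⁻¹ : ℝ) * B m (w j) (w l)) * B m x (u l) := by
    intro x j
    simp only [hvdef, map_add, map_sum, map_smul, smul_eq_mul]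
  have hBuv : ∀ i j, B m (u i) (v j) = if i = j then 1 else 0 := by
    intro i j
    rw [expand_right, hBuw]
    rw [Finset.sum_congr rfl (fun l _ => by rw [hBuu, mul_zero]), Finset.sum_const_zero,
      add_zero]
  have hBav : ∀ i j, B m (a i) (v j) = 0 := by
    intro i j
    rw [expand_right, hBaw]
    rw [Finset.sum_congr rfl (fun l _ => by rw [hBau, mul_zero]), Finset.sum_const_zero,
      add_zero]
  have hBq'v : ∀ i j, B m (q' i) (v j) = 0 := by
    intro i j
    rw [expand_right, hBq'w]
    rw [Finset.sum_congr rfl (fun l _ => by rw [hBq'u, mul_zero]), Finset.sum_const_zero,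
      add_zero]
  have hBvv : ∀ i j, B m (v i) (v j) = 0 := by
    intro i j
    have hvi : v i = w i + ∑ l, (-(2⁻¹ : ℝ) * B m (w i) (w l)) • u l := rfl
    have hleft : B m (v i) (v j) =
        B m (w i) (v j) + ∑ l, (-(2⁻¹ : ℝ) * B m (w i) (w l)) * B m (u l) (v j) := by
      rw [hvi, LinearMap.BilinForm.add_left, LinearMap.BilinForm.sum_left]
      exact congrArg _ (Finset.sum_congr rfl fun l _ => by
        rw [LinearMap.BilinForm.smul_left])
    rw [hleft, expand_right (w i) j]
    have hs1 : ∑ l, (-(2⁻¹ : ℝ) * B m (w j) (w l)) * B m (w i) (u l)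
        = -(-(2⁻¹ : ℝ) * B m (w j) (w i)) := by
      rw [Finset.sum_eq_single i (fun l _ hli => by
          rw [B_skew (w i) (u l), hBuw, if_neg hli, neg_zero, mul_zero])
        (by simp)]
      rw [B_skew (w i) (u i), hBuw, if_pos rfl, mul_neg_one]
    have hs2 : ∑ l, (-(2⁻¹ : ℝ) * B m (w i) (w l)) * B m (u l) (v j)
        = -(2⁻¹ : ℝ) * B m (w i) (w j) := by
      rw [Finset.sum_eq_single j (fun l _ hlj => by rw [hBuv, if_neg hlj, mul_zero])
        (by simp)]
      rw [hBuv, if_pos rfl, mul_one]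
    rw [hs1, hs2]
    have := B_skew (w i) (w j)
    linarith
  -- assemble p and q over Fin m
  set p : Fin m → (Fin (2 * m) → ℝ) := fun i =>
    if h : i.1 < k then u ⟨i.1, h⟩ else a ⟨i.1 - k, by have := i.2; omega⟩ with hpdef
  set q : Fin m → (Fin (2 * m) → ℝ) := fun i =>
    if h : i.1 < k then v ⟨i.1, h⟩ else q' ⟨i.1 - k, by have := i.2; omega⟩ with hqdef
  have hp_mem1 : ∀ i, p i ∈ W1 := by
    intro i
    simp only [hpdef]
    split
    · exact hDW1 (hu_memD _)
    · exact ha_mem1 _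
  have hGpp : ∀ i j, B m (p i) (p j) = 0 := fun i j => hW1p _ (hp_mem1 i) _ (hp_mem1 j)
  have hGqq : ∀ i j, B m (q i) (q j) = 0 := by
    intro i j
    simp only [hqdef]
    split <;> split
    · exact hBvv _ _
    · rw [B_skew, hBq'v, neg_zero]
    · exact hBq'v _ _
    · exact hW2p _ (hq'mem _) _ (hq'mem _)
  have hGpq : ∀ i j, B m (p i) (q j) = if i = j then 1 else 0 := by
    intro i j
    simp only [hpdef, hqdef]
    split <;> split
    case isTrue.isTrue hi hj =>
      rw [hBuv]
      simp only [Fin.ext_iff]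
    case isTrue.isFalse hi hj =>
      rw [hW2p _ (hDW2 (hu_memD _)) _ (hq'mem _), if_neg (by
        intro h; rw [h] at hi; exact hj hi)]
    case isFalse.isTrue hi hj =>
      rw [hBav, if_neg (by intro h; rw [h] at hi; exact hi hj)]
    case isFalse.isFalse hi hj =>
      rw [hBaq']
      have hiff : ((⟨i.1 - k, by have := i.2; omega⟩ : Fin r) =
          ⟨j.1 - k, by have := j.2; omega⟩) ↔ i = j := by
        simp only [Fin.ext_iff]
        omega
      simp only [Fin.ext_iff] at hiff ⊢
      rw [if_congr hiff rfl rfl]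
  -- span of p is W1
  have hrangep : Set.range p = Set.range u ∪ Set.range a := by
    ext x
    constructor
    · rintro ⟨i, rfl⟩
      simp only [hpdef]
      split
      · exact Or.inl ⟨_, rfl⟩
      · exact Or.inr ⟨_, rfl⟩
    · rintro (⟨j, rfl⟩ | ⟨j, rfl⟩)
      · refine ⟨⟨j.1, lt_of_lt_of_le j.2 hk⟩, ?_⟩
        simp only [hpdef]
        rw [dif_pos j.2]
      · refine ⟨⟨k + j.1, by have := j.2; omega⟩, ?_⟩
        simp only [hpdef]
        rw [dif_neg (by first | omega | (simp only [Fin.val_mk]; omega))]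
        exact congrArg a (Fin.ext (by show k + j.1 - k = j.1; omega))
  have hW1span : W1 = Submodule.span ℝ (Set.range p) := by
    rw [hrangep, Submodule.span_union, hu_span, ha_span, hDA]
  -- span of the mixed family is W2
  have hranges : Set.range (fun i : Fin m => if i.1 < k then p i else q i)
      = Set.range u ∪ Set.range q' := by
    ext x
    constructor
    · rintro ⟨i, rfl⟩
      beta_reduce
      by_cases h : i.1 < k
      · rw [if_pos h]
        simp only [hpdef]
        rw [dif_pos h]
        exact Or.inl ⟨_, rfl⟩
      · rw [if_neg h]
        simp only [hqdef]
        rw [dif_neg h]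
        exact Or.inr ⟨_, rfl⟩
    · rintro (⟨j, rfl⟩ | ⟨j, rfl⟩)
      · refine ⟨⟨j.1, lt_of_lt_of_le j.2 hk⟩, ?_⟩
        beta_reduce
        rw [if_pos j.2]
        simp only [hpdef]
        rw [dif_pos j.2]
      · refine ⟨⟨k + j.1, by have := j.2; omega⟩, ?_⟩
        beta_reduce
        rw [if_neg (by first | omega | (simp only [Fin.val_mk]; omega))]
        simp only [hqdef]
        rw [dif_neg (by first | omega | (simp only [Fin.val_mk]; omega))]
        exact congrArg q' (Fin.ext (by show k + j.1 - k = j.1; omega))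
  have hpairindep : LinearIndependent ℝ (Sum.elim u q') := by
    have hcomp : Sum.elim u q' = (Sum.elim (Sum.elim u a) q') ∘ (Sum.map Sum.inl id) := by
      funext i0
      rcases i0 with i | i <;> rfl
    rw [hcomp]
    exact htriple.comp _ (Sum.map_injective.2 ⟨Sum.inl_injective, fun x y h => h⟩)
  have hW2span : W2 = Submodule.span ℝ
      (Set.range (fun i : Fin m => if i.1 < k then p i else q i)) := by
    have hle : Submodule.span ℝ
        (Set.range (fun i : Fin m => if i.1 < k then p i else q i)) ≤ W2 := by
      rw [Submodule.span_le, hranges]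
      rintro x (⟨j, rfl⟩ | ⟨j, rfl⟩)
      · exact hDW2 (hu_memD j)
      · exact hq'mem j
    have hfr : finrank ℝ ↥(Submodule.span ℝ
        (Set.range (fun i : Fin m => if i.1 < k then p i else q i))) = m := by
      rw [hranges, ← Set.Sum.elim_range, finrank_span_eq_card hpairindep]
      simp only [Fintype.card_sum, Fintype.card_fin]
      omega
    exact (Submodule.eq_of_le_of_finrank_le hle (by rw [hfr, h2.1])).symm
  exact ⟨p, q, hGpp, hGqq, hGpq, hW1span, hW2span⟩

lemma main_indep (p q : Fin m → (Fin (2 * m) → ℝ))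
    (hpq : ∀ i j, B m (p i) (q j) = if i = j then 1 else 0)
    (hqq : ∀ i j, B m (q i) (q j) = 0)
    (hpp : ∀ i j, B m (p i) (p j) = 0) :
    LinearIndependent ℝ (Sum.elim p q) := by
  rw [Fintype.linearIndependent_iff]
  intro g hg
  have key : ∀ y : Fin (2 * m) → ℝ,
      (∑ i : Fin m, g (Sum.inl i) * B m (p i) y) +
      (∑ i : Fin m, g (Sum.inr i) * B m (q i) y) = 0 := by
    intro y
    have := congrArg (fun w => B m w y) hg
    simp only [Fintype.sum_sum_type, Sum.elim_inl, Sum.elim_inr, map_add,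
      map_sum, map_smul, LinearMap.add_apply, LinearMap.sum_apply,
      LinearMap.smul_apply, smul_eq_mul, map_zero, LinearMap.zero_apply] at this
    exact this
  have hl : ∀ j, g (Sum.inl j) = 0 := by
    intro j
    have := key (q j)
    rw [Finset.sum_eq_single j (fun i _ hij => by rw [hpq, if_neg hij, mul_zero])
      (by simp)] at this
    rw [hpq, if_pos rfl, mul_one] at this
    simpa [hqq] using this
  have hr : ∀ j, g (Sum.inr j) = 0 := by
    intro j
    have := key (p j)
    have hqp : ∀ i, B m (q i) (p j) = if j = i then -1 else 0 := by
      intro i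
      rw [B_skew, hpq]
      rcases eq_or_ne j i with h | h
      · subst h; simp
      · rw [if_neg h, if_neg h, neg_zero]
    simp only [hpp, mul_zero, Finset.sum_const_zero, zero_add] at this
    rw [Finset.sum_eq_single j
      (fun i _ hij => by rw [hqp, if_neg (fun hh => hij hh.symm), mul_zero])
      (by simp)] at this
    rw [hqp, if_pos rfl, mul_neg_one] at this
    linarith
  rintro (i | i)
  · exact hl i
  · exact hr i

end Stmt9

theorem stmt9 (m : ℕ)
    (W1 W2 W3 W4 : Submodule ℝ (Fin (2 * m) → ℝ))
    (h1 : IsLagrangian m W1) (h2 : IsLagrangian m W2)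
    (h3 : IsLagrangian m W3) (h4 : IsLagrangian m W4) :
    (∃ g : (Fin (2 * m) → ℝ) ≃ₗ[ℝ] (Fin (2 * m) → ℝ),
        (∀ x y : Fin (2 * m) → ℝ, Omega m (g x) (g y) = Omega m x y) ∧
        W1.map (g : (Fin (2 * m) → ℝ) →ₗ[ℝ] (Fin (2 * m) → ℝ)) = W3 ∧
        W2.map (g : (Fin (2 * m) → ℝ) →ₗ[ℝ] (Fin (2 * m) → ℝ)) = W4)
      ↔ Module.finrank ℝ ↥(W1 ⊓ W2) = Module.finrank ℝ ↥(W3 ⊓ W4) := by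
  open Stmt9 in
  constructor
  · rintro ⟨g, hΩ, hm1, hm2⟩
    have hmap : (W1 ⊓ W2).map (g : (Fin (2 * m) → ℝ) →ₗ[ℝ] (Fin (2 * m) → ℝ)) = W3 ⊓ W4 := by
      rw [Submodule.map_inf (g : (Fin (2 * m) → ℝ) →ₗ[ℝ] (Fin (2 * m) → ℝ)) g.injective, hm1, hm2]
    rw [← hmap]
    exact (LinearEquiv.finrank_map_eq g (W1 ⊓ W2)).symm
  · intro hdim
    obtain ⟨p, q, hpp, hqq, hpq, hsW1, hsW2⟩ := Stmt9.adapted h1 h2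
    obtain ⟨p', q', hpp', hqq', hpq', hsW3, hsW4⟩ := Stmt9.adapted h3 h4
    rw [← hdim] at hsW4
    have hind := Stmt9.main_indep p q hpq hqq hpp
    have hind' := Stmt9.main_indep p' q' hpq' hqq' hpp'
    have hsp : ⊤ ≤ Submodule.span ℝ (Set.range (Sum.elim p q)) := by
      refine le_of_eq (Submodule.eq_top_of_finrank_eq ?_).symm
      rw [finrank_span_eq_card hind, Stmt9.finrank_V]
      simp [two_mul]
    have hsp' : ⊤ ≤ Submodule.span ℝ (Set.range (Sum.elim p' q')) := by
      refine le_of_eq (Submodule.eq_top_of_finrank_eq ?_).symm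
      rw [finrank_span_eq_card hind', Stmt9.finrank_V]
      simp [two_mul]
    let b := Module.Basis.mk hind hsp
    let b' := Module.Basis.mk hind' hsp'
    let g := b.equiv b' (Equiv.refl _)
    have hg : ∀ i0, g (Sum.elim p q i0) = Sum.elim p' q' i0 := by
      intro i0
      have h1 : Sum.elim p q i0 = b i0 := (Module.Basis.mk_apply hind hsp i0).symm
      rw [h1]
      show b.equiv b' (Equiv.refl _) (b i0) = _
      rw [Module.Basis.equiv_apply, Equiv.refl_apply, Module.Basis.mk_apply]
    have hgp : ∀ i, g (p i) = p' i := fun i => hg (.inl i)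
    have hgq : ∀ i, g (q i) = q' i := fun i => hg (.inr i)
    have gram_eq : ∀ i0 j0, B m (Sum.elim p' q' i0) (Sum.elim p' q' j0)
        = B m (Sum.elim p q i0) (Sum.elim p q j0) := by
      rintro (i | i) (j | j) <;> simp only [Sum.elim_inl, Sum.elim_inr]
      · rw [hpp, hpp']
      · rw [hpq, hpq']
      · rw [B_skew, hpq', B_skew (q i), hpq]
      · rw [hqq, hqq']
    have hgB : ∀ x y, B m (g x) (g y) = B m x y := by
      have hBeq : (B m).compl₁₂ (g : (Fin (2 * m) → ℝ) →ₗ[ℝ] (Fin (2 * m) → ℝ))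
          (g : (Fin (2 * m) → ℝ) →ₗ[ℝ] (Fin (2 * m) → ℝ)) = B m := by
        apply LinearMap.ext_basis b b
        intro i0 j0
        rw [LinearMap.compl₁₂_apply]
        have hb : ∀ i1, b i1 = Sum.elim p q i1 := Module.Basis.mk_apply hind hsp
        rw [hb i0, hb j0]
        show B m (g _) (g _) = _
        rw [hg i0, hg j0]
        exact gram_eq i0 j0
      intro x y
      have := congrArg (fun F => F x y) hBeq
      simpa using this
    refine ⟨g, fun x y => hgB x y, ?_, ?_⟩
    · rw [hsW1, hsW3, Submodule.map_span, ← Set.range_comp]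
      congr 1
      exact congrArg _ (funext fun i => hgp i)
    · rw [hsW2, hsW4, Submodule.map_span, ← Set.range_comp]
      congr 1
      refine congrArg _ (funext fun i => ?_)
      show g (if (i : ℕ) < Module.finrank ℝ ↥(W1 ⊓ W2) then p i else q i) = _
      rw [apply_ite g, hgp, hgq]
end
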